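/- arXiv:1911.01790 — 11 statements merged into one kernel-verified Lean document; each statement's English description precedes it below -/
import Mathlib

section
/- For all nonnegative integers n and all positive integers k, F(n, k-1) - F(n, k) = G(n+1, k) - G(n, k), where F and G are the rational-valued functions defined by F(n,k) = (-1)^n (3n-2k+1) C(2n,n) C(2n-2k,n-k) C(2n-2k,n) / 2^{3n-2k} and G(n,k) = (-1)^{n+1} n C(2n,n) C(2n-2k,n-k) C(2n-2k,n-1) / 2^{3n-2k}, with the convention that F(n,k) = G(n,k) = 0 whenever n < k. -/
/-- `F(n,k) = (-1)^n (3n-2k+1) C(2n,n) C(2n-2k,n-k) C(2n-2k,n) / 2^{3n-2k}`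
for `n ≥ k`, and `F(n,k) = 0` for `n < k`. -/
def F (n k : ℕ) : ℚ :=
  if n < k then 0 else
    (-1) ^ n * (3 * (n : ℚ) - 2 * (k : ℚ) + 1) * ((2 * n).choose n) *
      ((2 * n - 2 * k).choose (n - k)) * ((2 * n - 2 * k).choose n) / 2 ^ (3 * n - 2 * k)

/-- `G(n,k) = (-1)^{n+1} n C(2n,n) C(2n-2k,n-k) C(2n-2k,n-1) / 2^{3n-2k}`
for `n ≥ k`, and `G(n,k) = 0` for `n < k`. -/
def G (n k : ℕ) : ℚ :=
  if n < k then 0 else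
    (-1) ^ (n + 1) * (n : ℚ) * ((2 * n).choose n) *
      ((2 * n - 2 * k).choose (n - k)) * ((2 * n - 2 * k).choose (n - 1)) / 2 ^ (3 * n - 2 * k)

lemma cb (m : ℕ) : (m+1) * ((2*m+2).choose (m+1)) = 2*(2*m+1) * ((2*m).choose m) := by
  have h1 : (2*m+1) * (2*m).choose m = (2*m+1).choose (m+1) * (m+1) := by
    simpa [Nat.succ_eq_add_one] using Nat.add_one_mul_choose_eq (2*m) m
  have hp : (2*m+2).choose (m+1) = (2*m+1).choose m + (2*m+1).choose (m+1) := by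
    simpa [Nat.succ_eq_add_one, show 2*m+1+1 = 2*m+2 from rfl] using Nat.choose_succ_succ (2*m+1) m
  have hs : (2*m+1).choose (m+1) = (2*m+1).choose m := Nat.choose_symm_half m
  rw [hs] at h1
  rw [hp, hs]
  nlinarith [h1]

lemma cbq (m : ℕ) : ((m:ℚ)+1) * ((2*m+2).choose (m+1)) = 2*(2*(m:ℚ)+1) * ((2*m).choose m) := by
  exact_mod_cast congrArg (Nat.cast (R := ℚ)) (cb m)

lemma keyA (i j : ℕ) (hji : j ≤ i) :
    ((i:ℚ) - j + 2) * ((2*i+4).choose (i+2)) * ((2*i+4).choose (i+j+2))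
      = 4*(3*(i:ℚ)+j+5) * ((2*i+2).choose (i+1)) * ((2*i+2).choose (i+j+2))
        + 4*((i:ℚ)+j+2) * ((2*i+2).choose (i+1)) * ((2*i+2).choose (i+j+1)) := by
  have hA : ((i:ℚ)+2) * ((2*i+4).choose (i+2)) = 2*(2*(i:ℚ)+3) * ((2*i+2).choose (i+1)) := by
    have := cbq (i+1)
    rw [show 2*(i+1)+2 = 2*i+4 from by omega, show 2*(i+1) = 2*i+2 from by omega] at this
    push_cast at this ⊢
    linarith [this]
  have hB : (((2*i+4).choose (i+j+2) : ℚ))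
      = ((2*i+2).choose (i+j+2)) + 2*((2*i+2).choose (i+j+1)) + ((2*i+2).choose (i+j)) := by
    have e1 : (2*i+4).choose (i+j+2) = (2*i+3).choose (i+j+1) + (2*i+3).choose (i+j+2) :=
      Nat.choose_succ_succ (2*i+3) (i+j+1)
    have e2 : (2*i+3).choose (i+j+1) = (2*i+2).choose (i+j) + (2*i+2).choose (i+j+1) :=
      Nat.choose_succ_succ (2*i+2) (i+j)
    have e3 : (2*i+3).choose (i+j+2) = (2*i+2).choose (i+j+1) + (2*i+2).choose (i+j+2) :=
      Nat.choose_succ_succ (2*i+2) (i+j+1)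
    rw [e1, e2, e3]; push_cast; ring
  have h2 : (((2*i+2).choose (i+j+2)) : ℚ) * (i+j+2) = ((2*i+2).choose (i+j+1)) * ((i:ℚ)-j+1) := by
    have h := Nat.choose_succ_right_eq (2*i+2) (i+j+1)
    rw [show 2*i+2 - (i+j+1) = i - j + 1 from by omega] at h
    have h' := congrArg (Nat.cast (R := ℚ)) h
    push_cast [Nat.cast_sub hji] at h'
    linarith [h']
  have h3 : (((2*i+2).choose (i+j+1)) : ℚ) * (i+j+1) = ((2*i+2).choose (i+j)) * ((i:ℚ)-j+2) := by
    have h := Nat.choose_succ_right_eq (2*i+2) (i+j)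
    rw [show 2*i+2 - (i+j) = i - j + 2 from by omega] at h
    have h' := congrArg (Nat.cast (R := ℚ)) h
    push_cast [Nat.cast_sub hji] at h'
    linarith [h']
  set A := (((2*i+4).choose (i+2)) : ℚ)
  set B := (((2*i+4).choose (i+j+2)) : ℚ)
  set cm := (((2*i+2).choose (i+1)) : ℚ)
  set cn := (((2*i+2).choose (i+j+2)) : ℚ)
  set cn1 := (((2*i+2).choose (i+j+1)) : ℚ)
  set cn2 := (((2*i+2).choose (i+j)) : ℚ)
  have eA : A = 2*(2*(i:ℚ)+3)*cm / ((i:ℚ)+2) := by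
    rw [eq_div_iff (by positivity)]; linarith [hA]
  have ecn : cn = ((i:ℚ)-j+1)*cn1 / ((i:ℚ)+j+2) := by
    rw [eq_div_iff (by positivity)]; linarith [h2]
  have hd3 : (i:ℚ)-(j:ℚ)+2 ≠ 0 := by
    have : (j:ℚ) ≤ i := by exact_mod_cast hji
    linarith
  have ecn2 : cn2 = ((i:ℚ)+j+1)*cn1 / ((i:ℚ)-j+2) := by
    rw [eq_div_iff hd3]; linarith [h3]
  rw [hB, eA, ecn, ecn2]
  have hd1 : (i:ℚ)+2 ≠ 0 := by positivity
  have hd2 : (i:ℚ)+j+2 ≠ 0 := by positivity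
  field_simp
  ring

lemma F_eval (m k : ℕ) : F (m+k) k
    = (-1)^(m+k) * (3*(m:ℚ)+k+1) * ((2*m+2*k).choose (m+k)) * ((2*m).choose m)
      * ((2*m).choose (m+k)) / 2^(3*m+k) := by
  rw [F, if_neg (by omega), show 2*(m+k) - 2*k = 2*m from by omega,
    show (m+k) - k = m from by omega, show 3*(m+k) - 2*k = 3*m+k from by omega,
    show 2*(m+k) = 2*m+2*k from by omega]
  push_cast
  ring

lemma G_eval (m j : ℕ) : G (m+j+1) (j+1)
    = (-1)^(m+j) * ((m:ℚ)+j+1) * ((2*m+2*j+2).choose (m+j+1)) * ((2*m).choose m)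
      * ((2*m).choose (m+j)) / 2^(3*m+j+1) := by
  rw [G, if_neg (by omega), show 2*(m+j+1) - 2*(j+1) = 2*m from by omega,
    show (m+j+1) - (j+1) = m from by omega, show 3*(m+j+1) - 2*(j+1) = 3*m+j+1 from by omega,
    show 2*(m+j+1) = 2*m+2*j+2 from by omega, show (m+j+1) - 1 = m+j from by omega]
  push_cast
  ring

lemma F_zero (n k : ℕ) (h : n < 2*k) : F n k = 0 := by
  rw [F]
  by_cases h1 : n < k
  · rw [if_pos h1]
  · rw [if_neg h1, Nat.choose_eq_zero_of_lt (show 2*n - 2*k < n from by omega)]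
    push_cast; ring

lemma G_zero (n k : ℕ) (h : n + 1 < 2*k) : G n k = 0 := by
  rw [G]
  by_cases h1 : n < k
  · rw [if_pos h1]
  · rw [if_neg h1, Nat.choose_eq_zero_of_lt (show 2*n - 2*k < n - 1 from by omega)]
    push_cast; ring

lemma chooseW (j : ℕ) : ((2*j+2).choose (2*j+1) : ℚ) = 2*(j:ℚ)+2 := by
  have : (2*j+2).choose (2*j+1) = 2*j+2 := by
    rw [show (2*j+1) = (2*j+2) - 1 from by omega, Nat.choose_symm (by omega),
      Nat.choose_one_right]
  exact_mod_cast congrArg (Nat.cast (R := ℚ)) this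

/-- The WZ-pair relation: for all `n ≥ 0` and `k ≥ 1`,
`F(n,k-1) - F(n,k) = G(n+1,k) - G(n,k)`. -/
theorem wz_pair_relation (n k : ℕ) (hk : 0 < k) :
    F n (k - 1) - F n k = G (n + 1) k - G n k := by
  obtain ⟨j, rfl⟩ : ∃ j, k = j + 1 := ⟨k - 1, by omega⟩
  simp only [Nat.add_sub_cancel]
  rcases lt_trichotomy n (2*j) with hn | hn | hn
  · -- all four terms vanish
    rw [F_zero n j (by omega), F_zero n (j+1) (by omega),
      G_zero (n+1) (j+1) (by omega), G_zero n (j+1) (by omega)]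
  · -- n = 2j
    subst hn
    rw [F_zero (2*j) (j+1) (by omega), G_zero (2*j) (j+1) (by omega)]
    have h1 := F_eval j j
    rw [show j + j = 2*j from by omega] at h1
    have h2 := G_eval j j
    rw [show j + j = 2*j from by omega] at h2
    rw [h1, h2, show 2*j+2*j = 4*j from by omega, show 3*j+j = 4*j from by omega,
      Nat.choose_self]
    have hcb := cbq (2*j)
    rw [show 2*(2*j)+2 = 4*j+2 from by omega, show 2*(2*j) = 4*j from by omega,
      show (2*j)+1 = 2*j+1 from rfl] at hcb
    push_cast at hcb ⊢
    have hs : ((-1:ℚ))^(2*j) = 1 := by rw [pow_mul]; norm_num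
    rw [hs]
    linear_combination (-(((2*j).choose j : ℚ))/2^(4*j+1)) * hcb
  · -- n ≥ 2j+1
    rcases Nat.lt_or_ge n (2*j+2) with hn2 | hn2
    · -- n = 2j+1
      have hn' : n = 2*j+1 := by omega
      subst hn'
      rw [F_zero (2*j+1) (j+1) (by omega)]
      have h1 := F_eval (j+1) j
      have h2 := G_eval (j+1) j
      have h3 := G_eval j j
      rw [show (j+1) + j = 2*j+1 from by omega, show 2*(j+1)+2*j = 4*j+2 from by omega,
        show 3*(j+1)+j = 4*j+3 from by omega, show 2*(j+1) = 2*j+2 from by omega] at h1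
      rw [show (j+1) + j = 2*j+1 from by omega, show 2*j+1+1 = 2*j+2 from by omega,
        show 2*(j+1)+2*j+2 = 4*j+4 from by omega, show 3*(j+1)+j+1 = 4*j+4 from by omega,
        show 2*(j+1) = 2*j+2 from by omega] at h2
      rw [show j + j = 2*j from by omega, show 2*j+2*j+2 = 4*j+2 from by omega,
        show 3*j+j+1 = 4*j+1 from by omega, Nat.choose_self] at h3
      rw [h1, h2, h3, chooseW j]
      have hcb1 := cbq (2*j+1)
      rw [show 2*(2*j+1)+2 = 4*j+4 from by omega, show (2*j+1)+1 = 2*j+2 from by omega,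
        show 2*(2*j+1) = 4*j+2 from by omega] at hcb1
      have hcb2 := cbq j
      have hs1 : ((-1:ℚ))^(2*j) = 1 := by rw [pow_mul]; norm_num
      have hs2 : ((-1:ℚ))^(2*j+1) = -1 := by rw [pow_succ, hs1]; ring
      rw [hs1, hs2]
      push_cast at hcb1 hcb2 ⊢
      linear_combination ((2*(j:ℚ)+2)*(((2*j+2).choose (j+1) : ℚ))/2^(4*j+4)) * hcb1
        - ((4:ℚ)*(((4*j+2).choose (2*j+1) : ℚ))/2^(4*j+4)) * hcb2
    · -- main case: n ≥ 2j+2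
      obtain ⟨i, rfl, hji⟩ : ∃ i, n = i+j+2 ∧ j ≤ i := ⟨n - j - 2, by omega, by omega⟩
      have h1 := F_eval (i+2) j
      rw [show (i+2) + j = i+j+2 from by omega, show 2*(i+2)+2*j = 2*i+2*j+4 from by omega,
        show 3*(i+2)+j = 3*i+j+6 from by omega, show 2*(i+2) = 2*i+4 from by omega] at h1
      have h2 := F_eval (i+1) (j+1)
      rw [show (i+1) + (j+1) = i+j+2 from by omega,
        show 2*(i+1)+2*(j+1) = 2*i+2*j+4 from by omega,
        show 3*(i+1)+(j+1) = 3*i+j+4 from by omega, show 2*(i+1) = 2*i+2 from by omega] at h2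
      have h3 := G_eval (i+2) j
      rw [show (i+2) + j = i+j+2 from by omega, show i+j+2+1 = i+j+3 from by omega,
        show 2*(i+2)+2*j+2 = 2*i+2*j+6 from by omega,
        show 3*(i+2)+j+1 = 3*i+j+7 from by omega, show 2*(i+2) = 2*i+4 from by omega] at h3
      have h4 := G_eval (i+1) j
      rw [show (i+1) + j = i+j+1 from by omega, show i+j+1+1 = i+j+2 from by omega,
        show 2*(i+1)+2*j+2 = 2*i+2*j+4 from by omega,
        show 3*(i+1)+j+1 = 3*i+j+4 from by omega, show 2*(i+1) = 2*i+2 from by omega] at h4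
      rw [h1, h2, h3, h4]
      have hD := cbq (i+j+2)
      rw [show 2*(i+j+2)+2 = 2*i+2*j+6 from by omega, show (i+j+2)+1 = i+j+3 from by omega,
        show 2*(i+j+2) = 2*i+2*j+4 from by omega] at hD
      have key := keyA i j hji
      push_cast at hD key ⊢
      linear_combination
        (-((-1:ℚ)^(i+j+2) * (((2*i+4).choose (i+2) : ℚ)) * (((2*i+4).choose (i+j+2) : ℚ)))
          / 2^(3*i+j+7)) * hD
        + (((-1:ℚ)^(i+j+2) * 2 * (((2*i+2*j+4).choose (i+j+2) : ℚ))) / 2^(3*i+j+7)) * key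
end

section
/- Let p be an odd prime. Then sum_{n=0}^{(p-1)/2} F(n,0) = sum_{k=1}^{(p-1)/2} G((p+1)/2, k), where F and G are the rational-valued functions defined by F(n,k) = (-1)^n (3n-2k+1) C(2n,n) C(2n-2k,n-k) C(2n-2k,n) / 2^{3n-2k} and G(n,k) = (-1)^{n+1} n C(2n,n) C(2n-2k,n-k) C(2n-2k,n-1) / 2^{3n-2k}, with the convention that F(n,k) = G(n,k) = 0 whenever n < k. -/
lemma WZ (n k : ℕ) : F n k - F n (k + 1) = G (n + 1) (k + 1) - G n (k + 1) := by
  rcases lt_trichotomy n k with h | rfl | h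
  · -- all four vanish
    simp only [F, G, if_pos h, if_pos (by omega : n < k + 1),
      if_pos (by omega : n + 1 < k + 1)]
  · -- n = k
    rcases Nat.eq_zero_or_pos n with rfl | hn
    · norm_num [F, G]
    · simp only [F, G, if_pos (by omega : n < n + 1),
        if_neg (by omega : ¬ n < n), if_neg (by omega : ¬ n + 1 < n + 1)]
      rw [show 2 * n - 2 * n = 0 from by omega, show 2 * (n+1) - 2 * (n+1) = 0 from by omega,
        Nat.choose_eq_zero_of_lt (by omega : 0 < n),
        show n + 1 - 1 = n from by omega,
        Nat.choose_eq_zero_of_lt (by omega : 0 < n)]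
      push_cast
      ring
  · -- n ≥ k + 1
    obtain ⟨m, rfl⟩ : ∃ m, n = k + m + 1 := ⟨n - k - 1, by omega⟩
    clear h
    rcases Nat.eq_zero_or_pos (k + m) with hkm | hkm
    · obtain ⟨rfl, rfl⟩ : k = 0 ∧ m = 0 := by omega
      norm_num [F, G, Nat.choose]
    -- general case: n = k + m + 1 ≥ 2
    have h1 : ((m : ℚ) + 1) * ((2*m+2).choose (m+1)) = 2 * (2*m+1) * ((2*m).choose m) := by
      have := Nat.succ_mul_centralBinom_succ m
      simp only [Nat.centralBinom] at this
      have h2m : 2 * (m + 1) = 2 * m + 2 := by omega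
      rw [h2m] at this
      exact_mod_cast this
    have h2 : ((k:ℚ)+m+2) * ((2*(k+m+1+1)).choose (k+m+1+1)) =
        2 * (2*(k+m+1)+1) * ((2*(k+m+1)).choose (k+m+1)) := by
      have := Nat.succ_mul_centralBinom_succ (k+m+1)
      simp only [Nat.centralBinom] at this
      exact_mod_cast this
    have h3 : ((2*m+2).choose (k+m+1) : ℚ) =
        ((2*m).choose (k+m+1)) + 2 * ((2*m).choose (k+m)) + ((2*m).choose (k+m-1)) := by
      obtain ⟨j, hj⟩ : ∃ j, k + m = j + 1 := ⟨k + m - 1, by omega⟩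
      have e1 : (2*m+2).choose (k+m+1) = (2*m+1).choose (k+m) + (2*m+1).choose (k+m+1) :=
        Nat.choose_succ_succ _ _
      have e2 : (2*m+1).choose (k+m+1) = (2*m).choose (k+m) + (2*m).choose (k+m+1) :=
        Nat.choose_succ_succ _ _
      have e3 : (2*m+1).choose (k+m) = (2*m).choose (k+m-1) + (2*m).choose (k+m) := by
        rw [hj, show j + 1 - 1 = j from rfl]
        exact Nat.choose_succ_succ _ _
      rw [e1, e2, e3]
      push_cast
      ring
    have h4 : ((2*m).choose (k+m+1) : ℚ) * ((k:ℚ)+m+1) =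
        ((2*m).choose (k+m)) * ((m:ℚ) - k) := by
      rcases le_or_gt k m with hkm' | hkm'
      · have hnat := Nat.choose_succ_right_eq (2*m) (k+m)
        rw [show 2*m - (k+m) = m - k from by omega] at hnat
        have hq := congrArg (Nat.cast : ℕ → ℚ) hnat
        push_cast [Nat.cast_sub hkm'] at hq
        linear_combination hq
      · rw [Nat.choose_eq_zero_of_lt (by omega), Nat.choose_eq_zero_of_lt (by omega)]
        norm_num
    have h5 : ((2*m).choose (k+m) : ℚ) * ((k:ℚ)+m) =
        ((2*m).choose (k+m-1)) * ((m:ℚ) - k + 1) := by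
      rcases le_or_gt k (m+1) with hkm' | hkm'
      · have hnat := Nat.choose_succ_right_eq (2*m) (k+m-1)
        rw [show k+m-1+1 = k+m from by omega,
            show 2*m - (k+m-1) = m+1-k from by omega] at hnat
        have hq := congrArg (Nat.cast : ℕ → ℚ) hnat
        push_cast [Nat.cast_sub hkm'] at hq
        linear_combination hq
      · rw [Nat.choose_eq_zero_of_lt (by omega),
          Nat.choose_eq_zero_of_lt (by omega : 2*m < k+m-1)]
        norm_num
    have hm1 : ((m : ℚ) + 1) ≠ 0 := by positivity
    apply mul_left_cancel₀ hm1
    simp only [F, G, if_neg (by omega : ¬ k+m+1 < k), if_neg (by omega : ¬ k+m+1 < k+1),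
      if_neg (by omega : ¬ k+m+1+1 < k+1)]
    rw [show 2*(k+m+1) - 2*k = 2*m+2 from by omega,
        show k+m+1 - k = m+1 from by omega,
        show 3*(k+m+1) - 2*k = k+3*m+3 from by omega,
        show 2*(k+m+1) - 2*(k+1) = 2*m from by omega,
        show k+m+1 - (k+1) = m from by omega,
        show 3*(k+m+1) - 2*(k+1) = k+3*m+1 from by omega,
        show 2*(k+m+1+1) - 2*(k+1) = 2*m+2 from by omega,
        show k+m+1+1 - (k+1) = m+1 from by omega,
        show k+m+1+1 - 1 = k+m+1 from by omega,
        show 3*(k+m+1+1) - 2*(k+1) = k+3*m+4 from by omega,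
        show k+m+1 - 1 = k+m from by omega,
        show (2:ℚ)^(k+3*m+3) = 2^(k+3*m+1) * 4 from by
          rw [show k+3*m+3 = k+3*m+1+2 from by omega, pow_add]; norm_num,
        show (2:ℚ)^(k+3*m+4) = 2^(k+3*m+1) * 8 from by
          rw [show k+3*m+4 = k+3*m+1+3 from by omega, pow_add]; norm_num,
        show ((-1:ℚ))^(k+m+1+1) = (-1)^(k+m+1) * (-1) from pow_succ _ _]
    push_cast
    linear_combination
      ((-1:ℚ))^(k+m+1) * (2^(k+3*m+1) : ℚ)⁻¹ * ((2*(k+m+1)).choose (k+m+1) : ℚ) *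
        (((k:ℚ)+m+1) - 2*k) * ((2*m+2).choose (k+m+1) : ℚ) / 4 * h1
      - ((m:ℚ)+1) * ((-1:ℚ))^(k+m+1) * (2^(k+3*m+1) : ℚ)⁻¹ *
        ((2*m+2).choose (m+1) : ℚ) * ((2*m+2).choose (k+m+1) : ℚ) / 8 * h2
      + ((-1:ℚ))^(k+m+1) * (2^(k+3*m+1) : ℚ)⁻¹ * ((2*(k+m+1)).choose (k+m+1) : ℚ) *
        ((2*m).choose m : ℚ) * (((k:ℚ)+m+1) - 2*k) * (2*(m:ℚ)+1) / 2 * h3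
      - ((-1:ℚ))^(k+m+1) * (2^(k+3*m+1) : ℚ)⁻¹ * ((2*(k+m+1)).choose (k+m+1) : ℚ) *
        ((2*m).choose m : ℚ) * (4*((k:ℚ)+m+1) - 4*k - 1) / 2 * h4
      - ((-1:ℚ))^(k+m+1) * (2^(k+3*m+1) : ℚ)⁻¹ * ((2*(k+m+1)).choose (k+m+1) : ℚ) *
        ((2*m).choose m : ℚ) * (2*((k:ℚ)+m+1) - 2*k - 1) / 2 * h5

/-- For any odd prime `p`, `∑_{n=0}^{(p-1)/2} F(n,0) = ∑_{k=1}^{(p-1)/2} G((p+1)/2, k)`. -/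
theorem sum_F_eq_sum_G (p : ℕ) (hp : p.Prime) (hodd : Odd p) :
    ∑ n ∈ Finset.range ((p - 1) / 2 + 1), F n 0 =
      ∑ k ∈ Finset.Icc 1 ((p - 1) / 2), G ((p + 1) / 2) k := by
  obtain ⟨t, rfl⟩ := hodd
  have hp3 : 2 * t + 1 ≠ 1 := hp.ne_one
  have ht : 1 ≤ t := by omega
  have e1 : (2 * t + 1 - 1) / 2 = t := by omega
  have e2 : (2 * t + 1 + 1) / 2 = t + 1 := by omega
  rw [e1, e2]
  rw [← Finset.Ico_add_one_right_eq_Icc, Finset.sum_Ico_eq_sum_range]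
  simp only [show t + 1 - 1 = t from rfl]
  have hG0 : ∀ i : ℕ, G 0 (1 + i) = 0 := by
    intro i
    simp only [G, if_pos (by omega : 0 < 1 + i)]
  have htele : ∀ i : ℕ, G (t + 1) (1 + i) =
      ∑ n ∈ Finset.range (t + 1), (F n i - F n (i + 1)) := by
    intro i
    have h := Finset.sum_range_sub (fun n => G n (1 + i)) (t + 1)
    calc G (t + 1) (1 + i) = G (t + 1) (1 + i) - G 0 (1 + i) := by rw [hG0 i]; ring
      _ = ∑ n ∈ Finset.range (t + 1), (G (n + 1) (1 + i) - G n (1 + i)) := h.symm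
      _ = ∑ n ∈ Finset.range (t + 1), (F n i - F n (i + 1)) := by
          refine Finset.sum_congr rfl fun n _ => ?_
          rw [show 1 + i = i + 1 from by omega]
          exact (WZ n i).symm
  rw [Finset.sum_congr rfl fun i _ => htele i, Finset.sum_comm]
  symm
  have hFt : ∀ n ∈ Finset.range (t + 1), F n t = 0 := by
    intro n hn
    rcases lt_or_eq_of_le (Nat.lt_succ_iff.mp (Finset.mem_range.mp hn)) with h | rfl
    · simp only [F, if_pos h]
    · simp only [F, if_neg (lt_irrefl n)]
      rw [show 2 * n - 2 * n = 0 from by omega, Nat.choose_eq_zero_of_lt (by omega : 0 < n)]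
      push_cast
      ring
  calc ∑ n ∈ Finset.range (t + 1), ∑ i ∈ Finset.range t, (F n i - F n (i + 1))
      = ∑ n ∈ Finset.range (t + 1), (F n 0 - F n t) := by
        refine Finset.sum_congr rfl fun n _ => ?_
        exact Finset.sum_range_sub' (fun i => F n i) t
    _ = ∑ n ∈ Finset.range (t + 1), F n 0 := by
        refine Finset.sum_congr rfl fun n hn => ?_
        rw [hFt n hn]; ring
end

section
/- Let p > 3 be a prime and r > 0 an integer. Then G(p^r, (p^r+1)/2) = p^r * C(2p^r, p^r) * C(p^r - 1, (p^r-1)/2) / 2^{2p^r - 1} ≡ (-1)^{(p^r-1)/2} * p^r (mod p^{r+2}), where the congruence is between rational numbers whose denominators are coprime to p. -/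
open Finset

section Helpers

variable {p : ℕ} [hp : Fact p.Prime]



-- ultrametric sum bound
theorem usum {ι : Type*} (s : Finset ι) (f : ι → ℚ_[p]) {ε : ℝ} (hε : 0 ≤ ε)
    (h : ∀ i ∈ s, ‖f i‖ ≤ ε) : ‖∑ i ∈ s, f i‖ ≤ ε := by
  classical
  induction s using Finset.induction with
  | empty => simpa using hε
  | @insert a s' hx ih =>
    rw [Finset.sum_insert hx]
    refine le_trans (Padic.nonarchimedean _ _) (max_le (h a (by simp)) ?_)
    exact ih fun i hi => h i (by simp [hi])

theorem uprod {ι : Type*} (s : Finset ι) (f : ι → ℚ_[p]) {ε : ℝ} (hε : 0 ≤ ε) (hε1 : ε ≤ 1)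
    (h : ∀ i ∈ s, ‖f i‖ ≤ ε) :
    ‖∏ i ∈ s, (1 + f i) - (1 + ∑ i ∈ s, f i)‖ ≤ ε ^ 2 := by
  classical
  induction s using Finset.induction with
  | empty => simpa using sq_nonneg ε
  | @insert a s' hx ih =>
    have hfa := h a (by simp)
    have hs : ∀ i ∈ s', ‖f i‖ ≤ ε := fun i hi => h i (by simp [hi])
    have ihs := ih hs
    have hsum : ‖∑ i ∈ s', f i‖ ≤ ε := usum s' f hε hs
    rw [Finset.prod_insert hx, Finset.sum_insert hx]
    have key : (1 + f a) * ∏ i ∈ s', (1 + f i) - (1 + (f a + ∑ i ∈ s', f i))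
        = (1 + f a) * (∏ i ∈ s', (1 + f i) - (1 + ∑ i ∈ s', f i)) + f a * ∑ i ∈ s', f i := by
      ring
    rw [key]
    refine le_trans (Padic.nonarchimedean _ _) (max_le ?_ ?_)
    · rw [norm_mul]
      have h1 : ‖(1 : ℚ_[p]) + f a‖ ≤ 1 :=
        le_trans (Padic.nonarchimedean _ _) (by simp [max_le_iff, le_trans hfa hε1])
      calc ‖(1:ℚ_[p]) + f a‖ * ‖∏ i ∈ s', (1 + f i) - (1 + ∑ i ∈ s', f i)‖
          ≤ 1 * (ε ^ 2) := by
            exact mul_le_mul h1 ihs (norm_nonneg _) zero_le_one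
        _ = ε ^ 2 := one_mul _
    · rw [norm_mul, sq]
      exact mul_le_mul hfa hsum (norm_nonneg _) hε

theorem uprod1 {ι : Type*} (s : Finset ι) (f : ι → ℚ_[p]) {ε : ℝ} (hε : 0 ≤ ε) (hε1 : ε ≤ 1)
    (h : ∀ i ∈ s, ‖f i‖ ≤ ε) :
    ‖∏ i ∈ s, (1 + f i) - 1‖ ≤ ε := by
  have h1 := uprod s f hε hε1 h
  have h2 := usum s f hε h
  have : (∏ i ∈ s, (1 + f i) - 1) = (∏ i ∈ s, (1 + f i) - (1 + ∑ i ∈ s, f i)) + ∑ i ∈ s, f i := by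
    ring
  rw [this]
  refine le_trans (Padic.nonarchimedean _ _) (max_le (le_trans h1 ?_) h2)
  calc ε ^ 2 = ε * ε := sq ε
    _ ≤ 1 * ε := mul_le_mul_of_nonneg_right hε1 hε
    _ = ε := one_mul ε


theorem norm_nat_lower {j r : ℕ} (hj : 0 < j) (hjr : j < p ^ r) (hr : 0 < r) :
    (p : ℝ) ^ (-(r - 1 : ℕ) : ℤ) ≤ ‖(j : ℚ_[p])‖ := by
  have hcast : (((j : ℤ) : ℚ_[p])) = (j : ℚ_[p]) := by push_cast; ring
  have hj0 : (j : ℚ_[p]) ≠ 0 := by exact_mod_cast Nat.cast_ne_zero.2 hj.ne'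
  have hndvd : ¬ ((p : ℤ) ^ r ∣ (j : ℤ)) := by
    intro hdvd
    have : (p : ℤ) ^ r ≤ j := Int.le_of_dvd (by exact_mod_cast hj) hdvd
    exact absurd (by exact_mod_cast this) (not_le.2 hjr)
  have hnorm : ¬ (‖(j : ℚ_[p])‖ ≤ (p : ℝ) ^ (-(r : ℕ) : ℤ)) := by
    rw [← hcast, Padic.norm_int_le_pow_iff_dvd]; exact hndvd
  push_neg at hnorm
  have hval := Padic.norm_eq_zpow_neg_valuation hj0
  rw [hval] at hnorm ⊢
  have hp1 : (1 : ℝ) < p := by exact_mod_cast hp.1.one_lt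
  have hlt : (-(r:ℕ) : ℤ) < -((j:ℚ_[p])).valuation :=
    (zpow_lt_zpow_iff_right₀ hp1).1 hnorm
  exact zpow_le_zpow_right₀ (le_of_lt hp1) (by omega)

theorem norm_ppow_div_le {j r : ℕ} (hj : 0 < j) (hjr : j < p ^ r) (hr : 0 < r) :
    ‖((p : ℚ_[p]) ^ r / (j : ℚ_[p]))‖ ≤ (p : ℝ)⁻¹ := by
  have hj0 : (j : ℚ_[p]) ≠ 0 := by exact_mod_cast Nat.cast_ne_zero.2 hj.ne'
  have hjn : 0 < ‖(j : ℚ_[p])‖ := norm_pos_iff.2 hj0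
  rw [norm_div, Padic.norm_p_pow, div_le_iff₀ hjn]
  have hlow := norm_nat_lower (p := p) hj hjr hr
  have hp0 : (0 : ℝ) < p := by exact_mod_cast hp.1.pos
  calc (p : ℝ) ^ (-(r:ℕ) : ℤ)
      = (p : ℝ)⁻¹ * (p:ℝ) ^ (-(r - 1 : ℕ) : ℤ) := by
        rw [← zpow_neg_one, ← zpow_add₀ (ne_of_gt hp0)]
        congr 1
        omega
    _ ≤ (p : ℝ)⁻¹ * ‖(j : ℚ_[p])‖ :=
        mul_le_mul_of_nonneg_left hlow (by positivity)

end Helpers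

section FieldIdents

variable {K : Type*} [Field K] [CharZero K]


theorem choose_asc (n N : ℕ) :
    (((n + N).choose N : K)) = ∏ j ∈ range N, ((n : K) + (j + 1)) / (j + 1) := by
  induction N with
  | zero => simp
  | succ N ih =>
    rw [prod_range_succ, ← ih]
    have key := Nat.add_one_mul_choose_eq (n + N) N
    have hq : ((n + N + 1 : ℕ) : K) * ((n + N).choose N : K)
        = ((n + N + 1).choose (N + 1) : K) * ((N + 1 : ℕ) : K) := by
      exact_mod_cast congrArg (Nat.cast : ℕ → K) key
    push_cast at hq
    have hN : ((N : K) + 1) ≠ 0 := Nat.cast_add_one_ne_zero N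
    rw [show n + (N+1) = n + N + 1 from rfl, mul_div_assoc', eq_div_iff hN]
    linear_combination -hq

theorem choose_desc (a m : ℕ) (h : m ≤ a) :
    ((a.choose m : K)) = ∏ j ∈ range m, ((a : K) - j) / (j + 1) := by
  induction m with
  | zero => simp
  | succ m ih =>
    have hm : m ≤ a := le_trans (Nat.le_succ m) h
    rw [prod_range_succ, ← ih hm]
    have key := Nat.choose_succ_right_eq a m
    have hsub : ((a - m : ℕ) : K) = (a : K) - m := by
      rw [Nat.cast_sub hm]
    have hq : ((a.choose (m+1) : K)) * ((m : K) + 1) = (a.choose m : K) * ((a : K) - m) := by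
      rw [← hsub]
      exact_mod_cast congrArg (Nat.cast : ℕ → K) key
    have hM : ((m : K) + 1) ≠ 0 := Nat.cast_add_one_ne_zero m
    field_simp
    linear_combination hq

theorem alt_harm (x : K) (m : ℕ) :
    ∑ j ∈ range (2 * m), ((-1 : K)) ^ j * (x / (j + 1))
      = ∑ j ∈ range (2 * m), x / (j + 1) - ∑ j ∈ range m, x / (j + 1) := by
  induction m with
  | zero => simp
  | succ m ih =>
    have h2 : 2 * (m + 1) = (2 * m + 1) + 1 := by ring
    rw [h2, sum_range_succ, sum_range_succ, sum_range_succ (fun j => x/((j:K)+1)) (2*m+1),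
      sum_range_succ (fun j => x/((j:K)+1)) (2*m), sum_range_succ, ih]
    have he : ((-1 : K)) ^ (2*m) = 1 := by
      rw [pow_mul]; norm_num
    have ho : ((-1 : K)) ^ (2*m+1) = -1 := by
      rw [pow_succ, he]; norm_num
    rw [he, ho]
    push_cast
    have hA : ((2:K) * m + 1) ≠ 0 := by
      have h := Nat.cast_add_one_ne_zero (R := K) (2*m)
      push_cast at h; exact h
    have hB : ((2:K) * m + 1 + 1) ≠ 0 := by
      have h := Nat.cast_add_one_ne_zero (R := K) (2*m+1)
      push_cast at h
      exact h
    have hC : ((m : K) + 1) ≠ 0 := Nat.cast_add_one_ne_zero m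
    field_simp
    ring

end FieldIdents

section Main

variable {p : ℕ} [hp : Fact p.Prime]


-- from a.lean/c.lean/b2.lean (assumed available):

theorem uprod_le_one {ι : Type*} (s : Finset ι) (f : ι → ℚ_[p]) {ε : ℝ} (hε : 0 ≤ ε) (hε1 : ε ≤ 1)
    (h : ∀ i ∈ s, ‖f i‖ ≤ ε) : ‖∏ i ∈ s, (1 + f i)‖ ≤ 1 := by
  have h1 := uprod1 s f hε hε1 h
  have : (∏ i ∈ s, (1 + f i)) = (∏ i ∈ s, (1 + f i) - 1) + 1 := by ring
  rw [this]
  refine le_trans (Padic.nonarchimedean _ _) (max_le (le_trans h1 hε1) (by simp))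

theorem key_norm (hp3 : 3 < p) (r m : ℕ) (hr : 0 < r) (hm : p ^ r = 2 * m + 1) :
    ‖((((4*m+2).choose (2*m+1) * ((2*m).choose m) : ℕ)) : ℚ_[p])
        - (-1) ^ m * 2 ^ (4*m+1)‖ ≤ (p : ℝ) ^ (-2 : ℤ) := by
  set K := ℚ_[p]
  set ε : ℝ := (p : ℝ)⁻¹ with hεdef
  have hppos : (0 : ℝ) < p := by exact_mod_cast hp.1.pos
  have hε0 : 0 ≤ ε := by positivity
  have hε1 : ε ≤ 1 := by
    rw [hεdef, inv_le_one₀ hppos]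
    exact_mod_cast hp.1.one_le
  set F : ℕ → K := fun j => ((p ^ r : ℕ) : K) / ((j : K) + 1) with hF
  have hFnorm : ∀ j, j < 2 * m → ‖F j‖ ≤ ε := by
    intro j hj
    have h1 : F j = (p : K) ^ r / ((j + 1 : ℕ) : K) := by
      rw [hF]; push_cast; ring_nf
    rw [h1]
    exact norm_ppow_div_le (Nat.succ_pos j) (by omega) hr
  -- main objects
  set P1 : K := ∏ j ∈ range (2*m), (1 + F j) with hP1def
  set P2 : K := ∏ j ∈ range m, (1 + (- F j)) with hP2def
  set S1 : K := ∑ j ∈ range (2*m), F j with hS1def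
  set S2 : K := ∑ j ∈ range m, F j with hS2def
  have hFr : ∀ j ∈ range (2*m), ‖F j‖ ≤ ε := fun j hj => hFnorm j (mem_range.1 hj)
  have hFr' : ∀ j ∈ range m, ‖(- F j)‖ ≤ ε := by
    intro j hj
    rw [norm_neg]
    exact hFnorm j (by have := mem_range.1 hj; omega)
  -- (a)
  have hC1 : (((4*m+2).choose (2*m+1) : ℕ) : K) = 2 * P1 := by
    have hnat : (4*m+2).choose (2*m+1) = 2 * ((2*m+1) + 2*m).choose (2*m) := by
      have h := Nat.add_one_mul_choose_eq (4*m+1) (2*m)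
      have h1 : (4*m+1).succ = 4*m+2 := rfl
      have h2 : (2*m).succ = 2*m+1 := rfl
      rw [show 4*m+1+1 = 4*m+2 from rfl] at h
      have h3 : (4*m+2) * ((4*m+1).choose (2*m))
          = (2 * ((4*m+1).choose (2*m))) * (2*m+1) := by ring
      rw [h3] at h
      have h4 := Nat.eq_of_mul_eq_mul_right (show 0 < 2*m+1 by omega) h.symm
      rw [show 2*m+1+2*m = 4*m+1 by omega]
      exact h4
    rw [hnat]
    push_cast [K, choose_asc (K := K) (2*m+1) (2*m)]
    rw [hP1def]
    congr 1
    apply Finset.prod_congr rfl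
    intro j hj
    have hj1 : ((j : K) + 1) ≠ 0 := Nat.cast_add_one_ne_zero j
    rw [hF]
    push_cast [K, hm]
    field_simp
    ring
  -- (b) and general descending
  have hdesc : ∀ k, k ≤ 2*m → (((2*m).choose k : ℕ) : K)
      = (-1)^k * ∏ j ∈ range k, (1 + (- F j)) := by
    intro k hk
    rw [choose_desc (K := K) (2*m) k hk]
    have hfac : ∀ j ∈ range k, (((2*m :ℕ) : K) - j) / ((j:K) + 1) = (-1) * (1 + (- F j)) := by
      intro j hj
      have hj1 : ((j : K) + 1) ≠ 0 := Nat.cast_add_one_ne_zero j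
      have hcast : ((p ^ r : ℕ) : K) = 2 * (m : K) + 1 := by
        rw [hm]; push_cast [K]; ring
      rw [hF]
      push_cast [K, hcast]
      field_simp
      ring
    rw [Finset.prod_congr rfl hfac, Finset.prod_mul_distrib, Finset.prod_const, card_range]
  have hC2 : (((2*m).choose m : ℕ) : K) = (-1)^m * P2 := hdesc m (by omega)
  -- ultrametric estimates
  have hu1 : ‖P1 - (1 + S1)‖ ≤ ε ^ 2 := uprod _ _ hε0 hε1 hFr
  have hu2 : ‖P2 - (1 - S2)‖ ≤ ε ^ 2 := by
    have := uprod (range m) (fun j => - F j) hε0 hε1 hFr'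
    have hneg : (∑ j ∈ range m, - F j) = - S2 := by
      rw [hS2def, Finset.sum_neg_distrib]
    rw [hneg] at this
    have : ‖P2 - (1 + - S2)‖ ≤ ε ^ 2 := this
    convert this using 2
    ring
  have hS1n : ‖S1‖ ≤ ε := usum _ _ hε0 hFr
  have hS2n : ‖S2‖ ≤ ε := usum (range m) F hε0
    (fun j hj => hFnorm j (by have := mem_range.1 hj; omega))
  have hP2n : ‖P2‖ ≤ 1 := uprod_le_one _ _ hε0 hε1 hFr'
  have h1S1 : ‖1 + S1‖ ≤ 1 :=
    le_trans (Padic.nonarchimedean _ _) (max_le (by simp) (le_trans hS1n hε1))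
  -- step1+2
  have hstep2 : ‖P1 * P2 - (1 + (S1 - S2))‖ ≤ ε ^ 2 := by
    have e1 : P1 * P2 - (1 + (S1 - S2))
        = ((P1 - (1 + S1)) * P2 + (1 + S1) * (P2 - (1 - S2))) + (- (S1 * S2)) := by ring
    rw [e1]
    refine le_trans (Padic.nonarchimedean _ _) (max_le (le_trans (Padic.nonarchimedean _ _) (max_le ?_ ?_)) ?_)
    · rw [norm_mul]
      calc ‖P1 - (1 + S1)‖ * ‖P2‖ ≤ ε^2 * 1 :=
          mul_le_mul hu1 hP2n (norm_nonneg _) (by positivity)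
        _ = ε^2 := mul_one _
    · rw [norm_mul]
      calc ‖1 + S1‖ * ‖P2 - (1 - S2)‖ ≤ 1 * (ε^2) :=
          mul_le_mul h1S1 hu2 (norm_nonneg _) zero_le_one
        _ = ε^2 := one_mul _
    · rw [norm_neg, norm_mul, sq]
      exact mul_le_mul hS1n hS2n (norm_nonneg _) hε0
  -- step3 : S1 - S2 = alternating sum
  have hAeq : S1 - S2 = ∑ j ∈ range (2*m), (-1 : K)^j * F j := by
    rw [hS1def, hS2def, hF]
    exact (alt_harm (((p^r : ℕ)) : K) m).symm
  -- step4: binomial terms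
  have hbin : ∀ j ∈ range (2*m), ‖(((2*m+1).choose (j+1) : ℕ) : K) - (-1 : K)^j * F j‖ ≤ ε^2 := by
    intro j hj
    have hjlt : j < 2*m := mem_range.1 hj
    have hCn : (((2*m+1).choose (j+1) : ℕ) : K) = F j * (((2*m).choose j : ℕ) : K) := by
      have h := Nat.add_one_mul_choose_eq (2*m) j
      have hq : ((2*m+1 : ℕ) : K) * (((2*m).choose j : ℕ) : K)
          = (((2*m+1).choose (j+1) : ℕ) : K) * ((j+1 : ℕ) : K) := by
        rw [← Nat.cast_mul, ← Nat.cast_mul, h]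
      have hj1 : ((j : K) + 1) ≠ 0 := Nat.cast_add_one_ne_zero j
      rw [hF]
      push_cast [K, hm] at hq ⊢
      field_simp
      linear_combination -hq
    have hCdesc := hdesc j (by omega)
    rw [hCn, hCdesc]
    have e : F j * ((-1:K)^j * ∏ i ∈ range j, (1 + - F i)) - (-1:K)^j * F j
        = (-1:K)^j * (F j * ((∏ i ∈ range j, (1 + - F i)) - 1)) := by ring
    rw [e, norm_mul, norm_mul]
    have hn1 : ‖(-1 : K)^j‖ = 1 := by
      rw [norm_pow, norm_neg, norm_one, one_pow]
    rw [hn1, one_mul, sq]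
    have hprodn : ‖(∏ i ∈ range j, (1 + - F i)) - 1‖ ≤ ε := by
      refine uprod1 _ _ hε0 hε1 ?_
      intro i hi
      rw [norm_neg]
      exact hFnorm i (by have := mem_range.1 hi; omega)
    exact mul_le_mul (hFnorm j hjlt) hprodn (norm_nonneg _) hε0
  -- step5
  have hsum : ‖(∑ j ∈ range (2*m), (((2*m+1).choose (j+1) : ℕ) : K)) - (S1 - S2)‖ ≤ ε^2 := by
    rw [hAeq, ← Finset.sum_sub_distrib]
    exact usum _ _ (by positivity) hbin
  -- step6
  have hpow : (∑ j ∈ range (2*m), (((2*m+1).choose (j+1) : ℕ) : K)) = 2^(2*m+1) - 2 := by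
    have hnat : (∑ j ∈ range (2*m), (2*m+1).choose (j+1)) + 2 = 2^(2*m+1) := by
      have h := Nat.sum_range_choose (2*m+1)
      rw [sum_range_succ, sum_range_succ'] at h
      simp only [Nat.choose_self, Nat.choose_zero_right] at h
      omega
    have hcast : ((∑ j ∈ range (2*m), (2*m+1).choose (j+1) : ℕ) : K) + 2 = 2^(2*m+1) := by
      exact_mod_cast congrArg (Nat.cast : ℕ → K) hnat
    push_cast [K] at hcast
    linear_combination hcast
  -- step7
  have hd : ‖(2:K)^(2*m) - 1‖ ≤ ε := by
    have hdvd1 : (p - 1 : ℕ) ∣ p^r - 1 := by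
      have := Nat.sub_dvd_pow_sub_pow p 1 r
      simpa using this
    obtain ⟨k, hk⟩ := hdvd1
    have h2m : 2*m = (p-1)*k := by omega
    have h2ne : (2 : ZMod p) ≠ 0 := by
      intro h
      have : ((2 : ℕ) : ZMod p) = 0 := by exact_mod_cast h
      have := (ZMod.natCast_eq_zero_iff 2 p).1 this
      have := Nat.le_of_dvd (by norm_num) this
      omega
    have hzmod : (2 : ZMod p)^(2*m) = 1 := by
      rw [h2m, pow_mul, ZMod.pow_card_sub_one_eq_one h2ne, one_pow]
    have hint : (p : ℤ) ∣ (2^(2*m) - 1 : ℤ) := by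
      have : ((2^(2*m) - 1 : ℤ) : ZMod p) = 0 := by
        push_cast
        rw [hzmod]
        ring
      exact_mod_cast (ZMod.intCast_zmod_eq_zero_iff_dvd _ p).1 this
    have hnorm := (Padic.norm_int_le_pow_iff_dvd (2^(2*m) - 1 : ℤ) 1).2 (by simpa using hint)
    have hcast : (((2^(2*m) - 1 : ℤ)) : K) = (2:K)^(2*m) - 1 := by push_cast; ring
    rw [hcast] at hnorm
    calc ‖(2:K)^(2*m) - 1‖ ≤ (p:ℝ)^(-(1:ℕ) : ℤ) := hnorm
      _ = ε := by rw [hεdef]; simp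
  -- step8
  have h48 : ‖((2:K)^(4*m) - 1) - ((2:K)^(2*m+1) - 2)‖ ≤ ε^2 := by
    have e : ((2:K)^(4*m) - 1) - ((2:K)^(2*m+1) - 2) = ((2:K)^(2*m) - 1)^2 := by
      rw [show (4*m) = (2*m)*2 by ring, pow_mul, pow_succ]
      ring
    rw [e, norm_pow]
    exact pow_le_pow_left₀ (norm_nonneg _) hd 2
  -- step9 assembly
  have h2norm : ‖(2 : K)‖ ≤ 1 := by
    have := Padic.norm_int_le_one (p := p) 2
    exact_mod_cast this
  have hfinal : ‖2*(P1*P2) - 2^(4*m+1)‖ ≤ ε^2 := by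
    have e : 2*(P1*P2) - 2^(4*m+1)
        = 2 * ((P1*P2 - (1 + (S1 - S2)))
            + (((S1 - S2) - ((2:K)^(2*m+1) - 2)) + (((2:K)^(2*m+1) - 2) - ((2:K)^(4*m) - 1)))) := by
      rw [show (4*m+1) = (2*m)*2 + 1 by ring, pow_succ, pow_mul]
      ring
    rw [e, norm_mul]
    have hz : ‖(P1*P2 - (1 + (S1 - S2)))
        + (((S1 - S2) - ((2:K)^(2*m+1) - 2)) + (((2:K)^(2*m+1) - 2) - ((2:K)^(4*m) - 1)))‖ ≤ ε^2 := by
      refine le_trans (Padic.nonarchimedean _ _) (max_le hstep2 (le_trans (Padic.nonarchimedean _ _) (max_le ?_ ?_)))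
      · have : (S1 - S2) - ((2:K)^(2*m+1) - 2)
            = -((∑ j ∈ range (2*m), (((2*m+1).choose (j+1) : ℕ) : K)) - (S1 - S2)) := by
          rw [hpow]; ring
        rw [this, norm_neg]
        exact hsum
      · have : ((2:K)^(2*m+1) - 2) - ((2:K)^(4*m) - 1)
            = -(((2:K)^(4*m) - 1) - ((2:K)^(2*m+1) - 2)) := by ring
        rw [this, norm_neg]
        exact h48
    calc ‖(2:K)‖ * _ ≤ 1 * (ε^2) := mul_le_mul h2norm hz (norm_nonneg _) zero_le_one
      _ = ε^2 := one_mul _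
  -- conclusion
  have hcastfin : ((((4*m+2).choose (2*m+1) * ((2*m).choose m) : ℕ)) : K)
      = (2 * P1) * ((-1:K)^m * P2) := by
    push_cast [K]
    rw [← hC1, ← hC2]
  have e2 : (2 * P1) * ((-1:K)^m * P2) - (-1:K)^m * 2^(4*m+1)
      = (-1:K)^m * (2*(P1*P2) - 2^(4*m+1)) := by ring
  rw [hcastfin, e2, norm_mul]
  have hn1 : ‖(-1 : K)^m‖ = 1 := by rw [norm_pow, norm_neg, norm_one, one_pow]
  rw [hn1, one_mul]
  calc ‖2*(P1*P2) - 2^(4*m+1)‖ ≤ ε^2 := hfinal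
    _ = (p:ℝ) ^ (-2 : ℤ) := by
      rw [hεdef, zpow_neg, inv_pow]
      norm_cast

theorem num_dvd_of_dvd (p : ℕ) (hp : p.Prime) (s : ℕ) (a b : ℤ) (hb : b ≠ 0)
    (hpb : ¬ (p:ℤ) ∣ b) (h : (p:ℤ)^s ∣ a) :
    (p:ℤ)^s ∣ ((a:ℚ)/(b:ℚ)).num := by
  set X : ℚ := (a:ℚ)/(b:ℚ) with hXdef
  have hbQ : (b : ℚ) ≠ 0 := Int.cast_ne_zero.2 hb
  have hX : X * b = a := div_mul_cancel₀ _ hbQ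
  have hdQ : ((X.den : ℤ) : ℚ) ≠ 0 := by
    exact_mod_cast (Nat.cast_ne_zero (R := ℚ)).2 X.den_nz
  have h1 : (X.num : ℚ) = X * X.den := by
    rw [← Rat.mul_den_eq_num X]
  have h2 : X.num * b = a * X.den := by
    have : ((X.num * b : ℤ) : ℚ) = ((a * X.den : ℤ) : ℚ) := by
      push_cast
      rw [h1]
      push_cast
      linear_combination (X.den : ℚ) * hX
    exact_mod_cast this
  have hco : IsCoprime ((p:ℤ)^s) b :=
    IsCoprime.pow_left (((Nat.prime_iff_prime_int.mp hp).coprime_iff_not_dvd).2 hpb)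
  have : (p:ℤ)^s ∣ X.num * b := h2 ▸ Dvd.dvd.mul_right h _
  exact hco.dvd_of_dvd_mul_right this




theorem key_dvd {p : ℕ} [hpf : Fact p.Prime] (hp3 : 3 < p) (r m : ℕ) (hr : 0 < r)
    (hm : p ^ r = 2 * m + 1) :
    (p:ℤ)^2 ∣ (((4*m+2).choose (2*m+1) : ℤ) * (((2*m).choose m : ℕ) : ℤ)
      - (-1)^m * 2^(4*m+1)) := by
  have h := key_norm hp3 r m hr hm
  have hcast : ((((4*m+2).choose (2*m+1) * ((2*m).choose m) : ℕ)) : ℚ_[p])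
        - (-1) ^ m * 2 ^ (4*m+1)
      = (((((4*m+2).choose (2*m+1) : ℤ) * (((2*m).choose m : ℕ) : ℤ)
          - (-1)^m * 2^(4*m+1)) : ℤ) : ℚ_[p]) := by
    push_cast
    ring
  rw [hcast] at h
  exact_mod_cast (Padic.norm_int_le_pow_iff_dvd _ 2).1 h


end Main

/-- Lemma 3.2 (Mao): for any prime `p > 3` and integer `r > 0`,
`G(p^r, (p^r+1)/2) = p^r C(2p^r, p^r) C(p^r-1, (p^r-1)/2) / 2^{2p^r-1}`, and this
quantity is `≡ (-1)^{(p^r-1)/2} p^r (mod p^{r+2})`. -/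
theorem G_prime_pow_half_congr (p r : ℕ) (hp : p.Prime) (hp3 : 3 < p) (hr : 0 < r) :
    G (p ^ r) ((p ^ r + 1) / 2) =
        (p : ℚ) ^ r * ((2 * p ^ r).choose (p ^ r) : ℚ) *
          ((p ^ r - 1).choose ((p ^ r - 1) / 2) : ℚ) / 2 ^ (2 * p ^ r - 1) ∧
      ((p : ℤ)) ^ (r + 2) ∣
        ((p : ℚ) ^ r * ((2 * p ^ r).choose (p ^ r) : ℚ) *
            ((p ^ r - 1).choose ((p ^ r - 1) / 2) : ℚ) / 2 ^ (2 * p ^ r - 1) -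
          (-1) ^ ((p ^ r - 1) / 2) * (p : ℚ) ^ r).num := by
  haveI hpf : Fact p.Prime := ⟨hp⟩
  have hodd : Odd (p ^ r) := (hp.odd_of_ne_two (by omega)).pow
  obtain ⟨m, hm⟩ : ∃ m, p ^ r = 2 * m + 1 := hodd
  have hple : 4 ≤ p := by omega
  have hnge : 4 ≤ p ^ r := le_trans hple (Nat.le_self_pow hr.ne' p)
  -- arithmetic facts
  have e1 : (p ^ r + 1) / 2 = m + 1 := by omega
  have e2 : (p ^ r - 1) / 2 = m := by omega
  have e3 : 2 * p ^ r = 4 * m + 2 := by omega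
  have e4 : 2 * p ^ r - 2 * ((p ^ r + 1) / 2) = 2 * m := by omega
  have e5 : p ^ r - (p ^ r + 1) / 2 = m := by omega
  have e6 : p ^ r - 1 = 2 * m := by omega
  have e7 : 3 * p ^ r - 2 * ((p ^ r + 1) / 2) = 4 * m + 1 := by omega
  have e8 : 2 * p ^ r - 1 = 4 * m + 1 := by omega
  have hnotlt : ¬ (p ^ r < (p ^ r + 1) / 2) := by omega
  have hG : G (p ^ r) ((p ^ r + 1) / 2)
      = (p : ℚ) ^ r * (((4*m+2).choose (2*m+1) : ℕ) : ℚ) * (((2*m).choose m : ℕ) : ℚ)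
          / 2 ^ (4*m+1) := by
    rw [G, if_neg hnotlt, e4, e5, e6, e7, e3]
    rw [Nat.choose_self]
    have heven : (-1 : ℚ) ^ (p ^ r + 1) = 1 := Even.neg_one_pow ⟨m + 1, by omega⟩
    have hcast : ((p ^ r : ℕ) : ℚ) = (p : ℚ) ^ r := by push_cast; ring
    rw [heven, hcast, hm]
    push_cast
    ring
  have hGstmt : G (p ^ r) ((p ^ r + 1) / 2) =
      (p : ℚ) ^ r * ((2 * p ^ r).choose (p ^ r) : ℚ) *
        ((p ^ r - 1).choose ((p ^ r - 1) / 2) : ℚ) / 2 ^ (2 * p ^ r - 1) := by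
    rw [hG, e2, e8, e3, e6, hm]
  refine ⟨hGstmt, ?_⟩
  -- divisibility part
  set Z : ℤ := ((4*m+2).choose (2*m+1) : ℤ) * (((2*m).choose m : ℕ) : ℤ) - (-1)^m * 2^(4*m+1)
    with hZ
  have hdvdZ : (p:ℤ)^2 ∣ Z := key_dvd hp3 r m hr hm
  set a : ℤ := (p:ℤ)^r * Z with ha
  set b : ℤ := 2^(4*m+1) with hb
  have hXeq : (p : ℚ) ^ r * ((2 * p ^ r).choose (p ^ r) : ℚ) *
        ((p ^ r - 1).choose ((p ^ r - 1) / 2) : ℚ) / 2 ^ (2 * p ^ r - 1) -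
      (-1) ^ ((p ^ r - 1) / 2) * (p : ℚ) ^ r = (a : ℚ) / (b : ℚ) := by
    rw [e2, e8, e3, e6, hm, ha, hZ, hb]
    have h2 : ((2:ℚ)) ^ (4*m+1) ≠ 0 := by positivity
    push_cast
    field_simp
  rw [hXeq]
  refine num_dvd_of_dvd p hp (r+2) a b (by positivity) ?_ ?_
  · intro hdvd
    have hpZ : Prime (p : ℤ) := Nat.prime_iff_prime_int.mp hp
    have := hpZ.dvd_of_dvd_pow (n := 4*m+1) (by exact_mod_cast hdvd)
    have : (p : ℤ) ∣ (2 : ℤ) := this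
    have : p ∣ 2 := by exact_mod_cast this
    have := Nat.le_of_dvd (by norm_num) this
    omega
  · rw [ha, pow_add]
    exact mul_dvd_mul_left _ hdvdZ
end

section
/- Let p > 3 be a prime and r > 0 an integer. Then sum_{k=1}^{(p^r-1)/2} G(p^r, k) ≡ 0 (mod p^{r+2}), where G(n,k) = (-1)^{n+1} n C(2n,n) C(2n-2k,n-k) C(2n-2k,n-1) / 2^{3n-2k}, and the congruence is between rational numbers whose denominators are coprime to p. -/
lemma dvd_choose_of_carry {p N K i : ℕ} (hp : p.Prime) (hK : K ≤ N) (hi : 1 ≤ i)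
    (hiN : p ^ i ≤ N) (hcarry : p ^ i ≤ K % p ^ i + (N - K) % p ^ i) : p ∣ N.choose K := by
  have hpi : 0 < p ^ i := pow_pos hp.pos i
  have hN0 : N ≠ 0 := by omega
  have hb : Nat.log p N < Nat.log p N + 1 := lt_add_one _
  have hmem : i ∈ Finset.filter (fun j => p ^ j ≤ K % p ^ j + (N - K) % p ^ j)
      (Finset.Ico 1 (Nat.log p N + 1)) := by
    refine Finset.mem_filter.mpr ⟨Finset.mem_Ico.mpr ⟨hi, ?_⟩, hcarry⟩
    have := (Nat.le_log_iff_pow_le hp.one_lt hN0).mpr hiN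
    omega
  have hcard : 1 ≤ (Finset.filter (fun j => p ^ j ≤ K % p ^ j + (N - K) % p ^ j)
      (Finset.Ico 1 (Nat.log p N + 1))).card :=
    Finset.card_pos.mpr ⟨i, hmem⟩
  have h := hp.emultiplicity_choose hK hb
  have : (1 : ℕ∞) ≤ emultiplicity p (N.choose K) := by
    rw [h]; exact_mod_cast hcard
  simpa using pow_dvd_of_le_emultiplicity this

lemma dvd_central {p r m : ℕ} (hp : p.Prime) (hr : 1 ≤ r) (h1 : p ^ r < 2 * m)
    (h2 : m < p ^ r) : p ∣ (2 * m).choose m := by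
  refine dvd_choose_of_carry hp (by omega) hr (by omega) ?_
  have : m % p ^ r = m := Nat.mod_eq_of_lt h2
  have h3 : 2 * m - m = m := by omega
  rw [h3, this]; omega

lemma dvd_second {p r b : ℕ} (hp : p.Prime) (hr : 1 ≤ r) (hb1 : 1 ≤ b) (hb2 : b < p ^ r) :
    p ∣ (p ^ r - 1 + b).choose (p ^ r - 1) := by
  haveI := Fact.mk hp
  have hpr0 : 0 < p ^ r := pow_pos hp.pos r
  set v := padicValNat p b with hv
  have hdvd : p ^ v ∣ b := pow_padicValNat_dvd
  have hpv : p ^ v ≤ b := Nat.le_of_dvd hb1 hdvd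
  have hvr : v < r := by
    by_contra h
    push_neg at h
    have : p ^ r ≤ p ^ v := Nat.pow_le_pow_right hp.pos h
    omega
  have hq2 : 2 ≤ p ^ (v + 1) := le_trans hp.two_le (Nat.le_self_pow (by omega) p)
  have hple : p ^ (v + 1) ≤ p ^ r := Nat.pow_le_pow_right hp.pos (by omega)
  have hmod1 : (p ^ r - 1) % p ^ (v + 1) = p ^ (v + 1) - 1 := by
    obtain ⟨t, ht⟩ := pow_dvd_pow p (show v + 1 ≤ r by omega)
    have ht1 : 0 < t := by
      rcases Nat.eq_zero_or_pos t with h | h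
      · rw [h, mul_zero] at ht; omega
      · exact h
    have hmt : p ^ (v + 1) * t = p ^ (v + 1) * (t - 1) + p ^ (v + 1) := by
      rw [← Nat.mul_succ]; congr 1; omega
    have : p ^ r - 1 = (p ^ (v + 1) - 1) + p ^ (v + 1) * (t - 1) := by omega
    rw [this, Nat.add_mul_mod_self_left, Nat.mod_eq_of_lt (by omega)]
  have hmod2 : 1 ≤ b % p ^ (v + 1) := by
    rcases Nat.eq_zero_or_pos (b % p ^ (v + 1)) with h | h
    · exact absurd (Nat.dvd_of_mod_eq_zero h) (hv ▸ pow_succ_padicValNat_not_dvd (p := p) (show b ≠ 0 by omega))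
    · exact h
  refine dvd_choose_of_carry (i := v + 1) hp (by omega) (by omega) (by omega) ?_
  have h3 : p ^ r - 1 + b - (p ^ r - 1) = b := by omega
  rw [h3, hmod1]
  have := Nat.mod_lt b (show 0 < p ^ (v + 1) by omega)
  omega


/-- If `q = M / 2^e` with `p^s ∣ M`, `p` odd, then `p^s ∣ q.num`. -/
lemma num_dvd_of_eq_div {p s e : ℕ} {M : ℤ} {q : ℚ} (hp : p.Prime) (hp3 : 3 < p)
    (hq : q = (M : ℚ) / 2 ^ e) (hdvd : (p : ℤ) ^ s ∣ M) : (p : ℤ) ^ s ∣ q.num := by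
  have hden : (q.den : ℚ) ≠ 0 := Nat.cast_ne_zero.mpr q.den_nz
  have h2 : ((2 : ℚ)) ^ e ≠ 0 := by positivity
  have key : (q.num : ℚ) * 2 ^ e = M * q.den := by
    rw [← Rat.num_div_den q] at hq
    field_simp at hq
    linarith [hq]
  have keyZ : q.num * 2 ^ e = M * q.den := by exact_mod_cast key
  have hd : (p : ℤ) ^ s ∣ q.num * 2 ^ e := keyZ ▸ hdvd.mul_right _
  have hcop : IsCoprime ((p : ℤ) ^ s) ((2 : ℤ) ^ e) := by
    apply IsCoprime.pow
    have : Nat.Coprime p 2 := (Nat.coprime_primes hp Nat.prime_two).mpr (by omega)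
    exact_mod_cast Nat.isCoprime_iff_coprime.mpr this
  exact hcop.dvd_of_dvd_mul_right hd

/-- Lemma 3.3 (Mao): for any prime `p > 3` and integer `r > 0`,
`∑_{k=1}^{(p^r-1)/2} G(p^r, k) ≡ 0 (mod p^{r+2})`. -/
theorem sum_G_prime_pow_congr_zero (p r : ℕ) (hp : p.Prime) (hp3 : 3 < p) (hr : 0 < r) :
    ((p : ℤ)) ^ (r + 2) ∣ (∑ k ∈ Finset.Icc 1 ((p ^ r - 1) / 2), G (p ^ r) k).num := by
  have hp5 : 5 ≤ p := by
    have : p ≠ 4 := by rintro rfl; exact absurd hp (by decide)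
    omega
  have hn5 : 5 ≤ p ^ r := le_trans hp5 (Nat.le_self_pow hr.ne' p)
  have hoddp : Odd p := hp.odd_of_ne_two (by omega)
  have hodd : Odd (p ^ r) := hoddp.pow
  -- the integer numerators
  set n := p ^ r with hn
  set m : ℕ → ℕ := fun k =>
    n * (2 * n).choose n * ((2 * n - 2 * k).choose (n - k)) *
      ((2 * n - 2 * k).choose (n - 1)) * 2 ^ (2 * k - 2) with hm
  have hterm : ∀ k ∈ Finset.Icc 1 ((n - 1) / 2), G n k = ((m k : ℕ) : ℚ) / 2 ^ (3 * n - 2) := by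
    intro k hk
    rw [Finset.mem_Icc] at hk
    obtain ⟨hk1, hk2⟩ := hk
    have h2k : 2 * k ≤ n - 1 := by omega
    have hif : ¬ n < k := by omega
    have hne : ((2 : ℚ)) ^ (2 * k - 2) ≠ 0 := by positivity
    rw [G, if_neg hif, Even.neg_one_pow (by exact hodd.add_one), one_mul]
    rw [show (3 * n - 2 : ℕ) = (3 * n - 2 * k) + (2 * k - 2) by omega, pow_add]
    rw [hm]
    push_cast
    rw [mul_div_mul_right _ _ hne]
  rw [Finset.sum_congr rfl hterm, ← Finset.sum_div, ← Nat.cast_sum]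
  have hdvdm : ∀ k ∈ Finset.Icc 1 ((n - 1) / 2), p ^ (r + 2) ∣ m k := by
    intro k hk
    rw [Finset.mem_Icc] at hk
    obtain ⟨hk1, hk2⟩ := hk
    have h2k : 2 * k ≤ n - 1 := by omega
    have d2 : p ∣ (2 * n - 2 * k).choose (n - k) := by
      have := dvd_central (p := p) (r := r) (m := n - k) hp hr (by omega) (by omega)
      rwa [show 2 * (n - k) = 2 * n - 2 * k by omega] at this
    have d3 : p ∣ (2 * n - 2 * k).choose (n - 1) := by
      have := dvd_second (p := p) (r := r) (b := n + 1 - 2 * k) hp hr (by omega) (by omega)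
      rwa [show p ^ r - 1 + (n + 1 - 2 * k) = 2 * n - 2 * k by omega] at this
    have key : p ^ r * p * p ∣ n * (2 * n).choose n * ((2 * n - 2 * k).choose (n - k)) *
        ((2 * n - 2 * k).choose (n - 1)) :=
      mul_dvd_mul (mul_dvd_mul (hn ▸ dvd_mul_right (p ^ r) ((2 * n).choose n)) d2) d3
    rw [hm]
    calc p ^ (r + 2) = p ^ r * p * p := by ring
    _ ∣ _ := Dvd.dvd.mul_right key _
  have hM : (p : ℤ) ^ (r + 2) ∣ ((∑ k ∈ Finset.Icc 1 ((n - 1) / 2), m k : ℕ) : ℤ) := by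
    exact_mod_cast Int.natCast_dvd_natCast.mpr (Finset.dvd_sum hdvdm)
  exact num_dvd_of_eq_div hp hp3 (by push_cast; ring) hM
end

section
/- For every nonnegative integer n, sum_{k=0}^{n} C(2n, k) * C(2n-k, k) / 4^k = C(4n, 2n) / 4^n, as an identity of rational numbers. -/
open Polynomial Finset

lemma key (m : ℕ) :
    ∑ k ∈ Finset.range (m + 1),
      (m.choose k : ℚ) * ((m - k).choose k : ℚ) * 2 ^ (m - k - k) =
      ((2 * m).choose m : ℚ) := by
  have h1 : ((X + C (1:ℚ)) ^ (2 * m)).coeff m = ((2 * m).choose m : ℚ) := by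
    rw [Polynomial.coeff_X_add_C_pow]; simp
  have h2 : (X + C (1:ℚ)) ^ (2 * m) = (X * (X + C 2) + 1) ^ m := by
    rw [pow_mul]; congr 1
    simp only [map_one, map_ofNat]
    ring
  rw [h2, add_pow, Polynomial.finset_sum_coeff] at h1
  rw [← h1, ← Finset.sum_range_reflect]
  apply Finset.sum_congr rfl
  intro j hj
  simp only [Finset.mem_range] at hj
  have hj' : j ≤ m := by omega
  have e1 : m + 1 - 1 - j = m - j := by omega
  rw [e1]
  have h3 : (X * (X + C (2:ℚ))) ^ j * 1 ^ (m - j) * (↑(m.choose j) : ℚ[X])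
      = X ^ j * (X + C (2:ℚ)) ^ j * C ((m.choose j : ℚ)) := by
    rw [mul_pow]; simp
  have e2 : m = (m - j) + j := by omega
  have hc : ((X:ℚ[X]) ^ j * (X + C 2) ^ j * C ((m.choose j : ℚ))).coeff m
      = 2 ^ (j - (m - j)) * ((j.choose (m - j) : ℚ)) * ((m.choose j : ℚ)) := by
    rw [Polynomial.coeff_mul_C]
    conv_lhs => rw [e2]
    rw [Polynomial.coeff_X_pow_mul, Polynomial.coeff_X_add_C_pow, ← e2]
  rw [h3, hc, Nat.sub_sub_self hj', Nat.choose_symm hj']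
  ring

/-- For every `n ≥ 0`, `∑_{k=0}^n C(2n,k) C(2n-k,k) / 4^k = C(4n,2n) / 4^n`. -/
theorem sum_choose_div_four_pow (n : ℕ) :
    ∑ k ∈ Finset.range (n + 1),
        ((2 * n).choose k : ℚ) * ((2 * n - k).choose k : ℚ) / 4 ^ k =
      ((4 * n).choose (2 * n) : ℚ) / 4 ^ n := by
  have hkey := key (2 * n)
  have h4 : 2 * (2 * n) = 4 * n := by ring
  rw [h4] at hkey
  have hsub : ∑ k ∈ Finset.range (2 * n + 1),
      ((2 * n).choose k : ℚ) * ((2 * n - k).choose k : ℚ) * 2 ^ (2 * n - k - k) =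
      ∑ k ∈ Finset.range (n + 1),
      ((2 * n).choose k : ℚ) * ((2 * n - k).choose k : ℚ) * 2 ^ (2 * n - k - k) := by
    refine (Finset.sum_subset (Finset.range_subset_range.mpr (by omega)) ?_).symm
    intro k hk hk'
    simp only [Finset.mem_range] at hk hk'
    have : (2 * n - k).choose k = 0 := Nat.choose_eq_zero_of_lt (by omega)
    simp [this]
  rw [hsub] at hkey
  rw [eq_div_iff (by positivity : (4:ℚ) ^ n ≠ 0), Finset.sum_mul, ← hkey]
  apply Finset.sum_congr rfl
  intro k hk
  simp only [Finset.mem_range] at hk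
  have hk' : k ≤ n := by omega
  have e1 : 2 * n - k - k = 2 * (n - k) := by omega
  have e2 : (2:ℚ) ^ (2 * (n - k)) = 4 ^ (n - k) := by
    rw [pow_mul]; norm_num
  have e3 : (4:ℚ) ^ n = 4 ^ (n - k) * 4 ^ k := by
    rw [← pow_add]; congr 1; omega
  rw [e1, e2, e3]
  field_simp
end

section
/- For every nonnegative integer n, sum_{k=0}^{n} C(2n+1, k) * C(2n+1-k, k) / 4^k = C(4n+1, 2n+1) / 4^n, as an identity of rational numbers. -/
open Finset Nat

/-- The summand `C(m,2k) C(2k,k) / 4^k`. -/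
noncomputable def auxF (m k : ℕ) : ℚ := (m.choose (2 * k) : ℚ) * ((2 * k).choose k : ℚ) / 4 ^ k

/-- The WZ certificate function. -/
noncomputable def auxG (m : ℕ) : ℕ → ℚ
  | 0 => 0
  | (k + 1) => (2 * (k : ℚ) - m) * auxF m k

lemma auxF_zero (m : ℕ) : auxF m 0 = 1 := by simp [auxF]

lemma auxF_of_lt {m k : ℕ} (h : m < 2 * k) : auxF m k = 0 := by
  simp [auxF, Nat.choose_eq_zero_of_lt h]

/-- The per-`k` WZ identity. -/
lemma auxWZ (m k : ℕ) :
    (m + 1 : ℚ) * auxF (m + 1) k - (2 * m + 1 : ℚ) * auxF m k = auxG m (k + 1) - auxG m k := by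
  match k with
  | 0 =>
    simp [auxG, auxF_zero]
    ring
  | k + 1 =>
    simp only [auxG]
    push_cast
    rcases Nat.lt_or_ge m (2 * k) with h | h
    · -- m < 2k : everything vanishes
      rw [auxF_of_lt h, auxF_of_lt (show m < 2 * (k + 1) by omega),
        auxF_of_lt (show m + 1 < 2 * (k + 1) by omega)]
      ring
    · rcases Nat.lt_or_ge m (2 * k + 2) with h2 | h2
      · rcases Nat.lt_or_ge m (2 * k + 1) with h3 | h3
        · -- m = 2k
          have hm : m = 2 * k := by omega
          subst hm
          rw [show auxF (2 * k + 1) (k + 1) = 0 from auxF_of_lt (by omega),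
            show auxF (2 * k) (k + 1) = 0 from auxF_of_lt (by omega)]
          push_cast
          ring
        · -- m = 2k+1
          have hm : m = 2 * k + 1 := by omega
          subst hm
          rw [show auxF (2 * k + 1) (k + 1) = 0 from auxF_of_lt (by omega)]
          have hc : ((2 * k + 1 + 1).choose (2 * (k + 1)) : ℚ) = 1 := by
            norm_num [show 2 * k + 1 + 1 = 2 * (k + 1) by ring]
          have key : (k + 1) * ((2 * (k + 1)).choose (k + 1))
              = 2 * (2 * k + 1) * ((2 * k).choose k) := by
            have := Nat.succ_mul_centralBinom_succ k
            simpa [Nat.centralBinom_eq_two_mul_choose, Nat.mul_succ] using this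
          have keyQ : ((k : ℚ) + 1) * ((2 * (k + 1)).choose (k + 1) : ℚ)
              = 2 * (2 * (k : ℚ) + 1) * ((2 * k).choose k : ℚ) := by
            exact_mod_cast congrArg (Nat.cast : ℕ → ℚ) key
          have hc2n : (2 * k + 1).choose (2 * k) = 2 * k + 1 := by
            simp
          have hc2 : ((2 * k + 1).choose (2 * k) : ℚ) = 2 * (k : ℚ) + 1 := by
            rw [hc2n]; push_cast; ring
          have hk1 : ((k : ℚ) + 1) ≠ 0 := by positivity
          have BQ : (((2 * (k + 1)).choose (k + 1) : ℕ) : ℚ)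
              = 2 * (2 * (k : ℚ) + 1) * ((2 * k).choose k : ℚ) / ((k : ℚ) + 1) := by
            field_simp
            linarith [keyQ]
          unfold auxF
          rw [hc, hc2, BQ, pow_succ]
          have h4 : (4 : ℚ) ^ k ≠ 0 := by positivity
          push_cast
          field_simp
          ring
      · -- 2k + 2 ≤ m : main case, use factorials
        obtain ⟨j, rfl⟩ : ∃ j, m = 2 * k + 2 + j := ⟨m - (2 * k + 2), by omega⟩
        unfold auxF
        rw [Nat.cast_choose ℚ (show 2 * (k + 1) ≤ 2 * k + 2 + j + 1 by omega),
          Nat.cast_choose ℚ (show 2 * (k + 1) ≤ 2 * k + 2 + j by omega),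
          Nat.cast_choose ℚ (show 2 * k ≤ 2 * k + 2 + j by omega),
          Nat.cast_choose ℚ (show k + 1 ≤ 2 * (k + 1) by omega),
          Nat.cast_choose ℚ (show k ≤ 2 * k by omega)]
        have e1 : 2 * k + 2 + j + 1 - 2 * (k + 1) = j + 1 := by omega
        have e2 : 2 * k + 2 + j - 2 * (k + 1) = j := by omega
        have e3 : 2 * k + 2 + j - 2 * k = j + 2 := by omega
        have e4 : 2 * (k + 1) - (k + 1) = k + 1 := by omega
        have e5 : 2 * k - k = k := by omega
        rw [e1, e2, e3, e4, e5]
        have f1 : Nat.factorial (2 * k + 2 + j + 1)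
            = (2 * k + 2 + j + 1) * Nat.factorial (2 * k + 2 + j) := Nat.factorial_succ _
        have f2 : Nat.factorial (j + 2) = (j + 2) * (j + 1) * Nat.factorial j := by
          rw [show j + 2 = (j + 1) + 1 by ring, Nat.factorial_succ, Nat.factorial_succ]; ring
        have f3 : Nat.factorial (j + 1) = (j + 1) * Nat.factorial j := Nat.factorial_succ j
        have f4 : Nat.factorial (2 * (k + 1))
            = (2 * k + 2) * ((2 * k + 1) * Nat.factorial (2 * k)) := by
          rw [show 2 * (k + 1) = (2 * k + 1) + 1 by ring, Nat.factorial_succ, Nat.factorial_succ]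
        have f5 : Nat.factorial (k + 1) = (k + 1) * Nat.factorial k := Nat.factorial_succ k
        rw [f1, f2, f3, f4, f5]
        have hk : ((Nat.factorial k : ℚ)) ≠ 0 := by exact_mod_cast (Nat.factorial_pos k).ne'
        have hj : ((Nat.factorial j : ℚ)) ≠ 0 := by exact_mod_cast (Nat.factorial_pos j).ne'
        have h2k : ((Nat.factorial (2 * k) : ℚ)) ≠ 0 := by
          exact_mod_cast (Nat.factorial_pos (2 * k)).ne'
        have hm : ((Nat.factorial (2 * k + 2 + j) : ℚ)) ≠ 0 := by
          exact_mod_cast (Nat.factorial_pos (2 * k + 2 + j)).ne'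
        have h4 : (4 : ℚ) ^ (k + 1) ≠ 0 := by positivity
        push_cast
        field_simp
        ring

/-- The closed form for `S m = ∑_{k≤m} C(m,2k) C(2k,k)/4^k`. -/
lemma auxS : ∀ m : ℕ, ∑ k ∈ Finset.range (m + 1), auxF m k = ((2 * m).choose m : ℚ) / 2 ^ m := by
  intro m
  induction m with
  | zero => simp [auxF]
  | succ m ih =>
    have tele := Finset.sum_range_sub (auxG m) (m + 2)
    have hGtop : auxG m (m + 2) = 0 := by
      show (2 * ((m + 1 : ℕ) : ℚ) - m) * auxF m (m + 1) = 0
      rw [auxF_of_lt (by omega)]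
      ring
    rw [hGtop] at tele ; simp only [auxG, sub_zero] at tele
    have tele2 : ∑ k ∈ Finset.range (m + 2),
        ((m + 1 : ℚ) * auxF (m + 1) k - (2 * m + 1 : ℚ) * auxF m k) = 0 := by
      rw [Finset.sum_congr rfl fun k _ => auxWZ m k]
      rw [Finset.sum_range_sub, hGtop]; simp [auxG]
    rw [Finset.sum_sub_distrib, ← Finset.mul_sum, ← Finset.mul_sum, sub_eq_zero] at tele2
    have hlast : ∑ k ∈ Finset.range (m + 2), auxF m k
        = ∑ k ∈ Finset.range (m + 1), auxF m k := by
      rw [Finset.sum_range_succ, auxF_of_lt (by omega), add_zero]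
    rw [hlast, ih] at tele2
    -- tele2 : (m+1) * S(m+1) = (2m+1) * (C(2m,m)/2^m)
    have key : ((m : ℚ) + 1) * ((2 * (m + 1)).choose (m + 1) : ℚ)
        = 2 * (2 * (m : ℚ) + 1) * ((2 * m).choose m : ℚ) := by
      have h := Nat.succ_mul_centralBinom_succ m
      have h2 : (m + 1) * ((2 * (m + 1)).choose (m + 1))
          = 2 * (2 * m + 1) * ((2 * m).choose m) := by
        simpa [Nat.centralBinom_eq_two_mul_choose] using h
      exact_mod_cast congrArg (Nat.cast : ℕ → ℚ) h2
    have hm1 : ((m : ℚ) + 1) ≠ 0 := by positivity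
    have hp : (2 : ℚ) ^ m ≠ 0 := by positivity
    have hp1 : (2 : ℚ) ^ (m + 1) ≠ 0 := by positivity
    have goal : ((m : ℚ) + 1) * (∑ k ∈ Finset.range (m + 2), auxF (m + 1) k)
        = ((m : ℚ) + 1) * (((2 * (m + 1)).choose (m + 1) : ℚ) / 2 ^ (m + 1)) := by
      rw [tele2]
      rw [pow_succ]
      field_simp
      linear_combination (-1 : ℚ) * key
    exact mul_left_cancel₀ hm1 goal

/-- For every `n ≥ 0`, `∑_{k=0}^n C(2n+1,k) C(2n+1-k,k) / 4^k = C(4n+1,2n+1) / 4^n`. -/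
theorem sum_choose_odd_div_four_pow (n : ℕ) :
    ∑ k ∈ Finset.range (n + 1),
        ((2 * n + 1).choose k : ℚ) * ((2 * n + 1 - k).choose k : ℚ) / 4 ^ k =
      ((4 * n + 1).choose (2 * n + 1) : ℚ) / 4 ^ n := by
  have hterm : ∀ k, ((2 * n + 1).choose k : ℚ) * ((2 * n + 1 - k).choose k : ℚ) / 4 ^ k
      = auxF (2 * n + 1) k := by
    intro k
    rcases Nat.lt_or_ge n k with h | h
    · -- k ≥ n+1 : both sides vanish
      rw [auxF_of_lt (by omega)]
      rw [Nat.choose_eq_zero_of_lt (by omega : 2 * n + 1 - k < k)]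
      simp
    · -- k ≤ n : trinomial revision
      have h2 := Nat.choose_mul (n := 2 * n + 1) (k := 2 * k) (show k ≤ 2 * k by omega)
      rw [show 2 * k - k = k by omega] at h2
      unfold auxF
      rw [← Nat.cast_mul, ← Nat.cast_mul, h2]
  have hext : ∑ k ∈ Finset.range (n + 1),
        ((2 * n + 1).choose k : ℚ) * ((2 * n + 1 - k).choose k : ℚ) / 4 ^ k
      = ∑ k ∈ Finset.range (2 * n + 2), auxF (2 * n + 1) k := by
    rw [Finset.sum_congr rfl fun k _ => hterm k]
    apply Finset.sum_subset
    · intro x hx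
      simp only [Finset.mem_range] at *
      omega
    · intro x _ hx
      simp only [Finset.mem_range] at hx
      exact auxF_of_lt (by omega)
  rw [hext, auxS (2 * n + 1)]
  -- C(4n+2, 2n+1)/2^(2n+1) = C(4n+1, 2n+1)/4^n
  have hch : (2 * (2 * n + 1)).choose (2 * n + 1) = 2 * ((4 * n + 1).choose (2 * n + 1)) := by
    have hp : (2 * (2 * n + 1)) = (4 * n + 1) + 1 := by ring
    rw [hp, show 2 * n + 1 = (2 * n) + 1 from rfl, Nat.choose_succ_succ]
    have hsym := Nat.choose_symm (show 2 * n + 1 ≤ 4 * n + 1 by omega)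
    rw [show 4 * n + 1 - (2 * n + 1) = 2 * n by omega] at hsym
    simp only [Nat.succ_eq_add_one] at *
    omega
  rw [hch]
  have h4 : (4 : ℚ) ^ n = 2 ^ (2 * n) := by
    rw [show (4 : ℚ) = 2 ^ 2 by norm_num, ← pow_mul]
  rw [h4, show 2 * n + 1 = 2 * n + 1 from rfl]
  push_cast
  rw [pow_succ]
  have : (2 : ℚ) ^ (2 * n) ≠ 0 := by positivity
  field_simp
end

section
/- For every nonnegative integer n, sum_{k=0}^{n} C(2n, k) * C(2n-k, k) * H_k / 4^k = (C(4n, 2n) / 4^n) * (3*H_{2n} - 2*H_{4n}), as an identity of rational numbers. -/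
open Finset

/-- `(2k+1)(2k+2) C(2n+2,2k+2) = (2n+1)(2n+2) C(2n,2k)` in ℚ. -/
lemma R1 (n k : ℕ) : ((2*k+1 : ℚ))*(2*k+2) * ((2*n+2).choose (2*k+2) : ℚ)
    = (2*n+1)*(2*n+2) * ((2*n).choose (2*k) : ℚ) := by
  have h1' : ((2*n+2 : ℚ)) * ((2*n+1).choose (2*k+1) : ℚ) = ((2*n+2).choose (2*k+2) : ℚ) * (2*k+2) := by
    exact_mod_cast congrArg (Nat.cast : ℕ → ℚ) (Nat.add_one_mul_choose_eq (2*n+1) (2*k+1))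
  have h2' : ((2*n+1 : ℚ)) * ((2*n).choose (2*k) : ℚ) = ((2*n+1).choose (2*k+1) : ℚ) * (2*k+1) := by
    exact_mod_cast congrArg (Nat.cast : ℕ → ℚ) (Nat.add_one_mul_choose_eq (2*n) (2*k))
  linear_combination (-(2*(k:ℚ)+1)) * h1' + (-(2*(n:ℚ)+2)) * h2'

/-- `(k+1)^2 C(2k+2,k+1) = (2k+1)(2k+2) C(2k,k)` in ℚ. -/
lemma R3 (k : ℕ) : ((k:ℚ)+1)^2 * ((2*k+2).choose (k+1) : ℚ)
    = (2*k+1)*(2*k+2) * ((2*k).choose k : ℚ) := by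
  have h2 : (2*k+1) * (2*k).choose k = (2*k+1).choose (k+1) * (k+1) :=
    Nat.add_one_mul_choose_eq (2*k) k
  rw [Nat.choose_symm_half k] at h2
  have h1' : ((2*k+2 : ℚ)) * ((2*k+1).choose k : ℚ) = ((2*k+2).choose (k+1) : ℚ) * (k+1) := by
    exact_mod_cast congrArg (Nat.cast : ℕ → ℚ) (Nat.add_one_mul_choose_eq (2*k+1) k)
  have h2' : ((2*k+1 : ℚ)) * ((2*k).choose k : ℚ) = ((2*k+1).choose k : ℚ) * (k+1) := by
    exact_mod_cast congrArg (Nat.cast : ℕ → ℚ) h2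
  linear_combination (-((k:ℚ)+1)) * h1' + (-(2*(k:ℚ)+2)) * h2'

/-- `((2n+2)-2k)((2n+1)-2k) C(2n+2,2k) = (2n+1)(2n+2) C(2n,2k)` in ℚ (true subtraction). -/
lemma R2 (n k : ℕ) : ((2*n+2 : ℚ) - 2*k)*((2*n+1 : ℚ) - 2*k) * ((2*n+2).choose (2*k) : ℚ)
    = (2*n+1)*(2*n+2) * ((2*n).choose (2*k) : ℚ) := by
  rcases lt_trichotomy k (n+1) with hk | hk | hk
  · -- k ≤ n
    have hk' : k ≤ n := by omega
    have e1 : (2*n+2).choose (2*k+1) * (2*k+1) = (2*n+2).choose (2*k) * (2*n+2 - 2*k) :=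
      Nat.choose_succ_right_eq (2*n+2) (2*k)
    have e2 : (2*n+2).choose (2*k+2) * (2*k+2) = (2*n+2).choose (2*k+1) * (2*n+2 - (2*k+1)) :=
      Nat.choose_succ_right_eq (2*n+2) (2*k+1)
    have c1 : ((2*n+2).choose (2*k+1) : ℚ) * (2*k+1) = ((2*n+2).choose (2*k) : ℚ) * ((2*n+2 : ℚ) - 2*k) := by
      have hsub : ((2*n+2 - 2*k : ℕ) : ℚ) = (2*n+2 : ℚ) - 2*k := by
        rw [Nat.cast_sub (by omega : 2*k ≤ 2*n+2)]; push_cast; ring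
      have h : ((2*n+2).choose (2*k+1) : ℚ) * (2*k+1) = ((2*n+2).choose (2*k) : ℚ) * ((2*n+2 - 2*k : ℕ) : ℚ) := by
        exact_mod_cast congrArg (Nat.cast : ℕ → ℚ) e1
      rw [hsub] at h; exact h
    have c2 : ((2*n+2).choose (2*k+2) : ℚ) * (2*k+2) = ((2*n+2).choose (2*k+1) : ℚ) * ((2*n+1 : ℚ) - 2*k) := by
      have hsub : ((2*n+2 - (2*k+1) : ℕ) : ℚ) = (2*n+1 : ℚ) - 2*k := by
        rw [Nat.cast_sub (by omega : 2*k+1 ≤ 2*n+2)]; push_cast; ring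
      have h : ((2*n+2).choose (2*k+2) : ℚ) * (2*k+2) = ((2*n+2).choose (2*k+1) : ℚ) * ((2*n+2 - (2*k+1) : ℕ) : ℚ) := by
        exact_mod_cast congrArg (Nat.cast : ℕ → ℚ) e2
      rw [hsub] at h; exact h
    have hr1 := R1 n k
    linear_combination (-((2*n+1:ℚ)-2*(k:ℚ))) * c1 + (-(2*(k:ℚ)+1)) * c2 + hr1
  · -- k = n+1
    subst hk
    have hz : (2*n).choose (2*(n+1)) = 0 := Nat.choose_eq_zero_of_lt (by omega)
    rw [hz]
    push_cast
    ring_nf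
  · -- k ≥ n+2
    have hz1 : (2*n).choose (2*k) = 0 := Nat.choose_eq_zero_of_lt (by omega)
    have hz2 : (2*n+2).choose (2*k) = 0 := Nat.choose_eq_zero_of_lt (by omega)
    rw [hz1, hz2]
    push_cast
    ring

noncomputable def gq (n j : ℕ) : ℚ :=
  (4*(j:ℚ)^2*(2*(j:ℚ)*(4*(n:ℚ)+3) - (12*(n:ℚ)^2+18*(n:ℚ)+7)))
    * (((2*n+2).choose (2*j) : ℚ) * ((2*j).choose j : ℚ)) / 4^j

lemma ID1 (n k : ℕ) :
    (2*(n:ℚ)+1)^2*(2*(n:ℚ)+2)^2 * (((2*n+2).choose (2*k) : ℚ) * ((2*k).choose k : ℚ) / 4^k)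
      - (4*(n:ℚ)+1)*(4*(n:ℚ)+3)*(2*(n:ℚ)+1)*(2*(n:ℚ)+2)
        * (((2*n).choose (2*k) : ℚ) * ((2*k).choose k : ℚ) / 4^k)
    = gq n (k+1) - gq n k := by
  have hA := R1 n k
  have hB := R3 k
  have hC := R2 n k
  have h4 : ((4:ℚ)^k) ≠ 0 := by positivity
  have E : 4*((2*(n:ℚ)+1)^2*(2*(n:ℚ)+2)^2) * (((2*n+2).choose (2*k) : ℚ) * ((2*k).choose k : ℚ))
      - 4*((4*(n:ℚ)+1)*(4*(n:ℚ)+3)*(2*(n:ℚ)+1)*(2*(n:ℚ)+2))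
          * (((2*n).choose (2*k) : ℚ) * ((2*k).choose k : ℚ))
      = (4*((k:ℚ)+1)^2*(2*((k:ℚ)+1)*(4*(n:ℚ)+3) - (12*(n:ℚ)^2+18*(n:ℚ)+7)))
          * (((2*n+2).choose (2*k+2) : ℚ) * ((2*k+2).choose (k+1) : ℚ))
        - 4*(4*(k:ℚ)^2*(2*(k:ℚ)*(4*(n:ℚ)+3) - (12*(n:ℚ)^2+18*(n:ℚ)+7)))
          * (((2*n+2).choose (2*k) : ℚ) * ((2*k).choose k : ℚ)) := by
    linear_combination (-4*(2*((k:ℚ)+1)*(4*(n:ℚ)+3) - (12*(n:ℚ)^2+18*(n:ℚ)+7)) * (((2*k).choose k : ℚ))) * hA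
      + (-4*(2*((k:ℚ)+1)*(4*(n:ℚ)+3) - (12*(n:ℚ)^2+18*(n:ℚ)+7)) * (((2*n+2).choose (2*k+2) : ℚ))) * hB
      + ((4*(4*(n:ℚ)+1)*(4*(n:ℚ)+3) + 4*(2*((k:ℚ)+1)*(4*(n:ℚ)+3) - (12*(n:ℚ)^2+18*(n:ℚ)+7))) * (((2*k).choose k : ℚ))) * hC
  simp only [gq, show 2*(k+1) = 2*k+2 from by ring]
  rw [pow_succ]
  push_cast
  linear_combination (((4:ℚ)^k)⁻¹ * (4:ℚ)⁻¹) * E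

noncomputable def wqf (n j : ℕ) : ℚ :=
  ((j:ℚ)*(-16*(j:ℚ)^2*(12*(n:ℚ)^2+18*(n:ℚ)+7) + 8*(j:ℚ)*(48*(n:ℚ)^3+108*(n:ℚ)^2+82*(n:ℚ)+21)
      - 8*(24*(n:ℚ)^4+72*(n:ℚ)^3+80*(n:ℚ)^2+39*(n:ℚ)+7)))
    * (((2*n+2).choose (2*j) : ℚ) * ((2*j).choose j : ℚ)) / 4^j

noncomputable def hqf (n k : ℕ) : ℚ :=
  (4*((k:ℚ)+1)*(2*((k:ℚ)+1)*(4*(n:ℚ)+3) - (12*(n:ℚ)^2+18*(n:ℚ)+7)))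
    * (((2*n+2).choose (2*k+2) : ℚ) * ((2*k+2).choose (k+1) : ℚ)) / 4^(k+1)

lemma gq_div (n k : ℕ) : gq n (k+1) * ((k:ℚ)+1)⁻¹ = hqf n k := by
  have hk1 : ((k:ℚ)+1) ≠ 0 := by positivity
  rw [inv_eq_one_div, mul_one_div, div_eq_iff hk1]
  simp only [gq, hqf, show 2*(k+1) = 2*k+2 from by ring]
  push_cast
  ring

lemma ID2 (n k : ℕ) :
    (2*(n:ℚ)+1)*(2*(n:ℚ)+2) * (hqf n k
      + (64*(n:ℚ)^3+96*(n:ℚ)^2+40*(n:ℚ)+2)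
        * (((2*n).choose (2*k) : ℚ) * ((2*k).choose k : ℚ) / 4^k))
    = wqf n (k+1) - wqf n k := by
  have hA := R1 n k
  have hB := R3 k
  have hC := R2 n k
  have h4 : ((4:ℚ)^k) ≠ 0 := by positivity
  have E2 : (2*(n:ℚ)+1)*(2*(n:ℚ)+2) * ((4*((k:ℚ)+1)*(2*((k:ℚ)+1)*(4*(n:ℚ)+3) - (12*(n:ℚ)^2+18*(n:ℚ)+7)))
        * (((2*n+2).choose (2*k+2) : ℚ) * ((2*k+2).choose (k+1) : ℚ))
      + 4*(64*(n:ℚ)^3+96*(n:ℚ)^2+40*(n:ℚ)+2)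
        * (((2*n).choose (2*k) : ℚ) * ((2*k).choose k : ℚ)))
      = (((k:ℚ)+1)*(-16*((k:ℚ)+1)^2*(12*(n:ℚ)^2+18*(n:ℚ)+7) + 8*((k:ℚ)+1)*(48*(n:ℚ)^3+108*(n:ℚ)^2+82*(n:ℚ)+21)
          - 8*(24*(n:ℚ)^4+72*(n:ℚ)^3+80*(n:ℚ)^2+39*(n:ℚ)+7)))
          * (((2*n+2).choose (2*k+2) : ℚ) * ((2*k+2).choose (k+1) : ℚ))
        - 4*((k:ℚ)*(-16*(k:ℚ)^2*(12*(n:ℚ)^2+18*(n:ℚ)+7) + 8*(k:ℚ)*(48*(n:ℚ)^3+108*(n:ℚ)^2+82*(n:ℚ)+21)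
          - 8*(24*(n:ℚ)^4+72*(n:ℚ)^3+80*(n:ℚ)^2+39*(n:ℚ)+7)))
          * (((2*n+2).choose (2*k) : ℚ) * ((2*k).choose k : ℚ)) := by
    linear_combination ((-8 + 112*(k:ℚ) - 160*(n:ℚ) + 288*(n:ℚ)*(k:ℚ) - 384*(n:ℚ)^2 + 192*(n:ℚ)^2*(k:ℚ) - 256*(n:ℚ)^3) * ((2*k).choose k : ℚ)) * hA
      + ((-8 + 112*(k:ℚ) - 160*(n:ℚ) + 288*(n:ℚ)*(k:ℚ) - 384*(n:ℚ)^2 + 192*(n:ℚ)^2*(k:ℚ) - 256*(n:ℚ)^3) * ((2*n+2).choose (2*k+2) : ℚ)) * hB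
      + ((-16*(k:ℚ)*(12*(n:ℚ)^2+18*(n:ℚ)+7)) * ((2*k).choose k : ℚ)) * hC
  simp only [wqf, hqf, show 2*(k+1) = 2*k+2 from by ring]
  rw [pow_succ]
  push_cast
  linear_combination (((4:ℚ)^k)⁻¹ * (4:ℚ)⁻¹) * E2

lemma gq_zero (n : ℕ) : gq n 0 = 0 := by simp [gq]

lemma gq_top (n : ℕ) : gq n (n+2) = 0 := by
  have : (2*n+2).choose (2*(n+2)) = 0 := Nat.choose_eq_zero_of_lt (by omega)
  simp [gq, this]

lemma wqf_zero (n : ℕ) : wqf n 0 = 0 := by simp [wqf]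

lemma wqf_top (n : ℕ) : wqf n (n+2) = 0 := by
  have : (2*n+2).choose (2*(n+2)) = 0 := Nat.choose_eq_zero_of_lt (by omega)
  simp [wqf, this]

/-- Summed ID1. -/
lemma step1 (n m : ℕ) :
    (2*(n:ℚ)+1)^2*(2*(n:ℚ)+2)^2
        * ∑ k ∈ Finset.range m, ((2*n+2).choose (2*k) : ℚ) * ((2*k).choose k : ℚ) / 4^k
      - (4*(n:ℚ)+1)*(4*(n:ℚ)+3)*(2*(n:ℚ)+1)*(2*(n:ℚ)+2)
        * ∑ k ∈ Finset.range m, ((2*n).choose (2*k) : ℚ) * ((2*k).choose k : ℚ) / 4^k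
    = gq n m - gq n 0 := by
  rw [Finset.mul_sum, Finset.mul_sum, ← Finset.sum_sub_distrib, ← Finset.sum_range_sub (gq n)]
  exact Finset.sum_congr rfl fun k _ => ID1 n k

/-- Summed ID1 with harmonic weights (Abel summation). -/
lemma step2 (n m : ℕ) :
    (2*(n:ℚ)+1)^2*(2*(n:ℚ)+2)^2
        * ∑ k ∈ Finset.range m, ((2*n+2).choose (2*k) : ℚ) * ((2*k).choose k : ℚ) / 4^k * harmonic k
      - (4*(n:ℚ)+1)*(4*(n:ℚ)+3)*(2*(n:ℚ)+1)*(2*(n:ℚ)+2)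
        * ∑ k ∈ Finset.range m, ((2*n).choose (2*k) : ℚ) * ((2*k).choose k : ℚ) / 4^k * harmonic k
    = (gq n m * harmonic m - gq n 0 * harmonic 0) - ∑ k ∈ Finset.range m, hqf n k := by
  have habel : ∑ k ∈ Finset.range m, (gq n (k+1) - gq n k) * harmonic k
      = (gq n m * harmonic m - gq n 0 * harmonic 0) - ∑ k ∈ Finset.range m, hqf n k := by
    rw [← Finset.sum_range_sub (fun i => gq n i * harmonic i) m, ← Finset.sum_sub_distrib]
    refine Finset.sum_congr rfl fun k _ => ?_
    rw [← gq_div n k, harmonic_succ]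
    push_cast
    ring
  rw [← habel, Finset.mul_sum, Finset.mul_sum, ← Finset.sum_sub_distrib]
  refine Finset.sum_congr rfl fun k _ => ?_
  have h := ID1 n k
  calc (2*(n:ℚ)+1)^2*(2*(n:ℚ)+2)^2 * (((2*n+2).choose (2*k) : ℚ) * ((2*k).choose k : ℚ) / 4^k * harmonic k)
      - (4*(n:ℚ)+1)*(4*(n:ℚ)+3)*(2*(n:ℚ)+1)*(2*(n:ℚ)+2)
        * (((2*n).choose (2*k) : ℚ) * ((2*k).choose k : ℚ) / 4^k * harmonic k)
      = ((2*(n:ℚ)+1)^2*(2*(n:ℚ)+2)^2 * (((2*n+2).choose (2*k) : ℚ) * ((2*k).choose k : ℚ) / 4^k)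
          - (4*(n:ℚ)+1)*(4*(n:ℚ)+3)*(2*(n:ℚ)+1)*(2*(n:ℚ)+2)
            * (((2*n).choose (2*k) : ℚ) * ((2*k).choose k : ℚ) / 4^k)) * harmonic k := by ring
    _ = (gq n (k+1) - gq n k) * harmonic k := by rw [h]

/-- Summed ID2. -/
lemma step3 (n m : ℕ) :
    (2*(n:ℚ)+1)*(2*(n:ℚ)+2) * ∑ k ∈ Finset.range m, hqf n k
      + (2*(n:ℚ)+1)*(2*(n:ℚ)+2)*(64*(n:ℚ)^3+96*(n:ℚ)^2+40*(n:ℚ)+2)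
        * ∑ k ∈ Finset.range m, ((2*n).choose (2*k) : ℚ) * ((2*k).choose k : ℚ) / 4^k
    = wqf n m - wqf n 0 := by
  rw [Finset.mul_sum, Finset.mul_sum, ← Finset.sum_add_distrib, ← Finset.sum_range_sub (wqf n)]
  refine Finset.sum_congr rfl fun k _ => ?_
  have h := ID2 n k
  calc (2*(n:ℚ)+1)*(2*(n:ℚ)+2) * hqf n k
      + (2*(n:ℚ)+1)*(2*(n:ℚ)+2)*(64*(n:ℚ)^3+96*(n:ℚ)^2+40*(n:ℚ)+2)
        * (((2*n).choose (2*k) : ℚ) * ((2*k).choose k : ℚ) / 4^k)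
      = (2*(n:ℚ)+1)*(2*(n:ℚ)+2) * (hqf n k
          + (64*(n:ℚ)^3+96*(n:ℚ)^2+40*(n:ℚ)+2)
            * (((2*n).choose (2*k) : ℚ) * ((2*k).choose k : ℚ) / 4^k)) := by ring
    _ = wqf n (k+1) - wqf n k := by rw [h]

/-- binomial ratio for central-type coefficients. -/
lemma hCC (n : ℕ) : (2*(n:ℚ)+1)*(2*(n:ℚ)+2) * ((4*n+4).choose (2*n+2) : ℚ)
    = 4*(4*(n:ℚ)+1)*(4*(n:ℚ)+3) * ((4*n).choose (2*n) : ℚ) := by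
  have d1 : ((4*n+4 : ℚ)) * ((4*n+3).choose (2*n+1) : ℚ) = ((4*n+4).choose (2*n+2) : ℚ) * (2*n+2) := by
    exact_mod_cast congrArg (Nat.cast : ℕ → ℚ) (Nat.add_one_mul_choose_eq (4*n+3) (2*n+1))
  have d2 : ((4*n+3 : ℚ)) * ((4*n+2).choose (2*n) : ℚ) = ((4*n+3).choose (2*n+1) : ℚ) * (2*n+1) := by
    exact_mod_cast congrArg (Nat.cast : ℕ → ℚ) (Nat.add_one_mul_choose_eq (4*n+2) (2*n))
  have d3' : (4*n+2).choose (2*n+1) * (2*n+1) = (4*n+2).choose (2*n) * (4*n+2 - 2*n) :=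
    Nat.choose_succ_right_eq (4*n+2) (2*n)
  have hsub : 4*n+2 - 2*n = 2*n+2 := by omega
  rw [hsub] at d3'
  have d3 : ((4*n+2).choose (2*n+1) : ℚ) * (2*n+1) = ((4*n+2).choose (2*n) : ℚ) * (2*n+2) := by
    exact_mod_cast congrArg (Nat.cast : ℕ → ℚ) d3'
  have d4 : ((4*n+2 : ℚ)) * ((4*n+1).choose (2*n) : ℚ) = ((4*n+2).choose (2*n+1) : ℚ) * (2*n+1) := by
    exact_mod_cast congrArg (Nat.cast : ℕ → ℚ) (Nat.add_one_mul_choose_eq (4*n+1) (2*n))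
  have d5' : (2*(2*n)+1).choose (2*n+1) = (2*(2*n)+1).choose (2*n) := Nat.choose_symm_half (2*n)
  have hidx : 2*(2*n)+1 = 4*n+1 := by ring
  rw [hidx] at d5'
  have d6' : (4*n+1) * (4*n).choose (2*n) = (4*n+1).choose (2*n+1) * (2*n+1) :=
    Nat.add_one_mul_choose_eq (4*n) (2*n)
  rw [d5'] at d6'
  have d6 : ((4*n+1 : ℚ)) * ((4*n).choose (2*n) : ℚ) = ((4*n+1).choose (2*n) : ℚ) * (2*n+1) := by
    exact_mod_cast congrArg (Nat.cast : ℕ → ℚ) d6'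
  linear_combination (-(2*(n:ℚ)+1)) * d1 + (-(4*(n:ℚ)+4)) * d2 + (-2*(4*(n:ℚ)+3)) * d3
    + (-2*(4*(n:ℚ)+3)) * d4 + (-4*(4*(n:ℚ)+3)) * d6

lemma hq_id (n : ℕ) :
    (3*((2*(n:ℚ)+1)⁻¹ + (2*(n:ℚ)+2)⁻¹)
        - 2*((4*(n:ℚ)+1)⁻¹ + (4*(n:ℚ)+2)⁻¹ + (4*(n:ℚ)+3)⁻¹ + (4*(n:ℚ)+4)⁻¹))
      * ((4*(n:ℚ)+1)*(4*(n:ℚ)+3)*(2*(n:ℚ)+1)*(2*(n:ℚ)+2))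
    = 64*(n:ℚ)^3+96*(n:ℚ)^2+40*(n:ℚ)+2 := by
  have h1 : (2*(n:ℚ)+1) ≠ 0 := by positivity
  have h2 : (2*(n:ℚ)+2) ≠ 0 := by positivity
  have h3 : (4*(n:ℚ)+1) ≠ 0 := by positivity
  have h4 : (4*(n:ℚ)+2) ≠ 0 := by positivity
  have h5 : (4*(n:ℚ)+3) ≠ 0 := by positivity
  have h6 : (4*(n:ℚ)+4) ≠ 0 := by positivity
  field_simp
  ring

lemma AB (n : ℕ) :
    (∑ k ∈ Finset.range (n+1), ((2*n).choose (2*k) : ℚ) * ((2*k).choose k : ℚ) / 4^k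
        = ((4*n).choose (2*n) : ℚ) / 4^n)
    ∧ (∑ k ∈ Finset.range (n+1), ((2*n).choose (2*k) : ℚ) * ((2*k).choose k : ℚ) / 4^k * harmonic k
        = ((4*n).choose (2*n) : ℚ) / 4^n * (3*harmonic (2*n) - 2*harmonic (4*n))) := by
  induction n with
  | zero => constructor <;> norm_num
  | succ n ih =>
    obtain ⟨hA0, hB0⟩ := ih
    have hUtop : ((2*n).choose (2*(n+1)) : ℚ) = 0 := by
      rw [Nat.choose_eq_zero_of_lt (by omega)]; norm_num
    have hA0' : ∑ k ∈ Finset.range (n+2), ((2*n).choose (2*k) : ℚ) * ((2*k).choose k : ℚ) / 4^k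
        = ((4*n).choose (2*n) : ℚ) / 4^n := by
      rw [show n+2 = n+1+1 from rfl, Finset.sum_range_succ, hA0, hUtop]
      simp
    have hB0' : ∑ k ∈ Finset.range (n+2), ((2*n).choose (2*k) : ℚ) * ((2*k).choose k : ℚ) / 4^k * harmonic k
        = ((4*n).choose (2*n) : ℚ) / 4^n * (3*harmonic (2*n) - 2*harmonic (4*n)) := by
      rw [show n+2 = n+1+1 from rfl, Finset.sum_range_succ, hB0, hUtop]
      simp
    have s1 := step1 n (n+2)
    rw [gq_top, gq_zero, sub_zero, hA0'] at s1
    have s2 := step2 n (n+2)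
    rw [gq_top, gq_zero, hB0'] at s2
    rw [zero_mul, zero_mul, sub_zero, zero_sub] at s2
    have s3 := step3 n (n+2)
    rw [wqf_top, wqf_zero, sub_zero, hA0'] at s3
    have hcc := hCC n
    have hqi := hq_id n
    have hN : ((2*(n:ℚ)+1)*(2*(n:ℚ)+2)) ≠ 0 := by positivity
    constructor
    · -- A part
      rw [show n+1+1 = n+2 from rfl]
      simp only [show 2*(n+1) = 2*n+2 by ring, show 4*(n+1) = 4*n+4 by ring]
      rw [pow_succ]
      refine mul_left_cancel₀ (a := (2*(n:ℚ)+1)^2*(2*(n:ℚ)+2)^2) (by positivity) ?_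
      linear_combination s1 + (-(2*(n:ℚ)+1)*(2*(n:ℚ)+2)*((4:ℚ)^n)⁻¹*(4:ℚ)⁻¹) * hcc
    · -- B part
      rw [show n+1+1 = n+2 from rfl]
      simp only [show 2*(n+1) = 2*n+2 by ring, show 4*(n+1) = 4*n+4 by ring]
      rw [show (2*n+2) = 2*n+1+1 by omega, harmonic_succ, harmonic_succ]
      rw [show (4*n+4) = 4*n+3+1 by omega, harmonic_succ,
          show (4*n+3) = 4*n+2+1 by omega, harmonic_succ,
          show (4*n+2) = 4*n+1+1 by omega, harmonic_succ,
          show (4*n+1) = 4*n+1 by omega, harmonic_succ]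
      rw [pow_succ]
      push_cast
      refine mul_left_cancel₀ (a := ((2*(n:ℚ)+1)*(2*(n:ℚ)+2))^3) (by positivity) ?_
      linear_combination ((2*(n:ℚ)+1)*(2*(n:ℚ)+2)) * s2 - s3
        + (-((2*(n:ℚ)+1)*(2*(n:ℚ)+2))^2*((4:ℚ)^n)⁻¹*(4:ℚ)⁻¹
            * (3*(harmonic (2*n) + (2*(n:ℚ)+1)⁻¹ + (2*(n:ℚ)+2)⁻¹)
               - 2*(harmonic (4*n) + (4*(n:ℚ)+1)⁻¹ + (4*(n:ℚ)+2)⁻¹ + (4*(n:ℚ)+3)⁻¹ + (4*(n:ℚ)+4)⁻¹))) * hcc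
        + (-(2*(n:ℚ)+1)*(2*(n:ℚ)+2)*((4*n).choose (2*n) : ℚ)*((4:ℚ)^n)⁻¹) * hqi

/-- For every `n ≥ 0`,
`∑_{k=0}^n C(2n,k) C(2n-k,k) H_k / 4^k = (C(4n,2n)/4^n)(3H_{2n} - 2H_{4n})`. -/
theorem sum_choose_harmonic_div_four_pow (n : ℕ) :
    ∑ k ∈ Finset.range (n + 1),
        ((2 * n).choose k : ℚ) * ((2 * n - k).choose k : ℚ) * harmonic k / 4 ^ k =
      ((4 * n).choose (2 * n) : ℚ) / 4 ^ n * (3 * harmonic (2 * n) - 2 * harmonic (4 * n)) := by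
  have h := (AB n).2
  rw [← h]
  refine Finset.sum_congr rfl fun k hk => ?_
  have hk' : k ≤ n := by simpa [Nat.lt_succ_iff] using hk
  have hc : (2*n).choose (2*k) * (2*k).choose k = (2*n).choose k * (2*n-k).choose k := by
    have h2 := Nat.choose_mul (n := 2*n) (show k ≤ 2*k by omega)
    rw [show 2*k-k = k by omega] at h2
    exact h2
  have hc' : ((2*n).choose (2*k) : ℚ) * ((2*k).choose k : ℚ)
      = ((2*n).choose k : ℚ) * ((2*n-k).choose k : ℚ) := by exact_mod_cast congrArg (Nat.cast : ℕ → ℚ) hc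
  rw [← hc']
  ring
end

section
/- For every nonnegative integer n, sum_{k=0}^{n} C(2n+1, k) * C(2n+1-k, k) * H_k / 4^k = (C(4n+1, 2n+1) / 4^n) * (3*H_{2n+1} - 2*H_{4n+2}), as an identity of rational numbers. -/
open Finset

/-! Auxiliary definitions for the WZ-style proof. -/

def Wq (n k : ℕ) : ℚ :=
  ((2 * n + 1).factorial : ℚ) /
    (((2 * (n + 1 - k) + 1).factorial : ℚ) * ((k.factorial : ℚ)) ^ 2 * 4 ^ k)

def qQ (n k : ℕ) : ℚ :=
  4 * (k : ℚ) * (12 * (n : ℚ) ^ 2 + 30 * n + 19 - 2 * (4 * (n : ℚ) + 5) * k)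

def NbQ (n : ℕ) : ℚ := 32 * (n : ℚ) ^ 3 + 96 * (n : ℚ) ^ 2 + 92 * n + 27

def rhoQ (n : ℕ) : ℚ :=
  NbQ (n + 1) * ((n : ℚ) + 1) * (4 * n + 3) * (4 * n + 5) /
    (NbQ n * ((n : ℚ) + 2) * (2 * n + 5) * (2 * n + 2))

def c2Q (n : ℕ) : ℚ :=
  -1282408 - 5579392*(n:ℚ) - 10298656*(n:ℚ)^2 - 10451712*(n:ℚ)^3 - 6296448*(n:ℚ)^4
    - 2251264*(n:ℚ)^5 - 442368*(n:ℚ)^6 - 36864*(n:ℚ)^7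

def c3Q (n : ℕ) : ℚ :=
  2278312 + 9293056*(n:ℚ) + 16009760*(n:ℚ)^2 + 15087872*(n:ℚ)^3 + 8391552*(n:ℚ)^4
    + 2750976*(n:ℚ)^5 + 491520*(n:ℚ)^6 + 36864*(n:ℚ)^7

def c4Q (n : ℕ) : ℚ :=
  -1193504 - 4333824*(n:ℚ) - 6477568*(n:ℚ)^2 - 5102080*(n:ℚ)^3 - 2234368*(n:ℚ)^4
    - 516096*(n:ℚ)^5 - 49152*(n:ℚ)^6

def c5Q (n : ℕ) : ℚ :=
  197600 + 620160*(n:ℚ) + 766464*(n:ℚ)^2 + 465920*(n:ℚ)^3 + 139264*(n:ℚ)^4 + 16384*(n:ℚ)^5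

def Ec (n k : ℕ) : ℚ :=
  (k : ℚ) ^ 2 * (c2Q n + c3Q n * k + c4Q n * k ^ 2 + c5Q n * k ^ 3) /
    ((2 * (n : ℚ) + 5 - 2 * k) * (2 * (n : ℚ) + 4 - 2 * k) * NbQ n * ((n : ℚ) + 2) *
      (2 * (n : ℚ) + 5))

lemma NbQ_ne (n : ℕ) : NbQ n ≠ 0 := by unfold NbQ; positivity

lemma Ec_zero (n : ℕ) : Ec n 0 = 0 := by simp [Ec]

lemma factQ_ne (m : ℕ) : ((m.factorial : ℚ)) ≠ 0 := by
  exact_mod_cast (Nat.factorial_pos m).ne'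

lemma factQ_add_one (m : ℕ) : (((m + 1).factorial : ℚ)) = ((m : ℚ) + 1) * (m.factorial : ℚ) := by
  rw [Nat.factorial_succ]; push_cast; ring

lemma factQ_add_two (m : ℕ) :
    (((m + 2).factorial : ℚ)) = ((m : ℚ) + 2) * ((m : ℚ) + 1) * (m.factorial : ℚ) := by
  rw [show m + 2 = (m + 1) + 1 from rfl, factQ_add_one, factQ_add_one]; push_cast; ring

lemma Wq_ratio (j k : ℕ) :
    Wq (k + j) (k + 1) * (4 * ((k : ℚ) + 1) ^ 2) =
      ((2 * j + 3 : ℚ)) * ((2 * j + 2 : ℚ)) * Wq (k + j) k := by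
  unfold Wq
  rw [show k + j + 1 - k = j + 1 by omega, show k + j + 1 - (k + 1) = j by omega,
    show 2 * (j + 1) + 1 = (2 * j + 1) + 2 by ring, factQ_add_two (2 * j + 1),
    factQ_add_one k, pow_succ]
  push_cast
  field_simp
  ring

lemma Wq_level (j k : ℕ) :
    Wq (k + j + 1) k * ((2 * j + 5 : ℚ) * (2 * j + 4 : ℚ)) =
      (2 * ((k : ℚ) + j) + 2) * (2 * ((k : ℚ) + j) + 3) * Wq (k + j) k := by
  unfold Wq
  rw [show k + j + 1 + 1 - k = j + 2 by omega, show k + j + 1 - k = j + 1 by omega,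
    show 2 * (k + j + 1) + 1 = (2 * (k + j) + 1) + 2 by ring,
    show 2 * (j + 2) + 1 = (2 * (j + 1) + 1) + 2 by ring,
    factQ_add_two (2 * (k + j) + 1), factQ_add_two (2 * (j + 1) + 1)]
  push_cast
  field_simp
  ring

lemma chooseProd (j k : ℕ) :
    ((2 * (k + j) + 1).choose k : ℚ) * ((2 * (k + j) + 1 - k).choose k : ℚ) =
      ((2 * (k + j) + 1).factorial : ℚ) /
        (((2 * j + 1).factorial : ℚ) * ((k.factorial : ℚ)) ^ 2) := by
  have h1 : k ≤ 2 * (k + j) + 1 := by omega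
  have e1 : 2 * (k + j) + 1 - k = k + (2 * j + 1) := by omega
  have h2 : k ≤ k + (2 * j + 1) := by omega
  rw [Nat.cast_choose ℚ h1, e1, Nat.cast_choose ℚ h2,
    show k + (2 * j + 1) - k = 2 * j + 1 by omega]
  field_simp

/-- conversion of the summand of the original sum to `Wq` form -/
lemma term_eq (j k : ℕ) :
    ((2 * (k + j) + 1).choose k : ℚ) * ((2 * (k + j) + 1 - k).choose k : ℚ) / 4 ^ k =
      ((2 * j + 3 : ℚ)) * ((2 * j + 2 : ℚ)) * Wq (k + j) k := by
  rw [chooseProd]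
  unfold Wq
  rw [show k + j + 1 - k = j + 1 by omega,
    show 2 * (j + 1) + 1 = (2 * j + 1) + 2 by ring, factQ_add_two (2 * j + 1)]
  push_cast
  field_simp
  ring

/-- conversion of the summand at level `n+1` to `Wq` at level `n` -/
lemma term_eq2 (n k : ℕ) (h : k ≤ n + 1) :
    ((2 * n + 3).choose k : ℚ) * ((2 * n + 3 - k).choose k : ℚ) / 4 ^ k =
      (2 * (n : ℚ) + 2) * (2 * (n : ℚ) + 3) * Wq n k := by
  obtain ⟨j, hj⟩ : ∃ j, n + 1 = k + j := ⟨n + 1 - k, by omega⟩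
  have e1 : 2 * n + 3 = 2 * (k + j) + 1 := by omega
  rw [e1, chooseProd]
  unfold Wq
  rw [show n + 1 - k = j by omega,
    show 2 * (k + j) + 1 = (2 * n + 1) + 2 by omega, factQ_add_two (2 * n + 1)]
  push_cast
  field_simp
  ring

/-- the first WZ certificate identity -/
lemma C1 (j k : ℕ) :
    rhoQ (k + j) * (qQ (k + j) k * Wq (k + j) k) - qQ (k + j + 1) k * Wq (k + j + 1) k =
      Ec (k + j) (k + 1) * Wq (k + j) (k + 1) - Ec (k + j) k * Wq (k + j) k := by
  have h1 : Wq (k + j) (k + 1) = ((2 * j + 3 : ℚ)) * ((2 * j + 2 : ℚ)) * Wq (k + j) k /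
      (4 * ((k : ℚ) + 1) ^ 2) := by
    rw [← Wq_ratio j k]; field_simp
  have h2 : Wq (k + j + 1) k = (2 * ((k : ℚ) + j) + 2) * (2 * ((k : ℚ) + j) + 3) * Wq (k + j) k /
      ((2 * j + 5 : ℚ) * (2 * j + 4 : ℚ)) := by
    rw [← Wq_level j k]; field_simp
  have hnb : NbQ (k + j) ≠ 0 := NbQ_ne _
  have hnb' : NbQ (k + j + 1) ≠ 0 := NbQ_ne _
  rw [h1, h2]
  unfold rhoQ qQ Ec NbQ c2Q c3Q c4Q c5Q at *
  push_cast at *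
  have d1 : ((k:ℚ)+1) ≠ 0 := by positivity
  have d2 : (2*(j:ℚ)+5) ≠ 0 := by positivity
  have d3 : (2*(j:ℚ)+4) ≠ 0 := by positivity
  have d4 : (2*(j:ℚ)+3) ≠ 0 := by positivity
  have d5 : (2*(j:ℚ)+2) ≠ 0 := by positivity
  have d6 : ((k:ℚ)+(j:ℚ)+2) ≠ 0 := by positivity
  have d7 : (2*((k:ℚ)+(j:ℚ))+5) ≠ 0 := by positivity
  have d8 : (2*((k:ℚ)+(j:ℚ))+2) ≠ 0 := by positivity
  have e1 : (2*((k:ℚ)+(j:ℚ))+5-2*((k:ℚ)+1)) = 2*(j:ℚ)+3 := by ring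
  have e2 : (2*((k:ℚ)+(j:ℚ))+4-2*((k:ℚ)+1)) = 2*(j:ℚ)+2 := by ring
  have e3 : (2*((k:ℚ)+(j:ℚ))+5-2*(k:ℚ)) = 2*(j:ℚ)+5 := by ring
  have e4 : (2*((k:ℚ)+(j:ℚ))+4-2*(k:ℚ)) = 2*(j:ℚ)+4 := by ring
  rw [e1, e2, e3, e4]
  field_simp
  ring

lemma Wq_succ_top (n : ℕ) :
    Wq (n + 1) (n + 1) * 6 =
      (2 * (n : ℚ) + 3) * (2 * (n : ℚ) + 2) * Wq n (n + 1) := by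
  unfold Wq
  rw [show n + 1 + 1 - (n + 1) = 1 by omega, show n + 1 - (n + 1) = 0 by omega,
    show 2 * (n + 1) + 1 = (2 * n + 1) + 2 by ring, factQ_add_two]
  norm_num [Nat.factorial]
  field_simp
  ring

lemma Wq_succ_top2 (n : ℕ) :
    Wq (n + 1) (n + 2) * (4 * ((n : ℚ) + 2) ^ 2) =
      (2 * (n : ℚ) + 3) * (2 * (n : ℚ) + 2) * Wq n (n + 1) := by
  unfold Wq
  rw [show n + 1 + 1 - (n + 2) = 0 by omega, show n + 1 - (n + 1) = 0 by omega,
    show 2 * (n + 1) + 1 = (2 * n + 1) + 2 by ring, factQ_add_two,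
    show n + 2 = (n + 1) + 1 by ring, factQ_add_one (n + 1), pow_succ (4:ℚ) (n+1)]
  norm_num [Nat.factorial]
  field_simp
  ring

/-- boundary identity for the certificate telescoping -/
lemma C2 (n : ℕ) :
    rhoQ n * (qQ n (n + 1) * Wq n (n + 1)) - qQ (n + 1) (n + 1) * Wq (n + 1) (n + 1) -
        qQ (n + 1) (n + 2) * Wq (n + 1) (n + 2) + Ec n (n + 1) * Wq n (n + 1) = 0 := by
  have h1 : Wq (n + 1) (n + 1) = (2 * (n : ℚ) + 3) * (2 * (n : ℚ) + 2) * Wq n (n + 1) / 6 := by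
    rw [← Wq_succ_top n]; ring
  have h2 : Wq (n + 1) (n + 2) =
      (2 * (n : ℚ) + 3) * (2 * (n : ℚ) + 2) * Wq n (n + 1) / (4 * ((n : ℚ) + 2) ^ 2) := by
    rw [← Wq_succ_top2 n]; field_simp
  have hnb : NbQ n ≠ 0 := NbQ_ne n
  have hnb' : NbQ (n + 1) ≠ 0 := NbQ_ne (n + 1)
  rw [h1, h2]
  unfold rhoQ qQ Ec NbQ c2Q c3Q c4Q c5Q at *
  push_cast at *
  have e1 : (2*(n:ℚ)+5-2*((n:ℚ)+1)) = 3 := by ring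
  have e2 : (2*(n:ℚ)+4-2*((n:ℚ)+1)) = 2 := by ring
  rw [e1, e2]
  have d6 : ((n:ℚ)+2) ≠ 0 := by positivity
  have d7 : (2*(n:ℚ)+5) ≠ 0 := by positivity
  field_simp
  ring

/-- step recurrence for the central-binomial closed form -/
lemma F4 (n : ℕ) :
    ((4 * n + 5).choose (2 * n + 3) : ℚ) * ((2 * (n:ℚ) + 2) * (2 * (n:ℚ) + 3)) =
      4 * (4 * (n:ℚ) + 3) * (4 * (n:ℚ) + 5) * ((4 * n + 1).choose (2 * n + 1) : ℚ) := by
  have h1 : 2 * n + 3 ≤ 4 * n + 5 := by omega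
  have h2 : 2 * n + 1 ≤ 4 * n + 1 := by omega
  rw [Nat.cast_choose ℚ h1, Nat.cast_choose ℚ h2,
    show 4 * n + 5 - (2 * n + 3) = 2 * n + 2 by omega,
    show 4 * n + 1 - (2 * n + 1) = 2 * n by omega,
    show 4 * n + 5 = ((4 * n + 1) + 2) + 2 by ring, factQ_add_two, factQ_add_two,
    show 2 * n + 3 = (2 * n + 1) + 2 by ring, factQ_add_two,
    show 2 * n + 2 = (2 * n) + 2 by ring, factQ_add_two]
  push_cast
  field_simp
  ring

def Vsum (n : ℕ) : ℚ := ∑ k ∈ range (n + 2), qQ n k * Wq n k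

lemma Vsum_eq (n : ℕ) :
    Vsum n = NbQ n / (((n : ℚ) + 1) * (2 * (n : ℚ) + 3)) *
      ((4 * n + 1).choose (2 * n + 1) : ℚ) / 4 ^ n := by
  induction n with
  | zero =>
      simp [Vsum, Finset.sum_range_succ, qQ, Wq, NbQ, Nat.factorial]
      norm_num
  | succ n ih =>
      have htel : ∑ k ∈ range (n + 1), qQ (n + 1) k * Wq (n + 1) k =
          rhoQ n * (∑ k ∈ range (n + 1), qQ n k * Wq n k) -
            (Ec n (n + 1) * Wq n (n + 1) - Ec n 0 * Wq n 0) := by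
        have hcg : ∀ k ∈ range (n + 1), qQ (n + 1) k * Wq (n + 1) k =
            rhoQ n * (qQ n k * Wq n k) -
              (Ec n (k + 1) * Wq n (k + 1) - Ec n k * Wq n k) := by
          intro k hk
          have hkn : k ≤ n := by simpa [Nat.lt_succ_iff] using hk
          have h := C1 (n - k) k
          rw [show k + (n - k) = n from by omega] at h
          linarith [h]
        rw [Finset.sum_congr rfl hcg, Finset.sum_sub_distrib, Finset.sum_range_sub
          (fun k => Ec n k * Wq n k), ← Finset.mul_sum]
      have hV : Vsum (n + 1) = rhoQ n * Vsum n := by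
        have e1 : Vsum (n + 1) = (∑ k ∈ range (n + 1), qQ (n + 1) k * Wq (n + 1) k) +
            qQ (n + 1) (n + 1) * Wq (n + 1) (n + 1) +
            qQ (n + 1) (n + 2) * Wq (n + 1) (n + 2) := by
          unfold Vsum
          rw [show n + 1 + 2 = (n + 2) + 1 from rfl, Finset.sum_range_succ,
            show n + 2 = (n + 1) + 1 from rfl, Finset.sum_range_succ]
        have e2 : Vsum n = (∑ k ∈ range (n + 1), qQ n k * Wq n k) +
            qQ n (n + 1) * Wq n (n + 1) := by
          unfold Vsum
          rw [show n + 2 = (n + 1) + 1 from rfl, Finset.sum_range_succ]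
        have hc2 := C2 n
        rw [e1, htel, e2, Ec_zero]
        linarith [hc2]
      rw [hV, ih]
      have hF : ((4 * n + 5).choose (2 * n + 3) : ℚ) =
          4 * (4 * (n:ℚ) + 3) * (4 * (n:ℚ) + 5) * ((4 * n + 1).choose (2 * n + 1) : ℚ) /
            ((2 * (n:ℚ) + 2) * (2 * (n:ℚ) + 3)) := by
        rw [eq_div_iff (by positivity)]
        exact F4 n
      rw [show 4 * (n + 1) + 1 = 4 * n + 5 by ring, show 2 * (n + 1) + 1 = 2 * n + 3 by ring, hF]
      unfold rhoQ NbQ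
      have hnb : (32*(n:ℚ)^3 + 96*(n:ℚ)^2 + 92*(n:ℚ) + 27) ≠ 0 := by positivity
      have hnb' : (32*((n:ℚ)+1)^3 + 96*((n:ℚ)+1)^2 + 92*((n:ℚ)+1) + 27) ≠ 0 := by positivity
      have h1 : ((n:ℚ)+1) ≠ 0 := by positivity
      have h2 : ((n:ℚ)+2) ≠ 0 := by positivity
      have h3 : (2*(n:ℚ)+3) ≠ 0 := by positivity
      have h4 : (2*(n:ℚ)+5) ≠ 0 := by positivity
      have h5 : (2*(n:ℚ)+2) ≠ 0 := by positivity
      have h6 : (4:ℚ)^n ≠ 0 := by positivity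
      push_cast
      field_simp
      ring

/-- the harmonic-weighted pointwise certificate identity -/
lemma MPT (j k : ℕ) :
    (4 * ((k:ℚ) + j) + 3) * (4 * ((k:ℚ) + j) + 5) *
        (((2 * j + 3 : ℚ)) * ((2 * j + 2 : ℚ)) * Wq (k + j) k) * harmonic k -
      ((2 * ((k:ℚ) + j) + 2) * (2 * ((k:ℚ) + j) + 3)) ^ 2 * Wq (k + j) k * harmonic k +
      qQ (k + j) (k + 1) * Wq (k + j) (k + 1) =
    ((k:ℚ) + 1) * qQ (k + j) (k + 1) * Wq (k + j) (k + 1) * harmonic (k + 1) -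
      (k:ℚ) * qQ (k + j) k * Wq (k + j) k * harmonic k := by
  have h1 : Wq (k + j) (k + 1) = ((2 * j + 3 : ℚ)) * ((2 * j + 2 : ℚ)) * Wq (k + j) k /
      (4 * ((k : ℚ) + 1) ^ 2) := by
    rw [← Wq_ratio j k]; field_simp
  rw [h1, harmonic_succ]
  unfold qQ
  push_cast
  have d1 : ((k:ℚ)+1) ≠ 0 := by positivity
  field_simp
  ring

set_option maxHeartbeats 2000000 in
/-- For every `n ≥ 0`,
`∑_{k=0}^n C(2n+1,k) C(2n+1-k,k) H_k / 4^k = (C(4n+1,2n+1)/4^n)(3H_{2n+1} - 2H_{4n+2})`. -/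
theorem sum_choose_odd_harmonic_div_four_pow (n : ℕ) :
    ∑ k ∈ Finset.range (n + 1),
        ((2 * n + 1).choose k : ℚ) * ((2 * n + 1 - k).choose k : ℚ) * harmonic k / 4 ^ k =
      ((4 * n + 1).choose (2 * n + 1) : ℚ) / 4 ^ n *
        (3 * harmonic (2 * n + 1) - 2 * harmonic (4 * n + 2)) := by
  induction n with
  | zero =>
      rw [Finset.sum_range_one]
      norm_num [harmonic_succ, harmonic_zero]
  | succ n ih =>
      -- step 1 : the sum at level n+1 in terms of Wq at level n
      have step1 : ∑ k ∈ Finset.range (n + 1 + 1),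
          ((2 * (n+1) + 1).choose k : ℚ) * ((2 * (n+1) + 1 - k).choose k : ℚ) *
            harmonic k / 4 ^ k =
          (2 * (n : ℚ) + 2) * (2 * (n : ℚ) + 3) *
            ∑ k ∈ Finset.range (n + 2), Wq n k * harmonic k := by
        rw [Finset.mul_sum]
        refine Finset.sum_congr rfl ?_
        intro k hk
        have hkn : k ≤ n + 1 := by
          have := Finset.mem_range.mp hk; omega
        have h2 := term_eq2 n k hkn
        rw [show 2 * (n + 1) + 1 = 2 * n + 3 by ring]
        calc ((2 * n + 3).choose k : ℚ) * ((2 * n + 3 - k).choose k : ℚ) * harmonic k / 4 ^ k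
            = (((2 * n + 3).choose k : ℚ) * ((2 * n + 3 - k).choose k : ℚ) / 4 ^ k) *
              harmonic k := by ring
          _ = ((2 * (n : ℚ) + 2) * (2 * (n : ℚ) + 3) * Wq n k) * harmonic k := by rw [h2]
          _ = (2 * (n : ℚ) + 2) * (2 * (n : ℚ) + 3) * (Wq n k * harmonic k) := by ring
      -- step 2 : telescoping of the harmonic certificate
      have hpt : ∀ k ∈ Finset.range (n + 1),
          (4 * (n:ℚ) + 3) * (4 * (n:ℚ) + 5) *
              (((2 * n + 1).choose k : ℚ) * ((2 * n + 1 - k).choose k : ℚ) *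
                harmonic k / 4 ^ k) -
            ((2 * (n:ℚ) + 2) * (2 * (n:ℚ) + 3)) ^ 2 * (Wq n k * harmonic k) +
            qQ n (k + 1) * Wq n (k + 1) =
          ((k:ℚ) + 1) * qQ n (k + 1) * Wq n (k + 1) * harmonic (k + 1) -
            (k:ℚ) * qQ n k * Wq n k * harmonic k := by
        intro k hk
        have hkn : k ≤ n := by
          have := Finset.mem_range.mp hk; omega
        obtain ⟨j, rfl⟩ : ∃ j, n = k + j := ⟨n - k, by omega⟩
        rw [Nat.cast_add]
        have ht := term_eq j k
        have hm := MPT j k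
        calc (4 * ((k:ℚ)+j) + 3) * (4 * ((k:ℚ)+j) + 5) *
              (((2 * (k+j) + 1).choose k : ℚ) * ((2 * (k+j) + 1 - k).choose k : ℚ) *
                harmonic k / 4 ^ k) -
            ((2 * ((k:ℚ)+j) + 2) * (2 * ((k:ℚ)+j) + 3)) ^ 2 * (Wq (k+j) k * harmonic k) +
            qQ (k+j) (k + 1) * Wq (k+j) (k + 1)
            = (4 * ((k:ℚ)+j) + 3) * (4 * ((k:ℚ)+j) + 5) *
              ((((2 * (k+j) + 1).choose k : ℚ) * ((2 * (k+j) + 1 - k).choose k : ℚ) / 4 ^ k) *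
                harmonic k) -
            ((2 * ((k:ℚ)+j) + 2) * (2 * ((k:ℚ)+j) + 3)) ^ 2 * (Wq (k+j) k * harmonic k) +
            qQ (k+j) (k + 1) * Wq (k+j) (k + 1) := by ring
          _ = (4 * ((k:ℚ)+j) + 3) * (4 * ((k:ℚ)+j) + 5) *
              ((((2 * j + 3 : ℚ)) * ((2 * j + 2 : ℚ)) * Wq (k+j) k) * harmonic k) -
            ((2 * ((k:ℚ)+j) + 2) * (2 * ((k:ℚ)+j) + 3)) ^ 2 * (Wq (k+j) k * harmonic k) +
            qQ (k+j) (k + 1) * Wq (k+j) (k + 1) := by rw [ht]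
          _ = ((k:ℚ) + 1) * qQ (k+j) (k + 1) * Wq (k+j) (k + 1) * harmonic (k + 1) -
            (k:ℚ) * qQ (k+j) k * Wq (k+j) k * harmonic k := by
              rw [← hm]; ring
      have tel : ∑ k ∈ Finset.range (n + 1),
          (((k:ℚ) + 1) * qQ n (k + 1) * Wq n (k + 1) * harmonic (k + 1) -
            (k:ℚ) * qQ n k * Wq n k * harmonic k) =
          ((n:ℚ) + 1) * qQ n (n + 1) * Wq n (n + 1) * harmonic (n + 1) -
            (0:ℚ) * qQ n 0 * Wq n 0 * harmonic 0 := by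
        have := Finset.sum_range_sub (fun k => (k:ℚ) * qQ n k * Wq n k * harmonic k) (n + 1)
        simpa using this
      have sum_split : ∑ k ∈ Finset.range (n + 1),
          ((4 * (n:ℚ) + 3) * (4 * (n:ℚ) + 5) *
              (((2 * n + 1).choose k : ℚ) * ((2 * n + 1 - k).choose k : ℚ) *
                harmonic k / 4 ^ k) -
            ((2 * (n:ℚ) + 2) * (2 * (n:ℚ) + 3)) ^ 2 * (Wq n k * harmonic k) +
            qQ n (k + 1) * Wq n (k + 1)) =
          (4 * (n:ℚ) + 3) * (4 * (n:ℚ) + 5) *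
            (∑ k ∈ Finset.range (n + 1),
              ((2 * n + 1).choose k : ℚ) * ((2 * n + 1 - k).choose k : ℚ) *
                harmonic k / 4 ^ k) -
          ((2 * (n:ℚ) + 2) * (2 * (n:ℚ) + 3)) ^ 2 *
            (∑ k ∈ Finset.range (n + 1), Wq n k * harmonic k) +
          (∑ k ∈ Finset.range (n + 1), qQ n (k + 1) * Wq n (k + 1)) := by
        rw [Finset.sum_add_distrib, Finset.sum_sub_distrib, ← Finset.mul_sum, ← Finset.mul_sum]
      have third_sum : ∑ k ∈ Finset.range (n + 1), qQ n (k + 1) * Wq n (k + 1) = Vsum n := by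
        have h := Finset.sum_range_succ' (fun k => qQ n k * Wq n k) (n + 1)
        unfold Vsum
        rw [show n + 2 = n + 1 + 1 from rfl, h]
        simp [qQ]
      have second_sum : ∑ k ∈ Finset.range (n + 1), Wq n k * harmonic k =
          (∑ k ∈ Finset.range (n + 2), Wq n k * harmonic k) -
            Wq n (n + 1) * harmonic (n + 1) := by
        rw [show n + 2 = n + 1 + 1 from rfl,
          Finset.sum_range_succ (fun k => Wq n k * harmonic k) (n + 1)]
        ring
      have top_coef : ((n:ℚ) + 1) * qQ n (n + 1) =
          ((2 * (n:ℚ) + 2) * (2 * (n:ℚ) + 3)) ^ 2 := by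
        unfold qQ
        push_cast
        ring
      -- assemble : c² B = (4n+3)(4n+5) A + V
      have key : ((2 * (n:ℚ) + 2) * (2 * (n:ℚ) + 3)) ^ 2 *
          (∑ k ∈ Finset.range (n + 2), Wq n k * harmonic k) =
          (4 * (n:ℚ) + 3) * (4 * (n:ℚ) + 5) *
            (∑ k ∈ Finset.range (n + 1),
              ((2 * n + 1).choose k : ℚ) * ((2 * n + 1 - k).choose k : ℚ) *
                harmonic k / 4 ^ k) + Vsum n := by
        have e := Finset.sum_congr rfl hpt
        rw [sum_split, tel, third_sum, second_sum] at e
        have e2 : ((n:ℚ) + 1) * qQ n (n + 1) * Wq n (n + 1) * harmonic (n + 1) =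
            ((2 * (n:ℚ) + 2) * (2 * (n:ℚ) + 3)) ^ 2 * (Wq n (n + 1) * harmonic (n + 1)) := by
          rw [top_coef]; ring
        rw [e2] at e
        linarith [e]
      -- final assembly
      rw [ih] at key
      rw [step1]
      have hVs := Vsum_eq n
      have hF : ((4 * n + 5).choose (2 * n + 3) : ℚ) =
          4 * (4 * (n:ℚ) + 3) * (4 * (n:ℚ) + 5) * ((4 * n + 1).choose (2 * n + 1) : ℚ) /
            ((2 * (n:ℚ) + 2) * (2 * (n:ℚ) + 3)) := by
        rw [eq_div_iff (by positivity)]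
        exact F4 n
      rw [show 4 * (n + 1) + 1 = 4 * n + 5 by ring, show 2 * (n + 1) + 1 = 2 * n + 3 by ring, hF]
      rw [show (2 * n + 3 : ℕ) = (2 * n + 1) + 1 + 1 by ring,
        show (4 * (n + 1) + 2 : ℕ) = (4 * n + 2) + 1 + 1 + 1 + 1 by ring,
        harmonic_succ (2 * n + 1 + 1), harmonic_succ (2 * n + 1),
        harmonic_succ (4 * n + 2 + 1 + 1 + 1), harmonic_succ (4 * n + 2 + 1 + 1),
        harmonic_succ (4 * n + 2 + 1), harmonic_succ (4 * n + 2)]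
      have hB : (∑ k ∈ Finset.range (n + 2), Wq n k * harmonic k) =
          ((4 * (n:ℚ) + 3) * (4 * (n:ℚ) + 5) *
            (((4 * n + 1).choose (2 * n + 1) : ℚ) / 4 ^ n *
              (3 * harmonic (2 * n + 1) - 2 * harmonic (4 * n + 2))) + Vsum n) /
            ((2 * (n:ℚ) + 2) * (2 * (n:ℚ) + 3)) ^ 2 := by
        rw [eq_div_iff (by positivity)]
        rw [← key]
        ring
      rw [hB, hVs]
      unfold NbQ
      have h0 : ((n:ℚ)+1) ≠ 0 := by positivity
      have h3 : (2*(n:ℚ)+3) ≠ 0 := by positivity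
      have h5 : (2*(n:ℚ)+2) ≠ 0 := by positivity
      have h6 : (4:ℚ)^n ≠ 0 := by positivity
      have h7 : (2*(n:ℚ)+1+1) ≠ 0 := by positivity
      have h8 : (4*(n:ℚ)+2+1) ≠ 0 := by positivity
      have h9 : (4*(n:ℚ)+2+1+1) ≠ 0 := by positivity
      have h10 : (4*(n:ℚ)+2+1+1+1) ≠ 0 := by positivity
      have h11 : (4*(n:ℚ)+2+1+1+1+1) ≠ 0 := by positivity
      have h12 : (2*(n:ℚ)+1+1+1) ≠ 0 := by positivity
      push_cast
      field_simp
      ring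
end

section
/- For every nonnegative integer n, sum_{k=0}^{n} C(2n, k) * C(2n-k, k) * (H_k^2 + H_k^{(2)}) / 4^k = (C(4n, 2n) / 4^n) * (5*H_{2n}^{(2)} - 4*H_{4n}^{(2)}) + (C(4n, 2n) / 4^n) * (3*H_{2n} - 2*H_{4n})^2, as an identity of rational numbers. -/
/-- `H2 n = ∑_{0 < k ≤ n} 1/k²`, the generalized harmonic number of order 2. -/
def H2 (n : ℕ) : ℚ := ∑ i ∈ Finset.range n, 1 / ((i : ℚ) + 1) ^ 2

namespace SCH
open Finset

def Aq (m k : ℕ) : ℚ := (m.choose k : ℚ) * ((m - k).choose k : ℚ) / 4 ^ k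

def cq (m : ℕ) : ℚ := ((2 * m).choose m : ℚ) / 2 ^ m

def Lq (m : ℕ) : ℚ := 3 * harmonic m - 2 * harmonic (2 * m)

def Mq (m : ℕ) : ℚ := 5 * H2 m - 4 * H2 (2 * m)

def T0 (m : ℕ) : ℚ := ∑ k ∈ range (m + 1), Aq m k
def T1 (m : ℕ) : ℚ := ∑ k ∈ range (m + 1), Aq m k * harmonic k
def T2 (m : ℕ) : ℚ := ∑ k ∈ range (m + 1), Aq m k * ((harmonic k) ^ 2 + H2 k)
def Uq (m : ℕ) : ℚ := ∑ k ∈ range (m + 1), (k : ℚ) * Aq m k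
def Vq (m : ℕ) : ℚ := ∑ k ∈ range (m + 1), (k : ℚ) * Aq m k * harmonic k

lemma Aq_eq_zero {m k : ℕ} (h : m < 2 * k) : Aq m k = 0 := by
  have : (m - k).choose k = 0 := Nat.choose_eq_zero_of_lt (by omega)
  simp [Aq, this]

lemma hfac (x : ℕ) : ((x.factorial : ℕ) : ℚ) ≠ 0 := Nat.cast_ne_zero.2 (Nat.factorial_ne_zero x)

/-- Pointwise relation in `m`. -/
lemma P0 (m k : ℕ) : ((m : ℚ) + 1 - 2 * k) * Aq (m + 1) k = ((m : ℚ) + 1) * Aq m k := by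
  rcases lt_trichotomy (2 * k) (m + 1) with h | h | h
  · -- main case : 2k ≤ m
    obtain ⟨j, rfl⟩ : ∃ j, m = 2 * k + j := ⟨m - 2 * k, by omega⟩
    unfold Aq
    rw [show 2 * k + j + 1 - k = k + j + 1 from by omega,
      show 2 * k + j - k = k + j from by omega,
      Nat.cast_choose ℚ (show k ≤ 2 * k + j + 1 from by omega),
      Nat.cast_choose ℚ (show k ≤ k + j + 1 from by omega),
      Nat.cast_choose ℚ (show k ≤ 2 * k + j from by omega),
      Nat.cast_choose ℚ (show k ≤ k + j from by omega),
      show 2 * k + j + 1 - k = k + j + 1 from by omega,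
      show k + j + 1 - k = j + 1 from by omega,
      show 2 * k + j - k = k + j from by omega,
      show k + j - k = j from by omega]
    have e1 : (((2 * k + j + 1).factorial : ℕ) : ℚ) = (2 * k + j + 1) * ((2 * k + j).factorial : ℕ) := by
      rw [show (2 * k + j + 1) = (2 * k + j) + 1 from rfl, Nat.factorial_succ]; push_cast; ring
    have e2 : (((k + j + 1).factorial : ℕ) : ℚ) = (k + j + 1) * ((k + j).factorial : ℕ) := by
      rw [show (k + j + 1) = (k + j) + 1 from rfl, Nat.factorial_succ]; push_cast; ring
    have e3 : (((j + 1).factorial : ℕ) : ℚ) = (j + 1) * ((j).factorial : ℕ) := by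
      rw [Nat.factorial_succ]; push_cast; ring
    rw [e1, e2, e3]
    have h4 : (4 : ℚ) ^ k ≠ 0 := by positivity
    field_simp
    push_cast
    ring
  · -- 2k = m+1
    have h1 : Aq m k = 0 := Aq_eq_zero (by omega)
    have h2 : ((m : ℚ) + 1 - 2 * k) = 0 := by
      have : (m : ℚ) + 1 = 2 * k := by exact_mod_cast congrArg (Nat.cast (R := ℚ)) h.symm
      rw [this]; ring
    rw [h1, h2]; ring
  · have h1 : Aq m k = 0 := Aq_eq_zero (by omega)
    have h2 : Aq (m + 1) k = 0 := Aq_eq_zero (by omega)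
    rw [h1, h2]; ring

/-- Pointwise relation in `k`. -/
lemma Q0 (m k : ℕ) :
    4 * ((k : ℚ) + 1) ^ 2 * Aq m (k + 1) = ((m : ℚ) - 2 * k) * ((m : ℚ) - 2 * k - 1) * Aq m k := by
  rcases lt_trichotomy m (2 * k + 1) with h | h | h
  · rcases Nat.lt_or_ge m (2 * k) with h' | h'
    · rw [Aq_eq_zero (show m < 2 * (k + 1) from by omega), Aq_eq_zero h']; ring
    · -- m = 2k
      have hm : m = 2 * k := by omega
      subst hm
      rw [Aq_eq_zero (show 2 * k < 2 * (k + 1) from by omega)]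
      have : ((2 * k : ℕ) : ℚ) - 2 * k = 0 := by push_cast; ring
      rw [this]; ring
  · -- m = 2k+1
    subst h
    rw [Aq_eq_zero (show 2 * k + 1 < 2 * (k + 1) from by omega)]
    have : ((2 * k + 1 : ℕ) : ℚ) - 2 * k - 1 = 0 := by push_cast; ring
    rw [this]; ring
  · -- main: m ≥ 2k+2
    obtain ⟨j, rfl⟩ : ∃ j, m = 2 * k + 2 + j := ⟨m - (2 * k + 2), by omega⟩
    unfold Aq
    rw [show 2 * k + 2 + j - (k + 1) = k + 1 + j from by omega,
      show 2 * k + 2 + j - k = k + 2 + j from by omega,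
      Nat.cast_choose ℚ (show k + 1 ≤ 2 * k + 2 + j from by omega),
      Nat.cast_choose ℚ (show k + 1 ≤ k + 1 + j from by omega),
      Nat.cast_choose ℚ (show k ≤ 2 * k + 2 + j from by omega),
      Nat.cast_choose ℚ (show k ≤ k + 2 + j from by omega),
      show 2 * k + 2 + j - (k + 1) = k + 1 + j from by omega,
      show k + 1 + j - (k + 1) = j from by omega,
      show 2 * k + 2 + j - k = k + 2 + j from by omega,
      show k + 2 + j - k = j + 2 from by omega]
    have e1 : (((k + 1).factorial : ℕ) : ℚ) = (k + 1) * ((k).factorial : ℕ) := by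
      rw [Nat.factorial_succ]; push_cast; ring
    have e2 : (((k + 2 + j).factorial : ℕ) : ℚ) = (k + 2 + j) * ((k + 1 + j).factorial : ℕ) := by
      rw [show (k + 2 + j) = (k + 1 + j) + 1 from by omega, Nat.factorial_succ]; push_cast; ring
    have e3 : (((j + 2).factorial : ℕ) : ℚ) = (j + 2) * (j + 1) * ((j).factorial : ℕ) := by
      rw [show (j + 2) = (j + 1) + 1 from rfl, Nat.factorial_succ, Nat.factorial_succ]
      push_cast; ring
    rw [e1, e2, e3]
    have h4 : (4 : ℚ) ^ k ≠ 0 := by positivity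
    have h41 : (4 : ℚ) ^ (k + 1) = 4 * 4 ^ k := by ring
    rw [h41]
    field_simp
    push_cast
    ring



lemma abel (B w : ℕ → ℚ) (N : ℕ) (h0 : B 0 * w 0 = 0) (hN : B N * w N = 0) :
    ∑ k ∈ range N, (B (k + 1) - B k) * w k
      = -∑ k ∈ range N, B (k + 1) * (w (k + 1) - w k) := by
  have h1 : ∑ k ∈ range N, (B (k + 1) - B k) * w k
      = (∑ k ∈ range N, (B (k + 1) * w (k + 1) - B k * w k))
        - ∑ k ∈ range N, B (k + 1) * (w (k + 1) - w k) := by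
    rw [← Finset.sum_sub_distrib]
    exact Finset.sum_congr rfl fun k _ => by ring
  rw [h1, Finset.sum_range_sub (fun k => B k * w k), hN, h0]
  ring


lemma step (m : ℕ) (w : ℕ → ℚ) :
    ((m : ℚ) + 1) ^ 2 * (∑ k ∈ range (m + 2), Aq (m + 1) k * w k)
      = (2 * (m : ℚ) + 1) * ((m : ℚ) + 1) * (∑ k ∈ range (m + 2), Aq m k * w k)
        + ∑ k ∈ range (m + 2),
            4 * ((k : ℚ) + 1) ^ 2 * Aq (m + 1) (k + 1) * (w (k + 1) - w k) := by
  set B : ℕ → ℚ := fun k => 4 * (k : ℚ) ^ 2 * Aq (m + 1) k with hB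
  have hpt : ∀ k : ℕ, ((m : ℚ) + 1) ^ 2 * (Aq (m + 1) k * w k)
      = (2 * (m : ℚ) + 1) * ((m : ℚ) + 1) * (Aq m k * w k)
        - (B (k + 1) - B k) * w k := by
    intro k
    have hp := P0 m k
    have hq := Q0 (m + 1) k
    push_cast at hq
    simp only [hB]
    push_cast
    linear_combination (w k) * hq + (2 * (m : ℚ) + 1) * (w k) * hp
  have h1 : ((m : ℚ) + 1) ^ 2 * (∑ k ∈ range (m + 2), Aq (m + 1) k * w k)
      = (2 * (m : ℚ) + 1) * ((m : ℚ) + 1) * (∑ k ∈ range (m + 2), Aq m k * w k)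
        - ∑ k ∈ range (m + 2), (B (k + 1) - B k) * w k := by
    rw [Finset.mul_sum, Finset.mul_sum, ← Finset.sum_sub_distrib]
    exact Finset.sum_congr rfl fun k _ => by rw [hpt k]
  rw [h1, abel B w (m + 2) (by simp [hB]) ?_]
  · have h2 : ∀ k ∈ range (m + 2), B (k + 1) * (w (k + 1) - w k)
        = 4 * ((k : ℚ) + 1) ^ 2 * Aq (m + 1) (k + 1) * (w (k + 1) - w k) := by
      intro k _
      simp only [hB]
      push_cast
      ring
    rw [Finset.sum_congr rfl h2]
    ring
  · have : Aq (m + 1) (m + 2) = 0 := Aq_eq_zero (by omega)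
    simp [hB, this]



lemma stepQ (m : ℕ) (w : ℕ → ℚ) :
    (m : ℚ) * ((m : ℚ) - 1) * (∑ k ∈ range (m + 1), Aq m k * w k)
      = 2 * (2 * (m : ℚ) - 1) * (∑ k ∈ range (m + 1), (k : ℚ) * Aq m k * w k)
        - ∑ k ∈ range (m + 1),
            4 * ((k : ℚ) + 1) ^ 2 * Aq m (k + 1) * (w (k + 1) - w k) := by
  set B : ℕ → ℚ := fun k => 4 * (k : ℚ) ^ 2 * Aq m k with hB
  have hpt : ∀ k : ℕ, (m : ℚ) * ((m : ℚ) - 1) * (Aq m k * w k)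
      = 2 * (2 * (m : ℚ) - 1) * ((k : ℚ) * Aq m k * w k)
        + (B (k + 1) - B k) * w k := by
    intro k
    have hq := Q0 m k
    simp only [hB]
    push_cast
    linear_combination -(w k) * hq
  have h1 : (m : ℚ) * ((m : ℚ) - 1) * (∑ k ∈ range (m + 1), Aq m k * w k)
      = 2 * (2 * (m : ℚ) - 1) * (∑ k ∈ range (m + 1), (k : ℚ) * Aq m k * w k)
        + ∑ k ∈ range (m + 1), (B (k + 1) - B k) * w k := by
    rw [Finset.mul_sum, Finset.mul_sum, ← Finset.sum_add_distrib]
    exact Finset.sum_congr rfl fun k _ => by rw [hpt k]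
  rw [h1, abel B w (m + 1) (by simp [hB]) ?_]
  · have h2 : ∀ k ∈ range (m + 1), B (k + 1) * (w (k + 1) - w k)
        = 4 * ((k : ℚ) + 1) ^ 2 * Aq m (k + 1) * (w (k + 1) - w k) := by
      intro k _
      simp only [hB]
      push_cast
      ring
    rw [Finset.sum_congr rfl h2]
    ring
  · have : Aq m (m + 1) = 0 := Aq_eq_zero (by omega)
    simp [hB, this]


lemma H2_succ (k : ℕ) : H2 (k + 1) = H2 k + 1 / ((k : ℚ) + 1) ^ 2 := by
  rw [H2, Finset.sum_range_succ]; rfl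

lemma harm_succ (k : ℕ) : harmonic (k + 1) = harmonic k + 1 / ((k : ℚ) + 1) := by
  rw [harmonic_succ]; push_cast; rw [one_div]

lemma w2_succ (k : ℕ) :
    (harmonic (k + 1)) ^ 2 + H2 (k + 1) - ((harmonic k) ^ 2 + H2 k)
      = 2 * harmonic (k + 1) * (1 / ((k : ℚ) + 1)) := by
  rw [harm_succ, H2_succ]
  have h : ((k : ℚ) + 1) ≠ 0 := by positivity
  field_simp
  ring

lemma shiftA (M N : ℕ) (f : ℕ → ℚ) :
    ∑ k ∈ range N, ((k : ℚ) + 1) * Aq M (k + 1) * f (k + 1)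
      = ∑ k ∈ range (N + 1), (k : ℚ) * Aq M k * f k := by
  rw [Finset.sum_range_succ' (fun k => (k : ℚ) * Aq M k * f k) N]
  simp only [Nat.cast_zero, zero_mul, add_zero]
  exact Finset.sum_congr rfl fun k _ => by push_cast; ring

lemma s0 (m : ℕ) :
    ((m : ℚ) + 1) ^ 2 * T0 (m + 1) = (2 * (m : ℚ) + 1) * ((m : ℚ) + 1) * T0 m := by
  have h := step m (fun _ => (1 : ℚ))
  simp only [mul_one, sub_self, mul_zero, Finset.sum_const_zero, add_zero] at h
  have e1 : ∑ k ∈ range (m + 2), Aq (m + 1) k = T0 (m + 1) := rfl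
  have e2 : ∑ k ∈ range (m + 2), Aq m k = T0 m := by
    rw [Finset.sum_range_succ, Aq_eq_zero (show m < 2 * (m + 1) from by omega), add_zero]; rfl
  rw [e1, e2] at h
  exact h

lemma s1 (m : ℕ) :
    ((m : ℚ) + 1) ^ 2 * T1 (m + 1)
      = (2 * (m : ℚ) + 1) * ((m : ℚ) + 1) * T1 m + 4 * Uq (m + 1) := by
  have h := step m harmonic
  have e2 : ∑ k ∈ range (m + 2), Aq m k * harmonic k = T1 m := by
    rw [Finset.sum_range_succ, Aq_eq_zero (show m < 2 * (m + 1) from by omega)]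
    simp [T1]
  have e3 : ∑ k ∈ range (m + 2),
      4 * ((k : ℚ) + 1) ^ 2 * Aq (m + 1) (k + 1) * (harmonic (k + 1) - harmonic k)
        = 4 * Uq (m + 1) := by
    have e4 : ∀ k ∈ range (m + 2),
        4 * ((k : ℚ) + 1) ^ 2 * Aq (m + 1) (k + 1) * (harmonic (k + 1) - harmonic k)
          = 4 * (((k : ℚ) + 1) * Aq (m + 1) (k + 1) * 1) := by
      intro k _
      rw [harm_succ]
      have hk : ((k : ℚ) + 1) ≠ 0 := by positivity
      field_simp
      ring
    rw [Finset.sum_congr rfl e4, ← Finset.mul_sum, shiftA (m + 1) (m + 2) (fun _ => 1)]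
    have : ∑ k ∈ range (m + 2 + 1), (k : ℚ) * Aq (m + 1) k * 1 = Uq (m + 1) := by
      rw [Finset.sum_range_succ, Aq_eq_zero (show m + 1 < 2 * (m + 2) from by omega)]
      simp [Uq]
    rw [this]
  rw [e2, e3] at h
  exact h

lemma s2 (m : ℕ) :
    ((m : ℚ) + 1) ^ 2 * T2 (m + 1)
      = (2 * (m : ℚ) + 1) * ((m : ℚ) + 1) * T2 m + 8 * Vq (m + 1) := by
  have h := step m (fun k => (harmonic k) ^ 2 + H2 k)
  have e2 : ∑ k ∈ range (m + 2), Aq m k * ((harmonic k) ^ 2 + H2 k) = T2 m := by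
    rw [Finset.sum_range_succ, Aq_eq_zero (show m < 2 * (m + 1) from by omega)]
    simp [T2]
  have e3 : ∑ k ∈ range (m + 2), 4 * ((k : ℚ) + 1) ^ 2 * Aq (m + 1) (k + 1) *
        ((harmonic (k + 1) ^ 2 + H2 (k + 1)) - (harmonic k ^ 2 + H2 k))
        = 8 * Vq (m + 1) := by
    have e4 : ∀ k ∈ range (m + 2),
        4 * ((k : ℚ) + 1) ^ 2 * Aq (m + 1) (k + 1) *
          ((harmonic (k + 1) ^ 2 + H2 (k + 1)) - (harmonic k ^ 2 + H2 k))
          = 8 * (((k : ℚ) + 1) * Aq (m + 1) (k + 1) * harmonic (k + 1)) := by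
      intro k _
      rw [w2_succ]
      have hk : ((k : ℚ) + 1) ≠ 0 := by positivity
      field_simp
      ring
    rw [Finset.sum_congr rfl e4, ← Finset.mul_sum, shiftA (m + 1) (m + 2) harmonic]
    have : ∑ k ∈ range (m + 2 + 1), (k : ℚ) * Aq (m + 1) k * harmonic k = Vq (m + 1) := by
      rw [Finset.sum_range_succ, Aq_eq_zero (show m + 1 < 2 * (m + 2) from by omega)]
      simp [Vq]
    rw [this]
  rw [e2, e3] at h
  exact h

lemma hU (m : ℕ) :
    2 * (2 * (m : ℚ) - 1) * Uq m = (m : ℚ) * ((m : ℚ) - 1) * T0 m := by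
  have h := stepQ m (fun _ => (1 : ℚ))
  simp only [mul_one, sub_self, mul_zero, Finset.sum_const_zero, sub_zero] at h
  exact h.symm

lemma hV (m : ℕ) :
    2 * (2 * (m : ℚ) - 1) * Vq m = (m : ℚ) * ((m : ℚ) - 1) * T1 m + 4 * Uq m := by
  have h := stepQ m harmonic
  have e3 : ∑ k ∈ range (m + 1),
      4 * ((k : ℚ) + 1) ^ 2 * Aq m (k + 1) * (harmonic (k + 1) - harmonic k)
        = 4 * Uq m := by
    have e4 : ∀ k ∈ range (m + 1),
        4 * ((k : ℚ) + 1) ^ 2 * Aq m (k + 1) * (harmonic (k + 1) - harmonic k)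
          = 4 * (((k : ℚ) + 1) * Aq m (k + 1) * 1) := by
      intro k _
      rw [harm_succ]
      have hk : ((k : ℚ) + 1) ≠ 0 := by positivity
      field_simp
      ring
    rw [Finset.sum_congr rfl e4, ← Finset.mul_sum, shiftA m (m + 1) (fun _ => 1)]
    have : ∑ k ∈ range (m + 1 + 1), (k : ℚ) * Aq m k * 1 = Uq m := by
      rw [Finset.sum_range_succ, Aq_eq_zero (show m < 2 * (m + 1) from by omega)]
      simp [Uq]
    rw [this]
  rw [e3] at h
  have eT : ∑ k ∈ range (m + 1), Aq m k * harmonic k = T1 m := rfl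
  have eV : ∑ k ∈ range (m + 1), (k : ℚ) * Aq m k * harmonic k = Vq m := rfl
  rw [eT, eV] at h
  linear_combination -h

lemma cq_succ (m : ℕ) : ((m : ℚ) + 1) * cq (m + 1) = (2 * (m : ℚ) + 1) * cq m := by
  have k1 : (2 * m + 2) * (2 * m + 1).choose m = (2 * m + 2).choose (m + 1) * (m + 1) := by
    exact Nat.add_one_mul_choose_eq (2 * m + 1) m
  have k2 : (2 * m + 1) * (2 * m).choose m = (2 * m + 1).choose (m + 1) * (m + 1) := by
    exact Nat.add_one_mul_choose_eq (2 * m) m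
  have k3 : (2 * m + 1).choose (m + 1) = (2 * m + 1).choose m := by
    have := Nat.choose_symm (show m ≤ 2 * m + 1 from by omega)
    rw [show 2 * m + 1 - m = m + 1 from by omega] at this
    exact this
  have key : (m + 1) * ((m + 1) * ((2 * m + 2).choose (m + 1)))
      = (2 * m + 2) * ((2 * m + 1) * ((2 * m).choose m)) := by
    rw [k2, k3]
    calc (m + 1) * ((m + 1) * ((2 * m + 2).choose (m + 1)))
        = (m + 1) * ((2 * m + 2).choose (m + 1) * (m + 1)) := by ring
      _ = (m + 1) * ((2 * m + 2) * (2 * m + 1).choose m) := by rw [← k1]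
      _ = (2 * m + 2) * ((2 * m + 1).choose m * (m + 1)) := by ring
  have keyQ : ((m : ℚ) + 1) * (((m : ℚ) + 1) * (((2 * m + 2).choose (m + 1) : ℕ) : ℚ))
      = (2 * (m : ℚ) + 2) * ((2 * (m : ℚ) + 1) * (((2 * m).choose m : ℕ) : ℚ)) := by
    exact_mod_cast congrArg (Nat.cast (R := ℚ)) key
  unfold cq
  rw [show 2 * (m + 1) = 2 * m + 2 from by omega]
  have h2 : ((2 : ℚ)) ^ (m + 1) = 2 * 2 ^ m := by ring
  rw [h2]
  have hp : ((2 : ℚ)) ^ m ≠ 0 := by positivity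
  have hm1 : ((m : ℚ) + 1) ≠ 0 := by positivity
  rw [mul_div_assoc', mul_div_assoc', div_eq_div_iff (by positivity) (by positivity)]
  have hgoal2 : ((m : ℚ) + 1) * (((m : ℚ) + 1) * ((((2 * m + 2).choose (m + 1) : ℕ) : ℚ)) * 2 ^ m)
      = ((m : ℚ) + 1) * ((2 * (m : ℚ) + 1) * (((2 * m).choose m : ℕ) : ℚ) * (2 * 2 ^ m)) := by
    linear_combination (2 : ℚ) ^ m * keyQ
  exact mul_left_cancel₀ hm1 hgoal2

lemma Lq_succ (m : ℕ) :
    Lq (m + 1) = Lq m + 2 / ((m : ℚ) + 1) - 2 / (2 * (m : ℚ) + 1) := by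
  unfold Lq
  rw [show 2 * (m + 1) = 2 * m + 1 + 1 from by omega, harm_succ, harm_succ, harm_succ]
  push_cast
  have h1 : ((m : ℚ) + 1) ≠ 0 := by positivity
  have h2 : (2 * (m : ℚ) + 1) ≠ 0 := by positivity
  have h3 : (2 * (m : ℚ) + 1 + 1) ≠ 0 := by positivity
  field_simp
  ring

lemma Mq_succ (m : ℕ) :
    Mq (m + 1) = Mq m + 4 / ((m : ℚ) + 1) ^ 2 - 4 / (2 * (m : ℚ) + 1) ^ 2 := by
  unfold Mq
  rw [show 2 * (m + 1) = 2 * m + 1 + 1 from by omega, H2_succ, H2_succ, H2_succ]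
  push_cast
  have h1 : ((m : ℚ) + 1) ≠ 0 := by positivity
  have h2 : (2 * (m : ℚ) + 1) ≠ 0 := by positivity
  have h3 : (2 * (m : ℚ) + 1 + 1) ≠ 0 := by positivity
  field_simp
  ring

theorem key (m : ℕ) :
    T0 m = cq m ∧ T1 m = cq m * Lq m ∧ T2 m = cq m * (Lq m ^ 2 + Mq m) := by
  induction m with
  | zero =>
    refine ⟨?_, ?_, ?_⟩ <;>
      simp [T0, T1, T2, cq, Aq, Lq, Mq, H2, harmonic]
  | succ m ih =>
    obtain ⟨ih0, ih1, ih2⟩ := ih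
    have hm1 : ((m : ℚ) + 1) ≠ 0 := by positivity
    have hm2 : (2 * (m : ℚ) + 1) ≠ 0 := by positivity
    have hc := cq_succ m
    have h0 : T0 (m + 1) = cq (m + 1) := by
      have hs := s0 m
      rw [ih0] at hs
      have : ((m : ℚ) + 1) ^ 2 * T0 (m + 1) = ((m : ℚ) + 1) ^ 2 * cq (m + 1) := by
        rw [hs]; linear_combination -((m : ℚ) + 1) * hc
      exact mul_left_cancel₀ (pow_ne_zero 2 hm1) this
    have hU1 : Uq (m + 1) = ((m : ℚ) + 1) * (m : ℚ) * cq (m + 1) / (2 * (2 * (m : ℚ) + 1)) := by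
      have h := hU (m + 1)
      push_cast at h
      rw [h0] at h
      rw [eq_div_iff (by positivity)]
      linear_combination h
    have e3 : cq m = ((m : ℚ) + 1) * cq (m + 1) / (2 * (m : ℚ) + 1) := by
      rw [eq_div_iff hm2]
      linear_combination -hc
    have h1 : T1 (m + 1) = cq (m + 1) * Lq (m + 1) := by
      have hs := s1 m
      rw [ih1] at hs
      have e1 : T1 (m + 1)
          = ((2 * (m : ℚ) + 1) * ((m : ℚ) + 1) * (cq m * Lq m) + 4 * Uq (m + 1))
            / ((m : ℚ) + 1) ^ 2 := by
        rw [eq_div_iff (by positivity)]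
        linear_combination hs
      rw [e1, hU1, e3, Lq_succ]
      field_simp
      ring
    have hV1 : Vq (m + 1)
        = (((m : ℚ) + 1) * (m : ℚ) * T1 (m + 1) + 4 * Uq (m + 1))
          / (2 * (2 * (m : ℚ) + 1)) := by
      have h := hV (m + 1)
      push_cast at h
      rw [eq_div_iff (by positivity)]
      linear_combination h
    have h2 : T2 (m + 1) = cq (m + 1) * (Lq (m + 1) ^ 2 + Mq (m + 1)) := by
      have hs := s2 m
      rw [ih2] at hs
      have e1 : T2 (m + 1)
          = ((2 * (m : ℚ) + 1) * ((m : ℚ) + 1) * (cq m * (Lq m ^ 2 + Mq m)) + 8 * Vq (m + 1))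
            / ((m : ℚ) + 1) ^ 2 := by
        rw [eq_div_iff (by positivity)]
        linear_combination hs
      rw [e1, hV1, h1, hU1, e3, Lq_succ, Mq_succ]
      field_simp
      ring
    exact ⟨h0, h1, h2⟩

end SCH

/-- For every `n ≥ 0`,
`∑_{k=0}^n C(2n,k) C(2n-k,k) (H_k² + H_k⁽²⁾) / 4^k
  = (C(4n,2n)/4^n)(5H_{2n}⁽²⁾ - 4H_{4n}⁽²⁾) + (C(4n,2n)/4^n)(3H_{2n} - 2H_{4n})²`. -/
theorem sum_choose_harmonic_sq_div_four_pow (n : ℕ) :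
    ∑ k ∈ Finset.range (n + 1),
        ((2 * n).choose k : ℚ) * ((2 * n - k).choose k : ℚ) *
          ((harmonic k) ^ 2 + H2 k) / 4 ^ k =
      ((4 * n).choose (2 * n) : ℚ) / 4 ^ n * (5 * H2 (2 * n) - 4 * H2 (4 * n)) +
        ((4 * n).choose (2 * n) : ℚ) / 4 ^ n *
          (3 * harmonic (2 * n) - 2 * harmonic (4 * n)) ^ 2 := by
  have hk := (SCH.key (2 * n)).2.2
  have hLHS : (∑ k ∈ Finset.range (n + 1),
      ((2 * n).choose k : ℚ) * ((2 * n - k).choose k : ℚ) *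
        ((harmonic k) ^ 2 + H2 k) / 4 ^ k) = SCH.T2 (2 * n) := by
    have e1 : (∑ k ∈ Finset.range (n + 1),
        ((2 * n).choose k : ℚ) * ((2 * n - k).choose k : ℚ) *
          ((harmonic k) ^ 2 + H2 k) / 4 ^ k)
        = ∑ k ∈ Finset.range (n + 1), SCH.Aq (2 * n) k * ((harmonic k) ^ 2 + H2 k) := by
      refine Finset.sum_congr rfl fun k _ => ?_
      rw [SCH.Aq]
      ring
    rw [e1, SCH.T2]
    refine Finset.sum_subset (Finset.range_subset_range.2 (by omega)) ?_
    intro k hk1 hk2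
    have hz : SCH.Aq (2 * n) k = 0 := by
      refine SCH.Aq_eq_zero ?_
      simp only [Finset.mem_range] at hk1 hk2
      omega
    rw [hz, zero_mul]
  rw [hLHS, hk]
  rw [SCH.cq, SCH.Lq, SCH.Mq, show 2 * (2 * n) = 4 * n from by ring]
  have h2 : ((2 : ℚ)) ^ (2 * n) = 4 ^ n := by
    rw [pow_mul]; norm_num
  rw [h2]
  ring
end

section
/- For every positive integer n, sum_{k=1}^{n} (-1)^k / (k^2 * C(n,k)) = H_n^{(2)} + 2 * sum_{k=1}^{n} (-1)^k / k^2, as an identity of rational numbers. -/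
open Finset

lemma choose_cast_ne (m k : ℕ) (hk : k ≤ m) : ((m.choose k : ℚ)) ≠ 0 := by
  exact_mod_cast (Nat.choose_pos hk).ne'

lemma pair_identity (m k : ℕ) (hk : k ≤ m) :
    (1:ℚ) / (m.choose k) =
      ((m:ℚ)+1)/((m:ℚ)+2) * (1/((m+1).choose k) + 1/((m+1).choose (k+1))) := by
  have ha := choose_cast_ne m k hk
  have hb := choose_cast_ne (m+1) k (hk.trans (Nat.le_succ m))
  have hc := choose_cast_ne (m+1) (k+1) (Nat.succ_le_succ hk)
  have hs : ((m + 1 - k : ℕ) : ℚ) = (m:ℚ)+1-k := by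
    push_cast [Nat.cast_sub (hk.trans (Nat.le_succ m))]; ring
  have h1 : (m.choose k : ℚ) * ((m:ℚ)+1) = ((m+1).choose k : ℚ) * ((m:ℚ)+1-k) := by
    rw [← hs]; exact_mod_cast Nat.choose_mul_succ_eq m k
  have h2 : ((m:ℚ)+1) * (m.choose k : ℚ) = ((m+1).choose (k+1) : ℚ) * ((k:ℚ)+1) := by
    exact_mod_cast Nat.add_one_mul_choose_eq m k
  have hm2 : ((m:ℚ)+2) ≠ 0 := by positivity
  field_simp
  nlinarith [h1, h2]

lemma hsum (m : ℕ) :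
    ∑ k ∈ Finset.range (m+1), (-1:ℚ)^k / (m.choose k)
      = ((m:ℚ)+1) * (1+(-1:ℚ)^m) / ((m:ℚ)+2) := by
  have key : ∀ k ∈ Finset.range (m+1),
      (-1:ℚ)^k / (m.choose k)
        = ((m:ℚ)+1)/((m:ℚ)+2) *
          ((-1:ℚ)^k / ((m+1).choose k) - (-1:ℚ)^(k+1) / ((m+1).choose (k+1))) := by
    intro k hk
    rw [Finset.mem_range] at hk
    rw [div_eq_mul_one_div ((-1:ℚ)^k), pair_identity m k (Nat.lt_succ_iff.mp hk)]
    ring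
  rw [Finset.sum_congr rfl key, ← Finset.mul_sum,
    Finset.sum_range_sub' (fun k => (-1:ℚ)^k / ((m+1).choose k))]
  simp only [pow_zero, Nat.choose_zero_right, Nat.choose_self, Nat.cast_one, pow_succ]
  field_simp
  ring

lemma gsum (m : ℕ) (hm : 0 < m) :
    ∑ k ∈ Finset.Icc 1 m, (-1:ℚ)^k / ((k:ℚ) * (m.choose k))
      = -(1-(-1:ℚ)^m)/((m:ℚ)+1) := by
  obtain ⟨p, rfl⟩ := Nat.exists_eq_add_of_lt hm
  simp only [Nat.zero_add] at *
  rw [← Finset.Ico_add_one_right_eq_Icc, Finset.sum_Ico_eq_sum_range]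
  simp only [Nat.succ_sub_one, Nat.add_sub_cancel, Nat.add_comm 1]
  have key : ∀ j ∈ Finset.range (p+1),
      (-1:ℚ)^(j+1) / (((j:ℚ)+1) * ((p+1).choose (j+1)))
        = (-1/((p:ℚ)+1)) * ((-1:ℚ)^j / (p.choose j)) := by
    intro j hj
    rw [Finset.mem_range] at hj
    have h2 : ((p:ℚ)+1) * (p.choose j : ℚ) = ((p+1).choose (j+1) : ℚ) * ((j:ℚ)+1) := by
      exact_mod_cast Nat.add_one_mul_choose_eq p j
    have ha := choose_cast_ne p j (Nat.lt_succ_iff.mp hj)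
    have hb := choose_cast_ne (p+1) (j+1) (Nat.succ_le_succ (Nat.lt_succ_iff.mp hj))
    have hj1 : ((j:ℚ)+1) ≠ 0 := by positivity
    have hp1 : ((p:ℚ)+1) ≠ 0 := by positivity
    rw [pow_succ]
    field_simp
    nlinarith [h2]
  rw [Finset.sum_congr rfl (by intro j hj; push_cast; exact key j hj), ← Finset.mul_sum, hsum p]
  have hp1 : ((p:ℚ)+1) ≠ 0 := by positivity
  have hp2 : ((p:ℚ)+2) ≠ 0 := by positivity
  push_cast [pow_succ]
  field_simp
  ring

lemma step_term (p k : ℕ) (hk1 : 1 ≤ k) (hkp : k ≤ p) :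
    (-1:ℚ)^k / ((k:ℚ)^2 * ((p+1).choose k))
      = (-1:ℚ)^k / ((k:ℚ)^2 * (p.choose k))
        - (1/((p:ℚ)+1)) * ((-1:ℚ)^k / ((k:ℚ) * (p.choose k))) := by
  have ha := choose_cast_ne p k hkp
  have hb := choose_cast_ne (p+1) k (hkp.trans (Nat.le_succ p))
  have hs : ((p + 1 - k : ℕ) : ℚ) = (p:ℚ)+1-k := by
    push_cast [Nat.cast_sub (hkp.trans (Nat.le_succ p))]; ring
  have h1 : (p.choose k : ℚ) * ((p:ℚ)+1) = ((p+1).choose k : ℚ) * ((p:ℚ)+1-k) := by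
    rw [← hs]; exact_mod_cast Nat.choose_mul_succ_eq p k
  have hkq : ((k:ℚ)) ≠ 0 := by positivity
  have hp1 : ((p:ℚ)+1) ≠ 0 := by positivity
  have hbinv : (1:ℚ)/(((p+1).choose k):ℚ) = ((p:ℚ)+1-(k:ℚ))/(((p:ℚ)+1) * (p.choose k)) := by
    rw [div_eq_div_iff hb (by exact mul_ne_zero hp1 ha)]
    linear_combination h1
  have expand : (-1:ℚ)^k / ((k:ℚ)^2 * ((p+1).choose k))
      = (-1:ℚ)^k/(k:ℚ)^2 * (1/(((p+1).choose k):ℚ)) := by ring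
  rw [expand, hbinv]
  field_simp

/-- For every `n ≥ 1`,
`∑_{k=1}^n (-1)^k / (k² C(n,k)) = H_n⁽²⁾ + 2 ∑_{k=1}^n (-1)^k / k²`. -/
theorem sum_alt_inv_sq_choose (n : ℕ) (hn : 0 < n) :
    ∑ k ∈ Finset.Icc 1 n, (-1 : ℚ) ^ k / ((k : ℚ) ^ 2 * (n.choose k : ℚ)) =
      H2 n + 2 * ∑ k ∈ Finset.Icc 1 n, (-1 : ℚ) ^ k / (k : ℚ) ^ 2 := by
  induction n with
  | zero => omega
  | succ p ih =>
    rcases Nat.eq_zero_or_pos p with rfl | hp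
    · norm_num [H2, Finset.Icc_self]
    · have ihh := ih hp
      rw [Finset.sum_Icc_succ_top (by omega : 1 ≤ p+1),
          Finset.sum_Icc_succ_top (by omega : 1 ≤ p+1)]
      have hH : H2 (p+1) = H2 p + 1/((p:ℚ)+1)^2 := by
        simp [H2, Finset.sum_range_succ]
      have hsplit : ∀ k ∈ Finset.Icc 1 p,
          (-1:ℚ)^k / ((k:ℚ)^2 * ((p+1).choose k))
            = (-1:ℚ)^k / ((k:ℚ)^2 * (p.choose k))
              - (1/((p:ℚ)+1)) * ((-1:ℚ)^k / ((k:ℚ) * (p.choose k))) := by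
        intro k hk
        rw [Finset.mem_Icc] at hk
        exact step_term p k hk.1 hk.2
      push_cast
      rw [Finset.sum_congr rfl hsplit, Finset.sum_sub_distrib, ← Finset.mul_sum,
        gsum p hp, ihh, hH, Nat.choose_self]
      have hp1 : ((p:ℚ)+1) ≠ 0 := by positivity
      push_cast [pow_succ]
      field_simp
      ring
end

section
/- Let p > 3 be a prime. Then sum_{k=1}^{floor((p-1)/4)} (-1)^k / k^2 ≡ (1/8) * (B_{p-2}({(4-p)/8}) - B_{p-2}({-p/8})) (mod p), where {x} denotes the fractional part of x, B_n(x) denotes the n-th Bernoulli polynomial, and the congruence is between rational numbers whose denominators are coprime to p. -/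
open Finset Polynomial

/-- Splitting an alternating sum into even and odd parts. -/
lemma alt_sum_split (g : ℕ → ℚ) : ∀ n : ℕ,
    ∑ k ∈ Finset.Icc 1 n, (-1 : ℚ) ^ k * g k =
      ∑ j ∈ Finset.Icc 1 (n / 2), g (2 * j) -
        ∑ j ∈ Finset.Icc 1 (n - n / 2), g (2 * j - 1) := by
  intro n
  induction n with
  | zero => simp
  | succ n ih =>
    rw [Finset.sum_Icc_succ_top (by omega : 1 ≤ n + 1), ih]
    rcases Nat.even_or_odd (n + 1) with h | h
    · obtain ⟨a, ha⟩ := h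
      have h1 : (n + 1) / 2 = n / 2 + 1 := by omega
      have h2 : (n + 1) - (n + 1) / 2 = n - n / 2 := by omega
      have h3 : 2 * (n / 2 + 1) = n + 1 := by omega
      have h4 : (-1 : ℚ) ^ (n + 1) = 1 := Even.neg_one_pow ⟨a, by omega⟩
      have h2' : n + 1 - (n / 2 + 1) = n - n / 2 := by omega
      rw [h1, h2', Finset.sum_Icc_succ_top (by omega : 1 ≤ n / 2 + 1), h3, h4]
      ring
    · obtain ⟨a, ha⟩ := h
      have h1 : (n + 1) / 2 = n / 2 := by omega
      have h2 : (n + 1) - (n + 1) / 2 = (n - n / 2) + 1 := by omega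
      have h3 : 2 * ((n - n / 2) + 1) - 1 = n + 1 := by omega
      have h4 : (-1 : ℚ) ^ (n + 1) = -1 := Odd.neg_one_pow ⟨a, by omega⟩
      have h2' : n + 1 - n / 2 = (n - n / 2) + 1 := by omega
      rw [h1, h2', Finset.sum_Icc_succ_top (by omega : 1 ≤ (n - n / 2) + 1), h3, h4]
      ring

lemma bern_eval_add_nat (n : ℕ) (x : ℚ) : ∀ N : ℕ,
    (Polynomial.bernoulli n).eval (x + N) =
      (Polynomial.bernoulli n).eval x + n * ∑ j ∈ Finset.range N, (x + j) ^ (n - 1) := by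
  intro N
  induction N with
  | zero => simp
  | succ N ih =>
    have h : x + ((N : ℕ) + 1 : ℕ) = 1 + (x + N) := by push_cast; ring
    rw [h, Polynomial.bernoulli_eval_one_add, ih, Finset.sum_range_succ]
    ring

lemma iter_deriv_bern (n : ℕ) : ∀ k : ℕ,
    derivative^[k] (Polynomial.bernoulli n) =
      (n.descFactorial k : ℚ[X]) * Polynomial.bernoulli (n - k) := by
  intro k
  induction k with
  | zero => simp
  | succ k ih =>
    rw [Function.iterate_succ_apply', ih, derivative_mul, derivative_natCast, zero_mul, zero_add,
      Polynomial.derivative_bernoulli, Nat.descFactorial_succ, ← mul_assoc]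
    have : n - k - 1 = n - (k + 1) := by omega
    rw [this]
    push_cast
    ring

lemma hasse_bern (n k : ℕ) :
    hasseDeriv k (Polynomial.bernoulli n) =
      (n.choose k : ℚ[X]) * Polynomial.bernoulli (n - k) := by
  have h := congrFun (Polynomial.factorial_smul_hasseDeriv (R := ℚ) k) (Polynomial.bernoulli n)
  simp only [LinearMap.smul_apply] at h
  have h2 : (Nat.factorial k : ℚ[X]) * hasseDeriv k (Polynomial.bernoulli n) =
      (Nat.factorial k : ℚ[X]) * ((n.choose k : ℚ[X]) * Polynomial.bernoulli (n - k)) := by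
    rw [← nsmul_eq_mul, h, iter_deriv_bern, Nat.descFactorial_eq_factorial_mul_choose]
    push_cast; ring
  exact mul_left_cancel₀ (by exact_mod_cast (Nat.cast_ne_zero (R := ℚ[X])).2 k.factorial_ne_zero) h2

lemma bern_natDegree_le (n : ℕ) : (Polynomial.bernoulli n).natDegree ≤ n := by
  unfold Polynomial.bernoulli
  refine Polynomial.natDegree_sum_le_of_forall_le _ _ fun i _ => ?_
  exact (Polynomial.natDegree_monomial_le _).trans (by omega)

/-- Addition formula for Bernoulli polynomials. -/
lemma bern_eval_add (n : ℕ) (x y : ℚ) :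
    (Polynomial.bernoulli n).eval (x + y) =
      ∑ k ∈ Finset.range (n + 1),
        (n.choose k : ℚ) * (Polynomial.bernoulli (n - k)).eval x * y ^ k := by
  have h1 : (Polynomial.bernoulli n).eval (x + y) = (taylor x (Polynomial.bernoulli n)).eval y := by
    rw [Polynomial.taylor_eval, add_comm]
  rw [h1, Polynomial.eval_eq_sum_range' (lt_of_le_of_lt
    (by rw [Polynomial.natDegree_taylor]; exact bern_natDegree_le n) (Nat.lt_succ_self n))]
  refine Finset.sum_congr rfl fun k _ => ?_
  rw [Polynomial.taylor_coeff, hasse_bern]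
  simp [mul_comm]

/-- Reflection: `B_n(1-X) = (-1)^n B_n(X)`. -/
lemma bern_comp_one_sub (n : ℕ) :
    (Polynomial.bernoulli n).comp (1 - X) = (-1 : ℚ[X]) ^ n * Polynomial.bernoulli n := by
  induction n with
  | zero => simp
  | succ n ih =>
    have hd : derivative ((Polynomial.bernoulli (n + 1)).comp (1 - X)
        - (-1 : ℚ[X]) ^ (n + 1) * Polynomial.bernoulli (n + 1)) = 0 := by
      rw [derivative_sub, derivative_comp, derivative_mul, Polynomial.derivative_bernoulli_add_one]
      simp only [derivative_sub, derivative_one, derivative_X, zero_sub, derivative_pow,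
        derivative_neg, neg_zero, mul_zero, zero_mul, zero_add, mul_comp, add_comp, one_comp,
        natCast_comp, ih]
      push_cast
      ring
    have hc := Polynomial.eq_C_of_derivative_eq_zero hd
    have hz : ((Polynomial.bernoulli (n + 1)).comp (1 - X)
        - (-1 : ℚ[X]) ^ (n + 1) * Polynomial.bernoulli (n + 1)).coeff 0 = 0 := by
      rw [Polynomial.coeff_zero_eq_eval_zero]
      simp only [eval_sub, eval_comp, eval_sub, eval_one, eval_X, sub_zero, eval_mul, eval_pow,
        eval_neg, eval_one]
      rw [Polynomial.bernoulli_eval_one, Polynomial.bernoulli_eval_zero,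
        bernoulli'_eq_bernoulli]
      ring
    have := hc
    rw [hz, map_zero] at this
    linear_combination (norm := ring_nf) this
section Padic
variable {p : ℕ} [hp : Fact p.Prime]

lemma norm_nat_le_one (n : ℕ) : ‖(n : ℚ_[p])‖ ≤ 1 := by
  have := Padic.norm_int_le_one (p := p) (n : ℤ); push_cast at this; exact this

lemma norm_nat_eq_one {k : ℕ} (hk : ¬ p ∣ k) : ‖(k : ℚ_[p])‖ = 1 := by
  refine le_antisymm (norm_nat_le_one k) ?_
  by_contra hlt
  push_neg at hlt
  have h2 : ‖((k : ℤ) : ℚ_[p])‖ < 1 := by push_cast; exact hlt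
  rw [Padic.norm_intCast_lt_one_iff] at h2
  exact hk (by exact_mod_cast h2)

lemma sum_pow_dvd (m : ℕ) (h1 : m < p - 1) :
    (p : ℤ) ∣ ∑ k ∈ Finset.range p, (k : ℤ) ^ m := by
  rw [← ZMod.intCast_zmod_eq_zero_iff_dvd]
  push_cast
  have hbij : ∑ k ∈ Finset.range p, ((k : ZMod p)) ^ m = ∑ x : ZMod p, x ^ m := by
    refine Finset.sum_nbij' (fun k => (k : ZMod p)) (fun x => x.val) ?_ ?_ ?_ ?_ ?_
    · intro a _; exact Finset.mem_univ _
    · intro b _; exact Finset.mem_range.2 (ZMod.val_lt b)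
    · intro a ha; exact ZMod.val_natCast_of_lt (Finset.mem_range.1 ha)
    · intro b _; exact ZMod.natCast_rightInverse b
    · intro a _; rfl
  rw [hbij]
  exact FiniteField.sum_pow_lt_card_sub_one (ZMod p) m (by rwa [ZMod.card])

lemma not_dvd_of_lt {a : ℕ} (h0 : 0 < a) (h1 : a < p) : ¬ p ∣ a :=
  fun h => absurd (Nat.le_of_dvd h0 h) (by omega)

lemma pinv_lt_one : ((p : ℝ))⁻¹ < 1 := by
  rw [inv_lt_one_iff₀]
  right
  exact_mod_cast hp.out.one_lt

lemma padic_norm_sub_le_max (a b : ℚ_[p]) : ‖a - b‖ ≤ max ‖a‖ ‖b‖ := by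
  rw [sub_eq_add_neg]
  simpa [norm_neg] using IsUltrametricDist.norm_add_le_max a (-b)

lemma pinv_nonneg : (0:ℝ) ≤ (p : ℝ)⁻¹ := by positivity

/-- `p`-integrality of Bernoulli numbers below `p-1`. -/
lemma bern_num_norm_le : ∀ m : ℕ, m < p - 1 → ‖((_root_.bernoulli m : ℚ) : ℚ_[p])‖ ≤ 1 := by
  intro m
  induction m using Nat.strong_induction_on with
  | _ m ih =>
  intro hm
  rcases Nat.eq_zero_or_pos m with rfl | hm0
  · simp
  have hid : (_root_.bernoulli m) * p = (∑ k ∈ Finset.range p, (k : ℚ) ^ m)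
      - ∑ i ∈ Finset.range m,
          _root_.bernoulli i * ((m + 1).choose i) * (p : ℚ) ^ (m + 1 - i) / (m + 1) := by
    have h := sum_range_pow p m
    rw [Finset.sum_range_succ] at h
    have hlast : _root_.bernoulli m * (((m + 1).choose m) : ℚ) * (p : ℚ) ^ (m + 1 - m) / (m + 1)
        = _root_.bernoulli m * p := by
      rw [Nat.choose_succ_self_right]
      have h2 : m + 1 - m = 1 := by omega
      rw [h2, pow_one]
      have : ((m : ℚ) + 1) ≠ 0 := by positivity
      field_simp
      push_cast; ring
    rw [hlast] at h
    linarith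
  have hcast := congrArg (Rat.cast : ℚ → ℚ_[p]) hid
  push_cast at hcast
  -- norm bounds
  have hfirst : ‖((∑ k ∈ Finset.range p, ((k:ℚ_[p])) ^ m : ℚ_[p]))‖ ≤ (p : ℝ)⁻¹ := by
    obtain ⟨z, hz⟩ := sum_pow_dvd (p := p) m hm
    have : (∑ k ∈ Finset.range p, ((k:ℚ_[p])) ^ m : ℚ_[p]) = ((p : ℤ) * z : ℤ) := by
      rw [← hz]; push_cast; ring
    rw [this]
    push_cast
    rw [norm_mul]
    calc ‖(p : ℚ_[p])‖ * ‖(z : ℚ_[p])‖ ≤ ‖(p : ℚ_[p])‖ * 1 :=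
          mul_le_mul_of_nonneg_left (Padic.norm_int_le_one z) (norm_nonneg _)
      _ = (p:ℝ)⁻¹ := by rw [mul_one, Padic.norm_p]
  have hsecond : ‖(∑ i ∈ Finset.range m,
      ((_root_.bernoulli i : ℚ) : ℚ_[p]) * ((m + 1).choose i : ℚ_[p]) * (p : ℚ_[p]) ^ (m + 1 - i)
        / ((m:ℚ_[p]) + 1))‖ ≤ (p:ℝ)⁻¹ := by
    refine IsUltrametricDist.norm_sum_le_of_forall_le_of_nonneg pinv_nonneg fun i hi => ?_
    have him := Finset.mem_range.1 hi
    have hm1 : ‖((m:ℚ_[p]) + 1)‖ = 1 := by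
      have : ((m:ℚ_[p]) + 1) = ((m+1 : ℕ) : ℚ_[p]) := by push_cast; ring
      rw [this]
      exact norm_nat_eq_one (not_dvd_of_lt (by omega) (by omega))
    rw [norm_div, hm1, div_one, norm_mul, norm_mul, norm_pow, Padic.norm_p]
    have hb : ‖((_root_.bernoulli i : ℚ) : ℚ_[p])‖ ≤ 1 := ih i him (by omega)
    have hc : ‖(((m + 1).choose i : ℕ) : ℚ_[p])‖ ≤ 1 := norm_nat_le_one _
    have hpow : ((p:ℝ))⁻¹ ^ (m + 1 - i) ≤ (p:ℝ)⁻¹ :=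
      pow_le_of_le_one pinv_nonneg pinv_lt_one.le (by omega)
    calc ‖((_root_.bernoulli i : ℚ) : ℚ_[p])‖ * ‖(((m + 1).choose i : ℕ) : ℚ_[p])‖
          * ((p:ℝ))⁻¹ ^ (m + 1 - i)
        ≤ 1 * 1 * (p:ℝ)⁻¹ := by
          refine mul_le_mul (mul_le_mul hb hc (norm_nonneg _) zero_le_one) hpow
            (by positivity) (by norm_num)
      _ = (p:ℝ)⁻¹ := by ring
  have hBp : ‖((_root_.bernoulli m : ℚ) : ℚ_[p]) * (p:ℚ_[p])‖ ≤ (p:ℝ)⁻¹ := by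
    rw [hcast]
    refine le_trans (padic_norm_sub_le_max _ _) (max_le hfirst hsecond)
  rw [norm_mul, Padic.norm_p] at hBp
  have hppos : (0:ℝ) < (p:ℝ)⁻¹ := by
    have := hp.out.pos; positivity
  exact (mul_le_iff_le_one_left hppos).1 hBp
end Padic

lemma bern_eval_half {n : ℕ} (hn : Odd n) : (Polynomial.bernoulli n).eval (1 / 2 : ℚ) = 0 := by
  have h := congrArg (Polynomial.eval (1 / 2 : ℚ)) (bern_comp_one_sub n)
  rw [Polynomial.eval_comp] at h
  simp only [Polynomial.eval_sub, Polynomial.eval_one, Polynomial.eval_X, Polynomial.eval_mul,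
    Polynomial.eval_pow, Polynomial.eval_neg, Polynomial.eval_one] at h
  rw [hn.neg_one_pow] at h
  have h2 : (1 : ℚ) - 1 / 2 = 1 / 2 := by norm_num
  rw [h2] at h
  linarith

lemma bern_eval_one_odd {n : ℕ} (hn : Odd n) (h1 : 1 < n) :
    (Polynomial.bernoulli n).eval (1 : ℚ) = 0 := by
  rw [Polynomial.bernoulli_eval_one]
  exact bernoulli'_eq_zero_of_odd hn h1

lemma bern_eval_expand (n : ℕ) (x : ℚ) :
    (Polynomial.bernoulli n).eval x =
      ∑ i ∈ Finset.range (n + 1), _root_.bernoulli i * (n.choose i) * x ^ (n - i) := by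
  unfold Polynomial.bernoulli
  rw [Polynomial.eval_finset_sum]
  simp [Polynomial.eval_monomial]

section Padic2
variable {p : ℕ} [hp : Fact p.Prime]

lemma norm_le_pinv_of_lt_one {x : ℚ_[p]} (h : ‖x‖ < 1) : ‖x‖ ≤ (p : ℝ)⁻¹ := by
  have := (Padic.norm_le_pow_iff_norm_lt_pow_add_one x (-1)).2
  simp only [zpow_neg_one, neg_add_cancel, zpow_zero] at this
  exact this h

lemma padic_sum_norm_lt_one {s : Finset ℕ} {f : ℕ → ℚ_[p]}
    (h : ∀ i ∈ s, ‖f i‖ < 1) : ‖∑ i ∈ s, f i‖ < 1 := by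
  have hle : ‖∑ i ∈ s, f i‖ ≤ (p : ℝ)⁻¹ :=
    IsUltrametricDist.norm_sum_le_of_forall_le_of_nonneg pinv_nonneg
      fun i hi => norm_le_pinv_of_lt_one (h i hi)
  exact lt_of_le_of_lt hle pinv_lt_one

lemma fermat_norm_lt {k : ℕ} (hk : ¬ p ∣ k) : ‖((k : ℚ_[p]) ^ (p - 1) - 1)‖ < 1 := by
  have h1 : ((k : ℚ_[p]) ^ (p - 1) - 1) = (((k : ℤ) ^ (p - 1) - 1 : ℤ) : ℚ_[p]) := by
    push_cast; ring
  rw [h1, Padic.norm_intCast_lt_one_iff, ← ZMod.intCast_zmod_eq_zero_iff_dvd]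
  push_cast
  rw [ZMod.pow_card_sub_one_eq_one (by
    rw [Ne, ZMod.natCast_eq_zero_iff]; exact hk)]
  ring

lemma dvd_num_of_norm_lt_one (x : ℚ) (h : ‖(x : ℚ_[p])‖ < 1) : (p : ℤ) ∣ x.num := by
  by_contra hnd
  have hden : ((x.den : ℚ_[p])) ≠ 0 := Nat.cast_ne_zero.2 x.pos.ne'
  have hx : (x : ℚ_[p]) = (x.num : ℚ_[p]) / (x.den : ℚ_[p]) := by
    rw [Rat.cast_def]
  have hnum : ‖(x.num : ℚ_[p])‖ = 1 := by
    refine le_antisymm (Padic.norm_int_le_one _) ?_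
    by_contra hlt
    push_neg at hlt
    exact hnd (Padic.norm_intCast_lt_one_iff.1 hlt)
  have hge : (1 : ℝ) ≤ ‖(x : ℚ_[p])‖ := by
    rw [hx, norm_div, hnum, one_div]
    exact one_le_inv_iff₀.2 ⟨norm_pos_iff.2 hden, norm_nat_le_one _⟩
  linarith

lemma bern_eval_norm_le (n : ℕ) (hn : n < p - 1) (x : ℚ) (hx : ‖(x : ℚ_[p])‖ ≤ 1) :
    ‖(((Polynomial.bernoulli n).eval x : ℚ) : ℚ_[p])‖ ≤ 1 := by
  rw [bern_eval_expand]
  push_cast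
  refine IsUltrametricDist.norm_sum_le_of_forall_le_of_nonneg zero_le_one fun i hi => ?_
  have him := Finset.mem_range.1 hi
  rw [norm_mul, norm_mul, norm_pow]
  have hb : ‖((_root_.bernoulli i : ℚ) : ℚ_[p])‖ ≤ 1 := bern_num_norm_le i (by omega)
  have hc : ‖((n.choose i : ℕ) : ℚ_[p])‖ ≤ 1 := norm_nat_le_one _
  have hx2 : ‖(x : ℚ_[p])‖ ^ (n - i) ≤ 1 := pow_le_one₀ (norm_nonneg _) hx
  calc ‖((_root_.bernoulli i : ℚ) : ℚ_[p])‖ * ‖((n.choose i : ℕ) : ℚ_[p])‖ * ‖(x:ℚ_[p])‖ ^ (n-i)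
      ≤ 1 * 1 * 1 := mul_le_mul (mul_le_mul hb hc (norm_nonneg _) zero_le_one) hx2
        (by positivity) (by norm_num)
    _ = 1 := by ring

lemma bern_shift_norm_lt (n : ℕ) (hn : n < p - 1) (x u : ℚ)
    (hx : ‖(x : ℚ_[p])‖ ≤ 1) (hu : ‖(u : ℚ_[p])‖ ≤ 1) :
    ‖(((Polynomial.bernoulli n).eval (x + p * u) - (Polynomial.bernoulli n).eval x : ℚ) : ℚ_[p])‖
      < 1 := by
  rw [bern_eval_add n x ((p : ℚ) * u), Finset.sum_range_succ']
  simp only [Nat.choose_zero_right, Nat.cast_one, one_mul, pow_zero, mul_one, Nat.sub_zero,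
    add_sub_cancel_right]
  push_cast
  refine padic_sum_norm_lt_one fun i _ => ?_
  rw [norm_mul, norm_mul, norm_pow]
  have hc : ‖((n.choose (i+1) : ℕ) : ℚ_[p])‖ ≤ 1 := norm_nat_le_one _
  have hb : ‖(((Polynomial.bernoulli (n - (i+1))).eval x : ℚ) : ℚ_[p])‖ ≤ 1 :=
    bern_eval_norm_le _ (by omega) x hx
  have hpu : ‖(p : ℚ_[p]) * (u : ℚ_[p])‖ ≤ (p:ℝ)⁻¹ := by
    rw [norm_mul, Padic.norm_p]
    exact mul_le_of_le_one_right pinv_nonneg hu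
  have hpow : ‖(p : ℚ_[p]) * (u : ℚ_[p])‖ ^ (i+1) ≤ (p:ℝ)⁻¹ := by
    calc ‖(p : ℚ_[p]) * (u : ℚ_[p])‖ ^ (i+1) ≤ ((p:ℝ)⁻¹) ^ (i+1) :=
          pow_le_pow_left₀ (norm_nonneg _) hpu _
      _ ≤ (p:ℝ)⁻¹ := pow_le_of_le_one pinv_nonneg pinv_lt_one.le (by omega)
  calc ‖((n.choose (i+1) : ℕ) : ℚ_[p])‖ * ‖(((Polynomial.bernoulli (n - (i+1))).eval x : ℚ) : ℚ_[p])‖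
        * ‖(p : ℚ_[p]) * (u : ℚ_[p])‖ ^ (i+1)
      ≤ 1 * 1 * (p:ℝ)⁻¹ := mul_le_mul (mul_le_mul hc hb (norm_nonneg _) zero_le_one) hpow
        (by positivity) (by norm_num)
    _ = (p:ℝ)⁻¹ := by ring
    _ < 1 := pinv_lt_one

end Padic2
lemma core (p : ℕ) [hp : Fact p.Prime] (hp3 : 3 < p) (α β : ℚ)
    (hα : (1 : ℚ) + ((p - 1) / 4 / 2 : ℕ) = α + (p : ℚ) * (1 / 8))
    (hβ : (1 / 2 : ℚ) + (((p - 1) / 4 - (p - 1) / 4 / 2 : ℕ) : ℚ) = β + (p : ℚ) * (1 / 8))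
    (hαn : ‖(α : ℚ_[p])‖ ≤ 1) (hβn : ‖(β : ℚ_[p])‖ ≤ 1) :
    ‖(((∑ k ∈ Finset.Icc 1 ((p - 1) / 4), (-1 : ℚ) ^ k / (k : ℚ) ^ 2) -
        1 / 8 * ((Polynomial.bernoulli (p - 2)).eval β -
          (Polynomial.bernoulli (p - 2)).eval α) : ℚ) : ℚ_[p])‖ < 1 := by
  have hpp := hp.out
  have hp5 : 5 ≤ p := by
    have h4 : p ≠ 4 := fun h => by rw [h] at hpp; norm_num at hpp
    omega
  have hpodd : p % 2 = 1 := Nat.odd_iff.1 (hpp.odd_of_ne_two (by omega))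
  set m := p - 2 with hm
  have hmodd : Odd m := Nat.odd_iff.2 (by omega)
  have hm1 : 1 < m := by omega
  have hmlt : m < p - 1 := by omega
  have hmQ : (m : ℚ) ≠ 0 := Nat.cast_ne_zero.2 (by omega)
  set n4 := (p - 1) / 4 with hn4
  set E := n4 / 2 with hEdef
  set O := n4 - E with hOdef
  have hn4p : n4 < p := by omega
  set S := ∑ k ∈ Finset.Icc 1 n4, (-1 : ℚ) ^ k / (k : ℚ) ^ 2 with hS
  set T := ∑ k ∈ Finset.Icc 1 n4, (-1 : ℚ) ^ k * (k : ℚ) ^ (p - 3) with hT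
  set X1 := (Polynomial.bernoulli m).eval ((1 : ℚ) + E) with hX1def
  set X2 := (Polynomial.bernoulli m).eval ((1 / 2 : ℚ) + O) with hX2def
  set A := (Polynomial.bernoulli m).eval β with hAdef
  set Bv := (Polynomial.bernoulli m).eval α with hBdef
  set c : ℚ := 2 ^ (p - 3) / (m : ℚ) with hc
  -- not-dividing facts
  have h2nd : ¬ p ∣ 2 := fun h => by have := Nat.le_of_dvd (by norm_num) h; omega
  have h8nd : ¬ p ∣ 8 := by
    intro h
    have h2 : p ∣ 2 := hpp.dvd_of_dvd_pow (n := 3) (by norm_num; exact_mod_cast h)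
    exact h2nd h2
  have hmnd : ¬ p ∣ m := not_dvd_of_lt (by omega) (by omega)
  have h2normQ : ‖(2 : ℚ_[p])‖ = 1 := by
    have := norm_nat_eq_one (p := p) h2nd; simpa using this
  have h8normQ : ‖(8 : ℚ_[p])‖ = 1 := by
    have := norm_nat_eq_one (p := p) h8nd; simpa using this
  have heighth : ‖((1 / 8 : ℚ) : ℚ_[p])‖ ≤ 1 := by
    rw [Rat.cast_div, norm_div, Rat.cast_one, norm_one, Rat.cast_ofNat, h8normQ]
    norm_num
  have hhalf : ‖((1 / 2 : ℚ) : ℚ_[p])‖ ≤ 1 := by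
    rw [Rat.cast_div, norm_div, Rat.cast_one, norm_one, Rat.cast_ofNat, h2normQ]
    norm_num
  -- the split of the alternating sum
  have hsplit : T = ∑ j ∈ Finset.Icc 1 E, ((2 * j : ℕ) : ℚ) ^ (p - 3)
      - ∑ j ∈ Finset.Icc 1 O, ((2 * j - 1 : ℕ) : ℚ) ^ (p - 3) := by
    have h := alt_sum_split (fun k => (k : ℚ) ^ (p - 3)) n4
    simpa using h
  have hEv : ∑ j ∈ Finset.Icc 1 E, ((2 * j : ℕ) : ℚ) ^ (p - 3)
      = 2 ^ (p - 3) * ∑ j ∈ Finset.range E, ((1 : ℚ) + j) ^ (p - 3) := by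
    rw [show Finset.Icc 1 E = Finset.Ico 1 (E + 1) by rw [Finset.Ico_add_one_right_eq_Icc],
      Finset.sum_Ico_eq_sum_range]
    simp only [Nat.add_sub_cancel]
    rw [Finset.mul_sum]
    refine Finset.sum_congr rfl fun i _ => ?_
    push_cast
    rw [show ((2 : ℚ) * (1 + (i:ℚ))) = 2 * (1 + (i:ℚ)) from rfl, mul_pow]
  have hOd : ∑ j ∈ Finset.Icc 1 O, ((2 * j - 1 : ℕ) : ℚ) ^ (p - 3)
      = 2 ^ (p - 3) * ∑ j ∈ Finset.range O, ((1 / 2 : ℚ) + j) ^ (p - 3) := by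
    rw [show Finset.Icc 1 O = Finset.Ico 1 (O + 1) by rw [Finset.Ico_add_one_right_eq_Icc],
      Finset.sum_Ico_eq_sum_range]
    simp only [Nat.add_sub_cancel]
    rw [Finset.mul_sum]
    refine Finset.sum_congr rfl fun i _ => ?_
    have h21 : 2 * (1 + i) - 1 = 2 * i + 1 := by omega
    rw [h21]
    push_cast
    rw [show ((2 : ℚ) * (i:ℚ) + 1) = 2 * ((1/2 : ℚ) + (i:ℚ)) by ring, mul_pow]
  have hm13 : m - 1 = p - 3 := by omega
  have hPSe : (m : ℚ) * ∑ j ∈ Finset.range E, ((1 : ℚ) + j) ^ (p - 3) = X1 := by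
    have h := bern_eval_add_nat m 1 E
    rw [hm13, bern_eval_one_odd hmodd hm1, zero_add] at h
    rw [hX1def, h]
  have hPSo : (m : ℚ) * ∑ j ∈ Finset.range O, ((1 / 2 : ℚ) + j) ^ (p - 3) = X2 := by
    have h := bern_eval_add_nat m (1 / 2) O
    rw [hm13, bern_eval_half hmodd, zero_add] at h
    rw [hX2def, h]
  have hTc : T = c * (X1 - X2) := by
    rw [hsplit, hEv, hOd, hc, div_mul_eq_mul_div, eq_div_iff hmQ]
    linear_combination (2:ℚ) ^ (p - 3) * hPSe - (2:ℚ) ^ (p - 3) * hPSo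
  -- S ≡ T
  have hST : ‖((S - T : ℚ) : ℚ_[p])‖ < 1 := by
    rw [hS, hT, ← Finset.sum_sub_distrib]
    push_cast
    refine padic_sum_norm_lt_one fun k hk => ?_
    obtain ⟨hk1, hk2⟩ := Finset.mem_Icc.1 hk
    have hkp : ¬ p ∣ k := not_dvd_of_lt (by omega) (by omega)
    have hknorm : ‖(k : ℚ_[p])‖ = 1 := norm_nat_eq_one hkp
    have hkne : (k : ℚ_[p]) ≠ 0 := by
      intro h0; rw [h0, norm_zero] at hknorm; norm_num at hknorm
    have h1 : (k : ℚ_[p]) ^ (p - 1) = (k : ℚ_[p]) ^ (p - 3) * (k : ℚ_[p]) ^ 2 := by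
      rw [← pow_add]; congr 1; omega
    have hterm : (-1 : ℚ_[p]) ^ k / (k : ℚ_[p]) ^ 2 - (-1 : ℚ_[p]) ^ k * (k : ℚ_[p]) ^ (p - 3)
        = (-1 : ℚ_[p]) ^ k * (1 - (k : ℚ_[p]) ^ (p - 1)) / (k : ℚ_[p]) ^ 2 := by
      rw [h1]
      field_simp
    rw [hterm, norm_div, norm_mul, norm_pow, norm_pow, norm_neg, norm_one, one_pow, hknorm,
      one_pow, one_mul, div_one, norm_sub_rev]
    exact fermat_norm_lt hkp
  -- coefficient congruence
  have hzdvd : (p : ℤ) ∣ (2 ^ p - 2 + p : ℤ) := by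
    have h2 : ((2 ^ p - 2 + p : ℤ) : ZMod p) = 0 := by
      push_cast
      rw [ZMod.pow_card, ZMod.natCast_self]
      ring
    exact (ZMod.intCast_zmod_eq_zero_iff_dvd _ _).1 h2
  have hmQval : (m : ℚ) = (p : ℚ) - 2 := by
    rw [hm, Nat.cast_sub (by omega : 2 ≤ p)]
    norm_num
  have h8e : (2 : ℚ) ^ (p - 3) * 8 = 2 ^ p := by
    rw [show (8 : ℚ) = 2 ^ 3 by norm_num, ← pow_add]
    congr 1; omega
  have hznum : ((2 ^ p - 2 + p : ℤ) : ℚ) = 2 ^ (p - 3) * 8 + (m : ℚ) := by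
    push_cast
    rw [h8e]
    linarith [hmQval]
  have hcid : c + 1 / 8 = ((2 ^ p - 2 + p : ℤ) : ℚ) / (8 * (m : ℚ)) := by
    rw [hc, hznum, div_add_div _ _ hmQ (by norm_num : (8:ℚ) ≠ 0), mul_one,
      mul_comm (m : ℚ) 8]
  have hcoef : ‖((c + 1 / 8 : ℚ) : ℚ_[p])‖ < 1 := by
    rw [hcid, Rat.cast_div, norm_div, Rat.cast_intCast, Rat.cast_mul, Rat.cast_ofNat,
      Rat.cast_natCast, norm_mul, h8normQ, norm_nat_eq_one hmnd, mul_one, div_one]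
    exact Padic.norm_intCast_lt_one_iff.2 hzdvd
  -- bernoulli evaluations are integral
  have hX1n : ‖((X1 : ℚ) : ℚ_[p])‖ ≤ 1 := by
    refine bern_eval_norm_le m hmlt _ ?_
    have hcast : (((1 : ℚ) + (E : ℚ) : ℚ) : ℚ_[p]) = ((1 + E : ℕ) : ℚ_[p]) := by push_cast; ring
    rw [hcast]
    exact norm_nat_le_one _
  have hX2n : ‖((X2 : ℚ) : ℚ_[p])‖ ≤ 1 := by
    refine bern_eval_norm_le m hmlt _ ?_
    rw [Rat.cast_add, Rat.cast_natCast]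
    refine le_trans (IsUltrametricDist.norm_add_le_max _ _) (max_le hhalf (norm_nat_le_one _))
  -- shift congruences
  have hsh1 : ‖((X1 - Bv : ℚ) : ℚ_[p])‖ < 1 := by
    rw [hX1def, hBdef, hα]
    exact bern_shift_norm_lt m hmlt α (1 / 8) hαn heighth
  have hsh2 : ‖((X2 - A : ℚ) : ℚ_[p])‖ < 1 := by
    rw [hX2def, hAdef, hβ]
    exact bern_shift_norm_lt m hmlt β (1 / 8) hβn heighth
  -- final assembly
  have hkey : S - 1 / 8 * (A - Bv)
      = (S - T) + (c + 1 / 8) * (X1 - X2) + (1 / 8) * ((X2 - A) - (X1 - Bv)) := by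
    linear_combination hTc
  rw [hkey, Rat.cast_add, Rat.cast_add, Rat.cast_mul, Rat.cast_mul]
  refine lt_of_le_of_lt (IsUltrametricDist.norm_add_le_max _ _) (max_lt (lt_of_le_of_lt
    (IsUltrametricDist.norm_add_le_max _ _) (max_lt hST ?_)) ?_)
  · rw [norm_mul]
    have hX12 : ‖((X1 - X2 : ℚ) : ℚ_[p])‖ ≤ 1 := by
      rw [Rat.cast_sub]
      exact le_trans (padic_norm_sub_le_max _ _) (max_le hX1n hX2n)
    calc ‖((c + 1 / 8 : ℚ) : ℚ_[p])‖ * ‖((X1 - X2 : ℚ) : ℚ_[p])‖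
        ≤ ‖((c + 1 / 8 : ℚ) : ℚ_[p])‖ * 1 := mul_le_mul_of_nonneg_left hX12 (norm_nonneg _)
      _ = ‖((c + 1 / 8 : ℚ) : ℚ_[p])‖ := mul_one _
      _ < 1 := hcoef
  · rw [norm_mul]
    have hd : ‖(((X2 - A) - (X1 - Bv) : ℚ) : ℚ_[p])‖ < 1 := by
      rw [Rat.cast_sub]
      exact lt_of_le_of_lt (padic_norm_sub_le_max _ _) (max_lt hsh2 hsh1)
    calc ‖((1 / 8 : ℚ) : ℚ_[p])‖ * ‖(((X2 - A) - (X1 - Bv) : ℚ) : ℚ_[p])‖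
        ≤ 1 * ‖(((X2 - A) - (X1 - Bv) : ℚ) : ℚ_[p])‖ :=
          mul_le_mul_of_nonneg_right heighth (norm_nonneg _)
      _ = ‖(((X2 - A) - (X1 - Bv) : ℚ) : ℚ_[p])‖ := one_mul _
      _ < 1 := hd

lemma not_dvd_eight {p : ℕ} (hpp : p.Prime) (hp3 : 3 < p) : ¬ p ∣ 8 := by
  intro h
  have h23 : (2:ℕ) ^ 3 = 8 := by norm_num
  have h2 : p ∣ 2 := hpp.dvd_of_dvd_pow (n := 3) (by rw [h23]; exact h)
  have := Nat.le_of_dvd (by norm_num) h2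
  omega

lemma norm_div8_le_one {p : ℕ} [hp : Fact p.Prime] (hp3 : 3 < p) (a : ℕ) :
    ‖(((a : ℚ) / 8 : ℚ) : ℚ_[p])‖ ≤ 1 := by
  have h8nd : ¬ p ∣ 8 := not_dvd_eight hp.out hp3
  rw [Rat.cast_div, norm_div]
  have h1 : ‖((a : ℚ) : ℚ_[p])‖ ≤ 1 := by rw [Rat.cast_natCast]; exact norm_nat_le_one a
  have h2 : ‖((8 : ℚ) : ℚ_[p])‖ = 1 := by
    rw [Rat.cast_ofNat]
    have := norm_nat_eq_one (p := p) h8nd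
    norm_num at this ⊢
    exact this
  rw [h2, div_one]
  exact h1

lemma main_case (p : ℕ) [hp : Fact p.Prime] (hp3 : 3 < p) (a b : ℕ)
    (hfA : Int.fract ((4 - (p : ℚ)) / 8) = (b : ℚ) / 8)
    (hfB : Int.fract (-(p : ℚ) / 8) = (a : ℚ) / 8)
    (hα : (1 : ℚ) + ((p - 1) / 4 / 2 : ℕ) = (a : ℚ) / 8 + (p : ℚ) * (1 / 8))
    (hβ : (1 / 2 : ℚ) + (((p - 1) / 4 - (p - 1) / 4 / 2 : ℕ) : ℚ)
      = (b : ℚ) / 8 + (p : ℚ) * (1 / 8)) :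
    ((p : ℤ)) ∣
      ((∑ k ∈ Finset.Icc 1 ((p - 1) / 4), (-1 : ℚ) ^ k / (k : ℚ) ^ 2) -
        1 / 8 * ((Polynomial.bernoulli (p - 2)).eval (Int.fract ((4 - (p : ℚ)) / 8)) -
          (Polynomial.bernoulli (p - 2)).eval (Int.fract (-(p : ℚ) / 8)))).num := by
  apply dvd_num_of_norm_lt_one
  rw [hfA, hfB]
  exact core p hp3 ((a : ℚ) / 8) ((b : ℚ) / 8) hα hβ (norm_div8_le_one hp3 a)
    (norm_div8_le_one hp3 b)

/-- For any prime `p > 3`,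
`∑_{k=1}^{⌊(p-1)/4⌋} (-1)^k / k² ≡ (1/8)(B_{p-2}({(4-p)/8}) - B_{p-2}({-p/8})) (mod p)`,
where `{x}` is the fractional part and `B_n` the `n`-th Bernoulli polynomial. -/
theorem sum_alt_inv_sq_congr_bernoulli (p : ℕ) (hp : p.Prime) (hp3 : 3 < p) :
    ((p : ℤ)) ∣
      ((∑ k ∈ Finset.Icc 1 ((p - 1) / 4), (-1 : ℚ) ^ k / (k : ℚ) ^ 2) -
        1 / 8 * ((Polynomial.bernoulli (p - 2)).eval (Int.fract ((4 - (p : ℚ)) / 8)) -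
          (Polynomial.bernoulli (p - 2)).eval (Int.fract (-(p : ℚ) / 8)))).num := by
  haveI : Fact p.Prime := ⟨hp⟩
  have hpodd : p % 2 = 1 := Nat.odd_iff.1 (hp.odd_of_ne_two (by omega))
  set q := p / 8 with hq
  have hr : p % 8 = 1 ∨ p % 8 = 3 ∨ p % 8 = 5 ∨ p % 8 = 7 := by omega
  rcases hr with h | h | h | h
  · -- p = 8q + 1 : α = 7/8, β = 3/8
    have hp8 : p = 8 * q + 1 := by omega
    have hpQ : (p : ℚ) = 8 * (q : ℚ) + 1 := by exact_mod_cast congrArg (Nat.cast (R := ℚ)) hp8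
    refine main_case p hp3 7 3 ?_ ?_ ?_ ?_
    · have hdec : (4 - (p : ℚ)) / 8 = ((-(q : ℤ) : ℤ) : ℚ) + (3 : ℕ) / 8 := by
        rw [hpQ]; push_cast; ring
      rw [hdec, Int.fract_intCast_add, Int.fract_eq_self.2 ⟨by norm_num, by norm_num⟩]
    · have hdec : -(p : ℚ) / 8 = ((-(q : ℤ) - 1 : ℤ) : ℚ) + (7 : ℕ) / 8 := by
        rw [hpQ]; push_cast; ring
      rw [hdec, Int.fract_intCast_add, Int.fract_eq_self.2 ⟨by norm_num, by norm_num⟩]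
    · have hE : (p - 1) / 4 / 2 = q := by omega
      rw [hE, hpQ]; push_cast; ring
    · have hO : (p - 1) / 4 - (p - 1) / 4 / 2 = q := by omega
      rw [hO, hpQ]; push_cast; ring
  · -- p = 8q + 3 : α = 5/8, β = 1/8
    have hp8 : p = 8 * q + 3 := by omega
    have hpQ : (p : ℚ) = 8 * (q : ℚ) + 3 := by exact_mod_cast congrArg (Nat.cast (R := ℚ)) hp8
    refine main_case p hp3 5 1 ?_ ?_ ?_ ?_
    · have hdec : (4 - (p : ℚ)) / 8 = ((-(q : ℤ) : ℤ) : ℚ) + (1 : ℕ) / 8 := by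
        rw [hpQ]; push_cast; ring
      rw [hdec, Int.fract_intCast_add, Int.fract_eq_self.2 ⟨by norm_num, by norm_num⟩]
    · have hdec : -(p : ℚ) / 8 = ((-(q : ℤ) - 1 : ℤ) : ℚ) + (5 : ℕ) / 8 := by
        rw [hpQ]; push_cast; ring
      rw [hdec, Int.fract_intCast_add, Int.fract_eq_self.2 ⟨by norm_num, by norm_num⟩]
    · have hE : (p - 1) / 4 / 2 = q := by omega
      rw [hE, hpQ]; push_cast; ring
    · have hO : (p - 1) / 4 - (p - 1) / 4 / 2 = q := by omega
      rw [hO, hpQ]; push_cast; ring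
  · -- p = 8q + 5 : α = 3/8, β = 7/8
    have hp8 : p = 8 * q + 5 := by omega
    have hpQ : (p : ℚ) = 8 * (q : ℚ) + 5 := by exact_mod_cast congrArg (Nat.cast (R := ℚ)) hp8
    refine main_case p hp3 3 7 ?_ ?_ ?_ ?_
    · have hdec : (4 - (p : ℚ)) / 8 = ((-(q : ℤ) - 1 : ℤ) : ℚ) + (7 : ℕ) / 8 := by
        rw [hpQ]; push_cast; ring
      rw [hdec, Int.fract_intCast_add, Int.fract_eq_self.2 ⟨by norm_num, by norm_num⟩]
    · have hdec : -(p : ℚ) / 8 = ((-(q : ℤ) - 1 : ℤ) : ℚ) + (3 : ℕ) / 8 := by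
        rw [hpQ]; push_cast; ring
      rw [hdec, Int.fract_intCast_add, Int.fract_eq_self.2 ⟨by norm_num, by norm_num⟩]
    · have hE : (p - 1) / 4 / 2 = q := by omega
      rw [hE, hpQ]; push_cast; ring
    · have hO : (p - 1) / 4 - (p - 1) / 4 / 2 = q + 1 := by omega
      rw [hO, hpQ]; push_cast; ring
  · -- p = 8q + 7 : α = 1/8, β = 5/8
    have hp8 : p = 8 * q + 7 := by omega
    have hpQ : (p : ℚ) = 8 * (q : ℚ) + 7 := by exact_mod_cast congrArg (Nat.cast (R := ℚ)) hp8
    refine main_case p hp3 1 5 ?_ ?_ ?_ ?_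
    · have hdec : (4 - (p : ℚ)) / 8 = ((-(q : ℤ) - 1 : ℤ) : ℚ) + (5 : ℕ) / 8 := by
        rw [hpQ]; push_cast; ring
      rw [hdec, Int.fract_intCast_add, Int.fract_eq_self.2 ⟨by norm_num, by norm_num⟩]
    · have hdec : -(p : ℚ) / 8 = ((-(q : ℤ) - 1 : ℤ) : ℚ) + (1 : ℕ) / 8 := by
        rw [hpQ]; push_cast; ring
      rw [hdec, Int.fract_intCast_add, Int.fract_eq_self.2 ⟨by norm_num, by norm_num⟩]
    · have hE : (p - 1) / 4 / 2 = q := by omega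
      rw [hE, hpQ]; push_cast; ring
    · have hO : (p - 1) / 4 - (p - 1) / 4 / 2 = q + 1 := by omega
      rw [hO, hpQ]; push_cast; ring
end
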